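/- arXiv:2512.23828 — 3 statements merged into one kernel-verified Lean document; each statement's English description precedes it below -/
import Mathlib

section
/- For every n ≥ 1, the fully looped path P_n^∘ (the path on vertices u_1, …, u_n with edges u_i u_{i+1} for 1 ≤ i ≤ n−1 and a loop at every vertex) is Hoffman-London, and for every n ≥ 3 it is strongly Hoffman-London. -/
namespace HLcore

open Finset

/-- indicator of the central interval `S_j = {k | j ≤ k ∧ k+j+1 ≤ n}` -/
def chi (n j k : ℕ) : ℕ := if j ≤ k ∧ k + j + 1 ≤ n then 1 else 0

/-- transfer operator of the fully looped path on `{0,...,n-1}` -/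
def Amap (n : ℕ) (v : ℕ → ℕ) : ℕ → ℕ := fun k =>
  if k + 1 ≤ n then (if k = 0 then 0 else v (k-1)) + v k + v (k+1) else 0

/-- inner product over `{0,...,n-1}` -/
def ip (n : ℕ) (u v : ℕ → ℕ) : ℕ := ∑ k ∈ range n, u k * v k

/-- central partial sums -/
def cs (n j : ℕ) (v : ℕ → ℕ) : ℕ := ip n (chi n j) v

def Supp (n : ℕ) (v : ℕ → ℕ) : Prop := ∀ k, n ≤ k → v k = 0

def Cone (n : ℕ) (v : ℕ → ℕ) : Prop :=
  ∃ a : ℕ → ℕ, ∀ k, v k = ∑ j ∈ range n, a j * chi n j k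

def gvec (n m : ℕ) : ℕ → ℕ := (Amap n)^[m] (chi n 0)

/-- central dominance order -/
def dom (n : ℕ) (x y : ℕ → ℕ) : Prop := ∀ j, cs n j y ≤ cs n j x

lemma chi_supp (n j : ℕ) : Supp n (chi n j) := by
  intro k hk; simp only [chi]; rw [if_neg]; omega

lemma chi_zero_apply (n k : ℕ) (hk : k < n) : chi n 0 k = 1 := by
  simp only [chi]; rw [if_pos]; omega

lemma chi_mul (n j m k : ℕ) : chi n j k * chi n m k = chi n (max j m) k := by
  simp only [chi]; split_ifs <;> omega

lemma chi_mono (n j j' k : ℕ) (h : j' ≤ j) : chi n j k ≤ chi n j' k := by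
  simp only [chi]; split_ifs <;> omega

lemma ip_comm (n : ℕ) (u v : ℕ → ℕ) : ip n u v = ip n v u := by
  unfold ip; exact Finset.sum_congr rfl fun k _ => mul_comm _ _

lemma ip_mono_right (n : ℕ) (u x y : ℕ → ℕ) (h : ∀ k, k < n → x k ≤ y k) :
    ip n u x ≤ ip n u y :=
  Finset.sum_le_sum fun k hk => Nat.mul_le_mul_left _ (h k (mem_range.1 hk))

lemma ip_mono_left (n : ℕ) (u v x : ℕ → ℕ) (h : ∀ k, k < n → u k ≤ v k) :
    ip n u x ≤ ip n v x :=
  Finset.sum_le_sum fun k hk => Nat.mul_le_mul_right _ (h k (mem_range.1 hk))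

lemma ip_delta (n : ℕ) (a : ℕ) (ha : a < n) (x : ℕ → ℕ) :
    ip n (fun k => if k = a then 1 else 0) x = x a := by
  unfold ip
  rw [Finset.sum_eq_single a]
  · simp
  · intro b _ hb; simp [hb]
  · intro h; exact absurd (mem_range.2 ha) h

lemma Amap_supp (n : ℕ) (v : ℕ → ℕ) : Supp n (Amap n v) := by
  intro k hk; simp only [Amap]; rw [if_neg]; omega

lemma Amap_iterate_supp (n m : ℕ) (v : ℕ → ℕ) (hv : Supp n v) :
    Supp n ((Amap n)^[m] v) := by
  induction m with
  | zero => exact hv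
  | succ m ih => rw [Function.iterate_succ_apply']; exact Amap_supp n _

lemma gvec_supp (n m : ℕ) : Supp n (gvec n m) :=
  Amap_iterate_supp n m _ (chi_supp n 0)

/-- shifted-sum helper -/
lemma sum_shift (n : ℕ) (u v : ℕ → ℕ) (hv : Supp n v) :
    ∑ k ∈ range n, (if k = 0 then 0 else u (k-1)) * v k
      = ∑ k ∈ range n, v (k+1) * u k := by
  cases n with
  | zero => simp
  | succ m =>
    rw [Finset.sum_range_succ' (fun k => (if k = 0 then 0 else u (k-1)) * v k) m]
    rw [Finset.sum_range_succ (fun k => v (k+1) * u k) m]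
    rw [hv (m+1) (by omega)]
    simp [mul_comm]

lemma ip_Amap (n : ℕ) (u v : ℕ → ℕ) (hu : Supp n u) (hv : Supp n v) :
    ip n (Amap n u) v = ip n u (Amap n v) := by
  unfold ip Amap
  have hL : ∀ k ∈ range n,
      (if k + 1 ≤ n then (if k = 0 then 0 else u (k-1)) + u k + u (k+1) else 0) * v k
      = (if k = 0 then 0 else u (k-1)) * v k + u k * v k + u (k+1) * v k := by
    intro k hk; rw [if_pos (by simpa using mem_range.1 hk)]; ring
  have hR : ∀ k ∈ range n,
      u k * (if k + 1 ≤ n then (if k = 0 then 0 else v (k-1)) + v k + v (k+1) else 0)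
      = (if k = 0 then 0 else v (k-1)) * u k + u k * v k + v (k+1) * u k := by
    intro k hk; rw [if_pos (by simpa using mem_range.1 hk)]; ring
  rw [Finset.sum_congr rfl hL, Finset.sum_congr rfl hR]
  rw [Finset.sum_add_distrib, Finset.sum_add_distrib, Finset.sum_add_distrib,
    Finset.sum_add_distrib]
  rw [sum_shift n u v hv, sum_shift n v u hu]
  ring

lemma ip_Amap_iterate (n m : ℕ) (u v : ℕ → ℕ) (hu : Supp n u) (hv : Supp n v) :
    ip n ((Amap n)^[m] u) v = ip n u ((Amap n)^[m] v) := by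
  induction m generalizing u v with
  | zero => rfl
  | succ m ih =>
    rw [Function.iterate_succ_apply', Function.iterate_succ_apply']
    rw [ip_Amap n _ v (Amap_iterate_supp n m u hu) hv]
    rw [ih u _ hu (Amap_supp n _), ← Function.iterate_succ_apply, Function.iterate_succ_apply']

lemma Amap_mono (n : ℕ) (u v : ℕ → ℕ) (h : ∀ k, u k ≤ v k) :
    ∀ k, Amap n u k ≤ Amap n v k := by
  intro k; simp only [Amap]
  split_ifs with h1
  · exact Nat.add_le_add (Nat.add_le_add (le_refl 0) (h k)) (h (k+1))
  · exact Nat.add_le_add (Nat.add_le_add (h (k-1)) (h k)) (h (k+1))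
  · exact le_refl 0

lemma Amap_iterate_mono (n m : ℕ) (u v : ℕ → ℕ) (h : ∀ k, u k ≤ v k) :
    ∀ k, (Amap n)^[m] u k ≤ (Amap n)^[m] v k := by
  induction m generalizing u v with
  | zero => exact h
  | succ m ih =>
    rw [Function.iterate_succ_apply, Function.iterate_succ_apply]
    exact ih _ _ (Amap_mono n u v h)

lemma Amap_ge (n : ℕ) (v : ℕ → ℕ) (k : ℕ) (hk : k < n) : v k ≤ Amap n v k := by
  simp only [Amap]; rw [if_pos (by omega)]; split_ifs <;> omega



/-! ### pointwise product -/

def pmul (u v : ℕ → ℕ) : ℕ → ℕ := fun k => u k * v k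

@[simp] lemma pmul_apply (u v : ℕ → ℕ) (k : ℕ) : pmul u v k = u k * v k := rfl

lemma pmul_supp (n : ℕ) (u v : ℕ → ℕ) (hu : Supp n u) : Supp n (pmul u v) := by
  intro k hk; simp [pmul, hu k hk]

/-! ### decomposition of `Amap` on central indicators -/

def coefA (n j m : ℕ) : ℕ :=
  if 2*j+2 ≤ n then
    ((if m = j-1 then 1 else 0) + (if m = j then 1 else 0) + (if m = j+1 then 1 else 0))
  else if 2*j+1 = n then (if m = j-1 then 1 else 0) else 0

lemma sum_delta_chi (n a k : ℕ) (ha : a < n) :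
    ∑ m ∈ range n, (if m = a then 1 else 0) * chi n m k = chi n a k := by
  rw [Finset.sum_eq_single a]
  · simp
  · intro b _ hb; simp [hb]
  · intro h; exact absurd (mem_range.2 ha) h

lemma Amap_chi_wide (n j : ℕ) (h : 2*j+2 ≤ n) (k : ℕ) :
    Amap n (chi n j) k = chi n (j-1) k + chi n j k + chi n (j+1) k := by
  simp only [Amap, chi]; split_ifs <;> omega

lemma Amap_chi_mid (n j : ℕ) (h : 2*j+1 = n) (k : ℕ) :
    Amap n (chi n j) k = chi n (j-1) k := by
  simp only [Amap, chi]; split_ifs <;> omega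

lemma Amap_chi_empty (n j : ℕ) (h : n < 2*j+1) (k : ℕ) :
    Amap n (chi n j) k = 0 := by
  simp only [Amap, chi]; split_ifs <;> omega

lemma Amap_chi_eq (n : ℕ) (j k : ℕ) :
    Amap n (chi n j) k = ∑ m ∈ range n, coefA n j m * chi n m k := by
  unfold coefA
  by_cases h1 : 2*j+2 ≤ n
  · simp only [if_pos h1]
    have e : ∀ m ∈ range n,
        ((if m = j-1 then 1 else 0) + (if m = j then 1 else 0) + (if m = j+1 then 1 else 0))
          * chi n m k
        = (if m = j-1 then 1 else 0) * chi n m k + (if m = j then 1 else 0) * chi n m k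
          + (if m = j+1 then 1 else 0) * chi n m k := by intro m _; ring
    rw [Finset.sum_congr rfl e, Finset.sum_add_distrib, Finset.sum_add_distrib,
      sum_delta_chi n (j-1) k (by omega), sum_delta_chi n j k (by omega),
      sum_delta_chi n (j+1) k (by omega)]
    exact Amap_chi_wide n j h1 k
  · by_cases h2 : 2*j+1 = n
    · simp only [if_neg h1, if_pos h2]
      rw [sum_delta_chi n (j-1) k (by omega)]
      exact Amap_chi_mid n j h2 k
    · simp only [if_neg h1, if_neg h2]
      simp only [zero_mul, Finset.sum_const_zero]
      exact Amap_chi_empty n j (by omega) k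

/-! ### Cone machinery -/

lemma cone_supp (n : ℕ) (v : ℕ → ℕ) (hv : Cone n v) : Supp n v := by
  obtain ⟨a, ha⟩ := hv
  intro k hk
  rw [ha k]
  apply Finset.sum_eq_zero
  intro j _
  have : chi n j k = 0 := by simp only [chi]; rw [if_neg]; omega
  simp [this]

lemma cone_chi (n j : ℕ) : Cone n (chi n j) := by
  by_cases hj : j < n
  · exact ⟨fun m => if m = j then 1 else 0, fun k => (sum_delta_chi n j k hj).symm⟩
  · refine ⟨fun _ => 0, fun k => ?_⟩
    have : chi n j k = 0 := by simp only [chi]; rw [if_neg]; omega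
    simp [this]

lemma cone_one (n : ℕ) : Cone n (chi n 0) := cone_chi n 0

lemma cone_sum_swap (n : ℕ) (a : ℕ → ℕ) (c : ℕ → ℕ → ℕ) (F : ℕ → ℕ → ℕ)
    (hF : ∀ j ∈ range n, ∀ k, F j k = ∑ m ∈ range n, c j m * chi n m k)
    (v : ℕ → ℕ) (hv : ∀ k, v k = ∑ j ∈ range n, a j * F j k) : Cone n v := by
  refine ⟨fun m => ∑ j ∈ range n, a j * c j m, fun k => ?_⟩
  rw [hv k]
  have e : ∀ j ∈ range n, a j * F j k = ∑ m ∈ range n, a j * (c j m * chi n m k) := by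
    intro j hj; rw [hF j hj k, Finset.mul_sum]
  rw [Finset.sum_congr rfl e, Finset.sum_comm]
  apply Finset.sum_congr rfl
  intro m _
  rw [Finset.sum_mul]
  apply Finset.sum_congr rfl
  intro j _
  ring

lemma Amap_congr (n : ℕ) (u v : ℕ → ℕ) (h : ∀ k, u k = v k) (k : ℕ) :
    Amap n u k = Amap n v k := by
  simp only [Amap, h]

lemma Amap_sum_smul (n : ℕ) (s : Finset ℕ) (a : ℕ → ℕ) (f : ℕ → ℕ → ℕ) (k : ℕ) :
    Amap n (fun x => ∑ j ∈ s, a j * f j x) k = ∑ j ∈ s, a j * Amap n (f j) k := by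
  simp only [Amap]
  split_ifs with h1 h2
  · subst h2
    simp only [zero_add]
    rw [← Finset.sum_add_distrib]
    apply Finset.sum_congr rfl; intro j _; ring
  · rw [← Finset.sum_add_distrib, ← Finset.sum_add_distrib]
    apply Finset.sum_congr rfl; intro j _; ring
  · simp

lemma cone_Amap (n : ℕ) (v : ℕ → ℕ) (hv : Cone n v) : Cone n (Amap n v) := by
  obtain ⟨a, ha⟩ := hv
  apply cone_sum_swap n a (coefA n) (fun j => Amap n (chi n j))
    (fun j _ k => Amap_chi_eq n j k)
  intro k
  rw [Amap_congr n v (fun x => ∑ j ∈ range n, a j * chi n j x) ha k]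
  exact Amap_sum_smul n (range n) a (chi n) k

lemma filter_le_range (n j : ℕ) (hj : j < n) :
    (range n).filter (fun m => m ≤ j) = range (j+1) := by
  ext m; simp only [Finset.mem_filter, Finset.mem_range]; omega

lemma cone_pmul_chi (n j : ℕ) (hj : j < n) (w : ℕ → ℕ) (b : ℕ → ℕ)
    (hb : ∀ k, w k = ∑ m ∈ range n, b m * chi n m k) (k : ℕ) :
    chi n j k * w k = ∑ m ∈ range n,
      ((if j < m then b m else 0) + (if m = j then ∑ i ∈ range (j+1), b i else 0))
        * chi n m k := by
  have lhs : chi n j k * w k = ∑ m ∈ range n, b m * chi n (max j m) k := by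
    rw [hb k, Finset.mul_sum]
    apply Finset.sum_congr rfl; intro m _
    rw [← chi_mul n j m k]; ring
  rw [lhs]
  have e1 : ∀ m ∈ range n, b m * chi n (max j m) k
      = (if j < m then b m * chi n m k else 0) + (if m ≤ j then b m * chi n j k else 0) := by
    intro m _
    by_cases h : j < m
    · rw [if_pos h, if_neg (by omega), Nat.max_eq_right (le_of_lt h), add_zero]
    · rw [if_neg h, if_pos (by omega), Nat.max_eq_left (by omega), zero_add]
  have e2 : ∀ m ∈ range n,
      ((if j < m then b m else 0) + (if m = j then ∑ i ∈ range (j+1), b i else 0))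
        * chi n m k
      = (if j < m then b m * chi n m k else 0)
        + (if m = j then (∑ i ∈ range (j+1), b i) * chi n j k else 0) := by
    intro m _
    by_cases h : j < m
    · rw [if_pos h, if_pos h, if_neg (by omega), if_neg (by omega)]; ring
    · by_cases h2 : m = j
      · subst h2; rw [if_neg h, if_pos rfl, if_neg h, if_pos rfl]; ring
      · rw [if_neg h, if_neg h2, if_neg h, if_neg h2]; ring
  rw [Finset.sum_congr rfl e1, Finset.sum_congr rfl e2,
    Finset.sum_add_distrib, Finset.sum_add_distrib]
  congr 1
  have hR : ∑ m ∈ range n, (if m = j then (∑ i ∈ range (j+1), b i) * chi n j k else 0)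
      = (∑ i ∈ range (j+1), b i) * chi n j k := by
    rw [Finset.sum_eq_single j]
    · simp
    · intro m _ hm; rw [if_neg hm]
    · intro h; exact absurd (mem_range.2 hj) h
  rw [hR, ← Finset.sum_filter, filter_le_range n j hj, Finset.sum_mul]

lemma cone_pmul (n : ℕ) (v w : ℕ → ℕ) (hv : Cone n v) (hw : Cone n w) :
    Cone n (pmul v w) := by
  obtain ⟨a, ha⟩ := hv
  obtain ⟨b, hb⟩ := hw
  apply cone_sum_swap n a
    (fun j m => (if j < m then b m else 0) + (if m = j then ∑ i ∈ range (j+1), b i else 0))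
    (fun j k => chi n j k * w k)
    (fun j hj k => cone_pmul_chi n j (mem_range.1 hj) w b hb k)
  intro k
  simp only [pmul_apply]
  rw [ha k, Finset.sum_mul]
  apply Finset.sum_congr rfl; intro j _; ring

/-! ### pairing -/

lemma ip_cone_rep (n : ℕ) (v u : ℕ → ℕ) (a : ℕ → ℕ)
    (ha : ∀ k, v k = ∑ j ∈ range n, a j * chi n j k) :
    ip n v u = ∑ j ∈ range n, a j * cs n j u := by
  unfold ip
  have e : ∀ k ∈ range n, v k * u k = ∑ j ∈ range n, a j * (chi n j k * u k) := by
    intro k _; rw [ha k, Finset.sum_mul]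
    apply Finset.sum_congr rfl; intro j _; ring
  rw [Finset.sum_congr rfl e, Finset.sum_comm]
  apply Finset.sum_congr rfl; intro j _
  rw [cs, ip, Finset.mul_sum]

lemma ip_dom (n : ℕ) (v x y : ℕ → ℕ) (hv : Cone n v) (h : dom n x y) :
    ip n v y ≤ ip n v x := by
  obtain ⟨a, ha⟩ := hv
  rw [ip_cone_rep n v x a ha, ip_cone_rep n v y a ha]
  exact Finset.sum_le_sum fun j _ => Nat.mul_le_mul_left _ (h j)

/-! ### values of cone functions -/

lemma cone_rep_zero (n : ℕ) (hn : 1 ≤ n) (a : ℕ → ℕ) (v : ℕ → ℕ)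
    (ha : ∀ k, v k = ∑ j ∈ range n, a j * chi n j k) : v 0 = a 0 := by
  rw [ha 0, Finset.sum_eq_single 0]
  · have : chi n 0 0 = 1 := by simp only [chi]; rw [if_pos]; omega
    simp [this]
  · intro j _ hj
    have : chi n j 0 = 0 := by simp only [chi]; rw [if_neg]; omega
    simp [this]
  · intro h; exact absurd (mem_range.2 (by omega)) h

lemma chi_apply_one (n j : ℕ) (hn : 3 ≤ n) :
    chi n j 1 = (if j = 0 then 1 else 0) + (if j = 1 then 1 else 0) := by
  simp only [chi]; split_ifs <;> omega

lemma cone_rep_one (n : ℕ) (hn : 3 ≤ n) (a : ℕ → ℕ) (v : ℕ → ℕ)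
    (ha : ∀ k, v k = ∑ j ∈ range n, a j * chi n j k) : v 1 = a 0 + a 1 := by
  rw [ha 1]
  have e : ∀ j ∈ range n, a j * chi n j 1
      = a j * (if j = 0 then 1 else 0) + a j * (if j = 1 then 1 else 0) := by
    intro j _; rw [chi_apply_one n j hn]; ring
  rw [Finset.sum_congr rfl e, Finset.sum_add_distrib]
  congr 1
  · rw [Finset.sum_eq_single 0]
    · simp
    · intro j _ hj; simp [hj]
    · intro h; exact absurd (mem_range.2 (by omega)) h
  · rw [Finset.sum_eq_single 1]
    · simp
    · intro j _ hj; simp [hj]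
    · intro h; exact absurd (mem_range.2 (by omega)) h

lemma cone_rep_last (n : ℕ) (hn : 1 ≤ n) (a : ℕ → ℕ) (v : ℕ → ℕ)
    (ha : ∀ k, v k = ∑ j ∈ range n, a j * chi n j k) : v (n-1) = a 0 := by
  rw [ha (n-1), Finset.sum_eq_single 0]
  · have : chi n 0 (n-1) = 1 := by simp only [chi]; rw [if_pos]; omega
    simp [this]
  · intro j _ hj
    have : chi n j (n-1) = 0 := by simp only [chi]; rw [if_neg]; omega
    simp [this]
  · intro h; exact absurd (mem_range.2 (by omega)) h

lemma cone_zero_le (n : ℕ) (v : ℕ → ℕ) (hv : Cone n v) (k : ℕ) (hk : k < n) :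
    v 0 ≤ v k := by
  obtain ⟨a, ha⟩ := hv
  rw [cone_rep_zero n (by omega) a v ha, ha k]
  calc a 0 = a 0 * chi n 0 k := by rw [chi_zero_apply n k hk]; ring
  _ ≤ _ := Finset.single_le_sum (f := fun j => a j * chi n j k)
      (fun j _ => Nat.zero_le _) (mem_range.2 (by omega))

lemma cone_last_eq (n : ℕ) (hn : 1 ≤ n) (v : ℕ → ℕ) (hv : Cone n v) : v (n-1) = v 0 := by
  obtain ⟨a, ha⟩ := hv
  rw [cone_rep_zero n hn a v ha, cone_rep_last n hn a v ha]

lemma cone_zero_le_one (n : ℕ) (hn : 3 ≤ n) (v : ℕ → ℕ) (hv : Cone n v) : v 0 ≤ v 1 := by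
  obtain ⟨a, ha⟩ := hv
  rw [cone_rep_zero n (by omega) a v ha, cone_rep_one n hn a v ha]; omega

/-! ### `cs` of `Amap` -/

lemma cs_eq_ip (n j : ℕ) (x : ℕ → ℕ) : cs n j x = ip n (chi n j) x := rfl

lemma cs_Amap (n : ℕ) (x : ℕ → ℕ) (hx : Supp n x) (j : ℕ) :
    cs n j (Amap n x) = ∑ m ∈ range n, coefA n j m * cs n m x := by
  rw [cs_eq_ip, ← ip_Amap n (chi n j) x (chi_supp n j) hx]
  exact ip_cone_rep n (Amap n (chi n j)) x (coefA n j) (fun k => Amap_chi_eq n j k)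

lemma dom_Amap (n : ℕ) (x y : ℕ → ℕ) (hx : Supp n x) (hy : Supp n y)
    (h : dom n x y) : dom n (Amap n x) (Amap n y) := by
  intro j
  rw [cs_Amap n x hx j, cs_Amap n y hy j]
  exact Finset.sum_le_sum fun m _ => Nat.mul_le_mul_left _ (h m)

lemma coefA_zero (n m : ℕ) (hn : 2 ≤ n) :
    coefA n 0 m = 2 * (if m = 0 then 1 else 0) + (if m = 1 then 1 else 0) := by
  simp only [coefA]; split_ifs <;> omega

lemma cs0_Amap (n : ℕ) (hn : 3 ≤ n) (x : ℕ → ℕ) (hx : Supp n x) :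
    cs n 0 (Amap n x) = 2 * cs n 0 x + cs n 1 x := by
  rw [cs_Amap n x hx 0]
  have e : ∀ m ∈ range n, coefA n 0 m * cs n m x
      = 2 * ((if m = 0 then 1 else 0) * cs n m x) + (if m = 1 then 1 else 0) * cs n m x := by
    intro m _; rw [coefA_zero n m (by omega)]; ring
  rw [Finset.sum_congr rfl e, Finset.sum_add_distrib, ← Finset.mul_sum]
  congr 1
  · congr 1
    rw [Finset.sum_eq_single 0]
    · simp
    · intro j _ hj; simp [hj]
    · intro h; exact absurd (mem_range.2 (by omega)) h
  · rw [Finset.sum_eq_single 1]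
    · simp
    · intro j _ hj; simp [hj]
    · intro h; exact absurd (mem_range.2 (by omega)) h



/-! ### `gvec` facts -/

lemma gvec_zero (n : ℕ) : gvec n 0 = chi n 0 := rfl

lemma gvec_succ (n m : ℕ) : gvec n (m+1) = Amap n (gvec n m) :=
  Function.iterate_succ_apply' _ _ _

lemma gvec_add (n a b : ℕ) : gvec n (a+b) = (Amap n)^[a] (gvec n b) := by
  exact Function.iterate_add_apply _ a b _

lemma gvec_cone (n m : ℕ) : Cone n (gvec n m) := by
  induction m with
  | zero => exact cone_one n
  | succ m ih => rw [gvec_succ]; exact cone_Amap n _ ih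

lemma gvec_pos (n m : ℕ) (k : ℕ) (hk : k < n) : 1 ≤ gvec n m k := by
  induction m with
  | zero => rw [gvec_zero, chi_zero_apply n k hk]
  | succ m ih => rw [gvec_succ]; exact le_trans ih (Amap_ge n _ k hk)

lemma gvec_zero_lt_one (n : ℕ) (hn : 3 ≤ n) (m : ℕ) (hm : 1 ≤ m) :
    gvec n m 0 < gvec n m 1 := by
  obtain ⟨m', rfl⟩ : ∃ m', m = m' + 1 := ⟨m - 1, by omega⟩
  rw [gvec_succ]
  have h2 := gvec_pos n m' 2 (by omega)
  simp only [Amap]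
  rw [if_pos (by omega : (0:ℕ)+1 ≤ n), if_pos (by omega : (1:ℕ)+1 ≤ n)]
  norm_num
  omega

/-! ### endpoint lemmas -/

def dvec (a : ℕ) : ℕ → ℕ := fun k => if k = a then 1 else 0

lemma dvec_supp (n a : ℕ) (ha : a < n) : Supp n (dvec a) := by
  intro k hk; simp only [dvec]; rw [if_neg]; omega

lemma ip_dvec (n a : ℕ) (ha : a < n) (x : ℕ → ℕ) : ip n (dvec a) x = x a :=
  ip_delta n a ha x

lemma evec_one (n : ℕ) (hn : 3 ≤ n) (a : ℕ) (ha : 1 ≤ a) :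
    1 ≤ (Amap n)^[a] (dvec 0) 1 := by
  obtain ⟨a', rfl⟩ : ∃ a', a = a' + 1 := ⟨a - 1, by omega⟩
  clear ha
  induction a' with
  | zero =>
    show 1 ≤ Amap n (dvec 0) 1
    simp only [Amap, dvec]
    split_ifs <;> omega
  | succ a ih =>
    rw [Function.iterate_succ_apply']
    have : (Amap n)^[a+1] (dvec 0) 1 ≤ Amap n ((Amap n)^[a+1] (dvec 0)) 1 :=
      Amap_ge n _ 1 (by omega)
    omega

lemma gvec_apply_eval (n : ℕ) (x : ℕ) (hx : x < n) (a b : ℕ) :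
    gvec n (a+b) x = ip n ((Amap n)^[a] (dvec x)) (gvec n b) := by
  rw [gvec_add, ip_Amap_iterate n a (dvec x) (gvec n b) (dvec_supp n x hx) (gvec_supp n b),
    ip_dvec n x hx]

lemma gvec_cone_zero_le (n : ℕ) (m k : ℕ) (hk : k < n) : gvec n m 0 ≤ gvec n m k :=
  cone_zero_le n _ (gvec_cone n m) k hk

lemma gvec_end_mul_lt (n : ℕ) (hn : 3 ≤ n) (a b : ℕ) (ha : 1 ≤ a) (hb : 1 ≤ b) :
    gvec n a 0 * gvec n b 0 < gvec n (a+b) 0 := by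
  have hga : gvec n a 0 = ip n ((Amap n)^[a] (dvec 0)) (gvec n 0) := by
    have := gvec_apply_eval n 0 (by omega) a 0
    rwa [add_zero] at this
  have hgab : gvec n (a+b) 0 = ip n ((Amap n)^[a] (dvec 0)) (gvec n b) :=
    gvec_apply_eval n 0 (by omega) a b
  rw [hga, hgab]
  unfold ip
  rw [Finset.sum_mul]
  apply Finset.sum_lt_sum
  · intro k hk
    have hk' := mem_range.1 hk
    rw [show gvec n 0 k = 1 from by rw [gvec_zero]; exact chi_zero_apply n k hk', mul_one]
    exact Nat.mul_le_mul_left _ (gvec_cone_zero_le n b k hk')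
  · refine ⟨1, mem_range.2 (by omega), ?_⟩
    rw [show gvec n 0 1 = 1 from by rw [gvec_zero]; exact chi_zero_apply n 1 (by omega), mul_one]
    have h1 := evec_one n hn a ha
    have h2 := gvec_zero_lt_one n hn b hb
    exact mul_lt_mul_of_pos_left h2 (by omega)

lemma gvec_last_mul_le (n : ℕ) (hn : 3 ≤ n) (a b : ℕ) :
    gvec n a (n-1) * gvec n b (n-1) ≤ gvec n (a+b) (n-1) := by
  have hga : gvec n a (n-1) = ip n ((Amap n)^[a] (dvec (n-1))) (gvec n 0) := by
    have := gvec_apply_eval n (n-1) (by omega) a 0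
    rwa [add_zero] at this
  have hgab : gvec n (a+b) (n-1) = ip n ((Amap n)^[a] (dvec (n-1))) (gvec n b) :=
    gvec_apply_eval n (n-1) (by omega) a b
  rw [hga, hgab]
  unfold ip
  rw [Finset.sum_mul]
  apply Finset.sum_le_sum
  intro k hk
  have hk' := mem_range.1 hk
  rw [show gvec n 0 k = 1 from by rw [gvec_zero]; exact chi_zero_apply n k hk', mul_one]
  apply Nat.mul_le_mul_left
  rw [cone_last_eq n (by omega) _ (gvec_cone n b)]
  exact gvec_cone_zero_le n b k hk'

/-! ### the merging inequality -/

lemma ip_pmul_left (n : ℕ) (u v x : ℕ → ℕ) : ip n (pmul u v) x = ip n u (pmul v x) := by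
  unfold ip
  apply Finset.sum_congr rfl; intro k _; simp [pmul]; ring

lemma cs_pmul (n j : ℕ) (u x : ℕ → ℕ) : cs n j (pmul u x) = ip n (pmul (chi n j) u) x := by
  rw [cs_eq_ip, ip_pmul_left]

lemma gmul_dom (n : ℕ) (hn : 3 ≤ n) (a b : ℕ) :
    dom n (pmul (gvec n a) (gvec n b)) (gvec n (a+b)) := by
  intro j
  have hL : cs n j (gvec n (a+b)) = ip n ((Amap n)^[a] (chi n j)) (gvec n b) := by
    rw [cs_eq_ip, gvec_add,
      ← ip_Amap_iterate n a (chi n j) (gvec n b) (chi_supp n j) (gvec_supp n b)]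
  have hR : cs n j (pmul (gvec n a) (gvec n b))
      = ip n (pmul (chi n j) (gvec n a)) (gvec n b) := cs_pmul n j _ _
  rw [hL, hR, ip_comm n _ (gvec n b), ip_comm n _ (gvec n b)]
  apply ip_dom n (gvec n b) _ _ (gvec_cone n b)
  intro m
  -- cs m (A^[a] chi_j) ≤ cs m (chi_j * gvec a) = cs (max j m) (gvec a)
  have hRm : cs n m (pmul (chi n j) (gvec n a)) = cs n (max j m) (gvec n a) := by
    rw [cs_pmul, cs_eq_ip]
    unfold ip
    apply Finset.sum_congr rfl; intro k _
    simp only [pmul_apply]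
    rw [chi_mul n m j k, Nat.max_comm m j]
  rw [hRm]
  by_cases hmj : j ≤ m
  · rw [Nat.max_eq_right hmj]
    calc cs n m ((Amap n)^[a] (chi n j))
        ≤ cs n m ((Amap n)^[a] (chi n 0)) := by
          apply ip_mono_right
          intro k _
          exact Amap_iterate_mono n a _ _ (fun x => chi_mono n j 0 x (by omega)) k
      _ = cs n m (gvec n a) := rfl
  · rw [Nat.max_eq_left (by omega)]
    rw [cs_eq_ip, ← ip_Amap_iterate n a _ _ (chi_supp n m) (chi_supp n j), ip_comm]
    calc ip n (chi n j) ((Amap n)^[a] (chi n m))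
        ≤ ip n (chi n j) ((Amap n)^[a] (chi n 0)) := by
          apply ip_mono_right
          intro k _
          exact Amap_iterate_mono n a _ _ (fun x => chi_mono n m 0 x (by omega)) k
      _ = cs n j (gvec n a) := rfl

lemma cs0_gmul_eq (n : ℕ) (a b : ℕ) :
    cs n 0 (pmul (gvec n a) (gvec n b)) = cs n 0 (gvec n (a+b)) := by
  have h1 : cs n 0 (pmul (gvec n a) (gvec n b)) = ip n (gvec n a) (gvec n b) := by
    rw [cs_pmul]
    unfold ip
    apply Finset.sum_congr rfl; intro k hk
    simp only [pmul_apply, chi_zero_apply n k (mem_range.1 hk), one_mul]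
  rw [h1, cs_eq_ip, gvec_add,
    ← ip_Amap_iterate n a (chi n 0) (gvec n b) (chi_supp n 0) (gvec_supp n b)]
  rfl

lemma cs_ends (n : ℕ) (hn : 3 ≤ n) (x : ℕ → ℕ) :
    cs n 0 x = cs n 1 x + x 0 + x (n-1) := by
  have e : ∀ k ∈ range n, chi n 0 k * x k
      = chi n 1 k * x k + (if k = 0 then 1 else 0) * x k + (if k = n-1 then 1 else 0) * x k := by
    intro k hk
    have hk' := mem_range.1 hk
    have : chi n 0 k = chi n 1 k + (if k = 0 then 1 else 0) + (if k = n-1 then 1 else 0) := by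
      simp only [chi]; split_ifs <;> omega
    rw [this]; ring
  rw [cs_eq_ip]
  unfold ip
  rw [Finset.sum_congr rfl e, Finset.sum_add_distrib, Finset.sum_add_distrib]
  have d0 : ∑ k ∈ range n, (if k = 0 then 1 else 0) * x k = x 0 := ip_delta n 0 (by omega) x
  have d1 : ∑ k ∈ range n, (if k = n-1 then 1 else 0) * x k = x (n-1) :=
    ip_delta n (n-1) (by omega) x
  rw [d0, d1]
  rfl

lemma gmul_cs1_strict (n : ℕ) (hn : 3 ≤ n) (a b : ℕ) (ha : 1 ≤ a) (hb : 1 ≤ b) :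
    cs n 1 (gvec n (a+b)) < cs n 1 (pmul (gvec n a) (gvec n b)) := by
  have h0 := cs0_gmul_eq n a b
  have e1 := cs_ends n hn (pmul (gvec n a) (gvec n b))
  have e2 := cs_ends n hn (gvec n (a+b))
  have hlt := gvec_end_mul_lt n hn a b ha hb
  have hle := gvec_last_mul_le n hn a b
  simp only [pmul_apply] at e1
  omega



/-! ### dominance basics and multiplication lemmas -/

lemma dom_refl (n : ℕ) (x : ℕ → ℕ) : dom n x x := fun _ => le_refl _

lemma dom_trans (n : ℕ) {x y z : ℕ → ℕ} (h1 : dom n x y) (h2 : dom n y z) : dom n x z :=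
  fun j => le_trans (h2 j) (h1 j)

lemma dom_pmul (n : ℕ) (m x y : ℕ → ℕ) (hm : Cone n m) (h : dom n x y) :
    dom n (pmul m x) (pmul m y) := by
  intro j
  rw [cs_pmul, cs_pmul]
  exact ip_dom n _ _ _ (cone_pmul n _ _ (cone_chi n j) hm) h

lemma dom_pmul_comm (n : ℕ) (m x : ℕ → ℕ) (j : ℕ) :
    cs n j (pmul m x) = cs n j (pmul x m) := by
  rw [cs_eq_ip, cs_eq_ip]
  apply Finset.sum_congr rfl; intro k _; simp only [pmul_apply]; ring

/-- strict pairing at the full interval -/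
lemma ip_dom_cs0_strict (n : ℕ) (hn : 1 ≤ n) (v x y : ℕ → ℕ) (hv : Cone n v)
    (hv0 : 1 ≤ v 0) (h : dom n x y) (hs : cs n 0 y < cs n 0 x) :
    ip n v y < ip n v x := by
  obtain ⟨a, ha⟩ := hv
  rw [ip_cone_rep n v x a ha, ip_cone_rep n v y a ha]
  apply Finset.sum_lt_sum
  · intro j _; exact Nat.mul_le_mul_left _ (h j)
  · refine ⟨0, mem_range.2 (by omega), ?_⟩
    have h0 : a 0 = v 0 := (cone_rep_zero n hn a v ha).symm
    exact mul_lt_mul_of_pos_left hs (by omega)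

/-- strict pairing at the second interval -/
lemma ip_dom_cs1_strict (n : ℕ) (hn : 3 ≤ n) (v x y : ℕ → ℕ) (hv : Cone n v)
    (hv1 : 1 ≤ a1val) (hvv : v 0 + a1val = v 1) (h : dom n x y) (hs : cs n 1 y < cs n 1 x) :
    ip n v y < ip n v x := by
  obtain ⟨a, ha⟩ := hv
  rw [ip_cone_rep n v x a ha, ip_cone_rep n v y a ha]
  apply Finset.sum_lt_sum
  · intro j _; exact Nat.mul_le_mul_left _ (h j)
  · refine ⟨1, mem_range.2 (by omega), ?_⟩
    have h0 : v 0 = a 0 := cone_rep_zero n (by omega) a v ha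
    have h1 : v 1 = a 0 + a 1 := cone_rep_one n hn a v ha
    exact mul_lt_mul_of_pos_left hs (by omega)

lemma dom_pmul_cs0_strict (n : ℕ) (hn : 3 ≤ n) (m x y : ℕ → ℕ) (hm : Cone n m)
    (hm0 : 1 ≤ m 0) (h : dom n x y) (hs : cs n 0 y < cs n 0 x) :
    cs n 0 (pmul m y) < cs n 0 (pmul m x) := by
  rw [cs_pmul, cs_pmul]
  apply ip_dom_cs0_strict n (by omega) _ _ _ (cone_pmul n _ _ (cone_chi n 0) hm) _ h hs
  have : chi n 0 0 = 1 := chi_zero_apply n 0 (by omega)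
  simp [pmul, this, hm0]

lemma dom_pmul_cs1_strict (n : ℕ) (hn : 3 ≤ n) (m x y : ℕ → ℕ) (hm : Cone n m)
    (hm0 : 1 ≤ m 0) (h : dom n x y) (hs : cs n 1 y < cs n 1 x) :
    cs n 1 (pmul m y) < cs n 1 (pmul m x) := by
  rw [cs_pmul, cs_pmul]
  have hc : Cone n (pmul (chi n 1) m) := cone_pmul n _ _ (cone_chi n 1) hm
  have h10 : pmul (chi n 1) m 0 = 0 := by
    have : chi n 1 0 = 0 := by simp only [chi]; rw [if_neg]; omega
    simp [pmul, this]
  have h11 : pmul (chi n 1) m 1 = m 1 := by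
    have : chi n 1 1 = 1 := by simp only [chi]; rw [if_pos]; omega
    simp [pmul, this]
  have hm01 : m 0 ≤ m 1 := cone_zero_le_one n hn m hm
  apply ip_dom_cs1_strict n hn _ _ _ hc (a1val := m 1) (by omega) (by omega) h hs

/-- applying `Amap` turns `cs 1`-strictness into `cs 0`-strictness -/
lemma Amap_cs1_to_cs0 (n : ℕ) (hn : 3 ≤ n) (x y : ℕ → ℕ) (hx : Supp n x) (hy : Supp n y)
    (h0 : cs n 0 y ≤ cs n 0 x) (hs : cs n 1 y < cs n 1 x) :
    cs n 0 (Amap n y) < cs n 0 (Amap n x) := by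
  rw [cs0_Amap n hn x hx, cs0_Amap n hn y hy]; omega

lemma Amap_cs0_strict (n : ℕ) (hn : 3 ≤ n) (x y : ℕ → ℕ) (hx : Supp n x) (hy : Supp n y)
    (h1 : cs n 1 y ≤ cs n 1 x) (hs : cs n 0 y < cs n 0 x) :
    cs n 0 (Amap n y) < cs n 0 (Amap n x) := by
  rw [cs0_Amap n hn x hx, cs0_Amap n hn y hy]; omega



lemma dom_pmul_right (n : ℕ) (m x y : ℕ → ℕ) (hm : Cone n m) (h : dom n x y) :
    dom n (pmul x m) (pmul y m) := by
  intro j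
  rw [dom_pmul_comm n y m j, dom_pmul_comm n x m j]
  exact dom_pmul n m x y hm h j

lemma Amap_apply_zero (n : ℕ) (hn : 1 ≤ n) (v : ℕ → ℕ) : Amap n v 0 = v 0 + v 1 := by
  simp only [Amap]
  rw [if_pos (by omega)]
  simp

/-! ### elimination scheme -/

/-- root vector of a rooted tree on vertices `{0,…,t}` given by parent map `par`,
with vertex weights `w`. -/
def vecN (n : ℕ) : ℕ → (ℕ → ℕ) → (ℕ → (ℕ → ℕ)) → (ℕ → ℕ)
  | 0, _, w => w 0
  | (t+1), par, w => vecN n t par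
      (Function.update w (par (t+1)) (pmul (w (par (t+1))) (Amap n (w (t+1)))))

lemma vecN_zero (n : ℕ) (par : ℕ → ℕ) (w : ℕ → (ℕ → ℕ)) : vecN n 0 par w = w 0 := rfl

lemma vecN_succ (n t : ℕ) (par : ℕ → ℕ) (w : ℕ → (ℕ → ℕ)) :
    vecN n (t+1) par w = vecN n t par
      (Function.update w (par (t+1)) (pmul (w (par (t+1))) (Amap n (w (t+1))))) := rfl

/-- number of children of `z` among vertices `{1,…,t}` -/
def kids (t : ℕ) (par : ℕ → ℕ) (z : ℕ) : ℕ :=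
  (((range (t+1)).filter (fun i => 1 ≤ i ∧ par i = z))).card

lemma kids_succ_self (t : ℕ) (par : ℕ → ℕ) :
    kids (t+1) par (par (t+1)) = kids t par (par (t+1)) + 1 := by
  unfold kids
  rw [Finset.range_add_one, Finset.filter_insert, if_pos (by exact ⟨by omega, rfl⟩)]
  rw [Finset.card_insert_of_notMem]
  intro hmem
  exact absurd (mem_range.1 (Finset.mem_of_mem_filter _ hmem)) (by omega)

lemma kids_succ_other (t : ℕ) (par : ℕ → ℕ) (z : ℕ) (hz : par (t+1) ≠ z) :
    kids (t+1) par z = kids t par z := by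
  unfold kids
  rw [Finset.range_add_one, Finset.filter_insert, if_neg (by rintro ⟨-, h⟩; exact hz h)]

lemma kids_top (t : ℕ) (par : ℕ → ℕ) (hpar : ∀ i, 1 ≤ i → i ≤ t+1 → par i < i) :
    kids (t+1) par (t+1) = 0 := by
  unfold kids
  rw [Finset.card_eq_zero, Finset.filter_eq_empty_iff]
  rintro i hi ⟨h1, h2⟩
  have hi' := mem_range.1 hi
  have := hpar i h1 (by omega)
  omega

/-- the GOOD predicate : guarantees eventual strictness -/
def GOOD (n t : ℕ) (par : ℕ → ℕ) (w : ℕ → (ℕ → ℕ)) (s : ℕ → ℕ) : Prop :=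
  (cs n 0 (gvec n (s 0)) < cs n 0 (w 0)) ∨
  ∃ z, 1 ≤ z ∧ z ≤ t ∧
    (cs n 1 (gvec n (s z)) < cs n 1 (w z) ∨ cs n 0 (gvec n (s z)) < cs n 0 (w z)
      ∨ 2 ≤ kids t par z + min (s z) 1)

theorem main (n : ℕ) (hn : 3 ≤ n) : ∀ (t : ℕ) (par : ℕ → ℕ) (w : ℕ → (ℕ → ℕ)) (s : ℕ → ℕ),
    (∀ i, 1 ≤ i → i ≤ t → par i < i) →
    (∀ i, i ≤ t → Cone n (w i)) →
    (∀ i, i ≤ t → 1 ≤ w i 0) →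
    (∀ i, i ≤ t → dom n (w i) (gvec n (s i))) →
    dom n (vecN n t par w) (gvec n (t + ∑ i ∈ range (t+1), s i)) ∧
    (GOOD n t par w s →
      cs n 0 (gvec n (t + ∑ i ∈ range (t+1), s i)) < cs n 0 (vecN n t par w)) := by
  intro t
  induction t with
  | zero =>
    intro par w s _ _ _ hd
    constructor
    · have := hd 0 (le_refl 0)
      simpa [vecN_zero] using this
    · rintro (h | ⟨z, hz1, hz0, _⟩)
      · simpa [vecN_zero] using h
      · omega
  | succ t ih =>
    intro par w s hpar hc h1 hd
    have hPlt : par (t+1) < t+1 := hpar (t+1) (by omega) (le_refl _)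
    have hPle : par (t+1) ≤ t := by omega
    -- abbreviations
    have hcL : Cone n (w (t+1)) := hc (t+1) (le_refl _)
    have hcP : Cone n (w (par (t+1))) := hc _ (by omega)
    have hdL : dom n (w (t+1)) (gvec n (s (t+1))) := hd (t+1) (le_refl _)
    have hdP : dom n (w (par (t+1))) (gvec n (s (par (t+1)))) := hd _ (by omega)
    have hAcone : Cone n (Amap n (w (t+1))) := cone_Amap n _ hcL
    have hA0 : 1 ≤ Amap n (w (t+1)) 0 := by
      rw [Amap_apply_zero n (by omega)]
      have := h1 (t+1) (le_refl _); omega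
    have hdomA : dom n (Amap n (w (t+1))) (gvec n (s (t+1) + 1)) := by
      rw [gvec_succ]
      exact dom_Amap n _ _ (cone_supp n _ hcL) (gvec_supp n _) hdL
    -- the updated state
    set W : ℕ → ℕ := pmul (w (par (t+1))) (Amap n (w (t+1))) with hW
    set w' : ℕ → (ℕ → ℕ) := Function.update w (par (t+1)) W with hw'
    set s' : ℕ → ℕ := Function.update s (par (t+1)) (s (par (t+1)) + s (t+1) + 1) with hs'
    have hw'P : w' (par (t+1)) = W := Function.update_self _ _ _
    have hs'P : s' (par (t+1)) = s (par (t+1)) + s (t+1) + 1 := Function.update_self _ _ _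
    have hw'o : ∀ i, i ≠ par (t+1) → w' i = w i := fun i hi => Function.update_of_ne hi _ _
    have hs'o : ∀ i, i ≠ par (t+1) → s' i = s i := fun i hi => Function.update_of_ne hi _ _
    have hWcone : Cone n W := cone_pmul n _ _ hcP hAcone
    have hW0 : 1 ≤ W 0 := by
      have := h1 (par (t+1)) (by omega)
      simp only [hW, pmul_apply]
      exact Nat.one_le_iff_ne_zero.2 (by positivity)
    -- dominance chain for the merged weight
    have hd1 : dom n W (pmul (w (par (t+1))) (gvec n (s (t+1) + 1))) :=
      dom_pmul n _ _ _ hcP hdomA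
    have hd2 : dom n (pmul (w (par (t+1))) (gvec n (s (t+1) + 1)))
        (pmul (gvec n (s (par (t+1)))) (gvec n (s (t+1) + 1))) :=
      dom_pmul_right n _ _ _ (gvec_cone n _) hdP
    have hd3 : dom n (pmul (gvec n (s (par (t+1)))) (gvec n (s (t+1) + 1)))
        (gvec n (s (par (t+1)) + s (t+1) + 1)) := by
      have := gmul_dom n hn (s (par (t+1))) (s (t+1) + 1)
      rwa [← add_assoc] at this
    have hWdom : dom n W (gvec n (s (par (t+1)) + s (t+1) + 1)) :=
      dom_trans n hd1 (dom_trans n hd2 hd3)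
    -- invariants for the new state
    have hc' : ∀ i, i ≤ t → Cone n (w' i) := by
      intro i hi
      by_cases hiP : i = par (t+1)
      · rw [hiP, hw'P]; exact hWcone
      · rw [hw'o i hiP]; exact hc i (by omega)
    have h1' : ∀ i, i ≤ t → 1 ≤ w' i 0 := by
      intro i hi
      by_cases hiP : i = par (t+1)
      · rw [hiP, hw'P]; exact hW0
      · rw [hw'o i hiP]; exact h1 i (by omega)
    have hd' : ∀ i, i ≤ t → dom n (w' i) (gvec n (s' i)) := by
      intro i hi
      by_cases hiP : i = par (t+1)
      · rw [hiP, hw'P, hs'P]; exact hWdom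
      · rw [hw'o i hiP, hs'o i hiP]; exact hd i (by omega)
    have hpar' : ∀ i, 1 ≤ i → i ≤ t → par i < i := fun i hi1 hi2 => hpar i hi1 (by omega)
    -- sum bookkeeping
    have hPmem : par (t+1) ∈ range (t+1) := mem_range.2 (by omega)
    have hsum : t + ∑ i ∈ range (t+1), s' i = (t+1) + ∑ i ∈ range (t+2), s i := by
      have e1 : ∑ i ∈ range (t+1), s' i
          = (s (par (t+1)) + s (t+1) + 1) + ∑ i ∈ range (t+1) \ {par (t+1)}, s i :=
        Finset.sum_update_of_mem hPmem _ _
      have e2 : ∑ i ∈ range (t+1), s i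
          = ∑ i ∈ range (t+1) \ {par (t+1)}, s i + s (par (t+1)) :=
        Finset.sum_eq_sum_sdiff_singleton_add hPmem _
      have e3 : ∑ i ∈ range (t+2), s i = ∑ i ∈ range (t+1), s i + s (t+1) :=
        Finset.sum_range_succ _ _
      omega
    obtain ⟨IH1, IH2⟩ := ih par w' s' hpar' hc' h1' hd'
    rw [hsum] at IH1 IH2
    rw [vecN_succ]
    refine ⟨IH1, ?_⟩
    -- strictness transfer
    intro hg
    apply IH2
    -- helper : strictness facts about the merged weight
    have hpres0 : cs n 0 (gvec n (s (par (t+1)))) < cs n 0 (w (par (t+1))) →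
        cs n 0 (gvec n (s (par (t+1)) + s (t+1) + 1)) < cs n 0 W := by
      intro hstrict
      have step1 : cs n 0 (pmul (Amap n (w (t+1))) (gvec n (s (par (t+1)))))
          < cs n 0 (pmul (Amap n (w (t+1))) (w (par (t+1)))) :=
        dom_pmul_cs0_strict n hn _ _ _ hAcone hA0 hdP hstrict
      rw [dom_pmul_comm n (Amap n (w (t+1))) (w (par (t+1))) 0] at step1
      have step2 : cs n 0 (pmul (gvec n (s (par (t+1)))) (Amap n (w (t+1))))
          ≥ cs n 0 (pmul (gvec n (s (par (t+1)))) (gvec n (s (t+1) + 1))) :=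
        dom_pmul n _ _ _ (gvec_cone n _) hdomA 0
      have step3 := hd3 0
      rw [dom_pmul_comm n (Amap n (w (t+1))) (gvec n (s (par (t+1)))) 0] at step1
      have hWk : cs n 0 W = cs n 0 (pmul (w (par (t+1))) (Amap n (w (t+1)))) := rfl
      omega
    have hpres1 : cs n 1 (gvec n (s (par (t+1)))) < cs n 1 (w (par (t+1))) →
        cs n 1 (gvec n (s (par (t+1)) + s (t+1) + 1)) < cs n 1 W := by
      intro hstrict
      have step1 : cs n 1 (pmul (Amap n (w (t+1))) (gvec n (s (par (t+1)))))
          < cs n 1 (pmul (Amap n (w (t+1))) (w (par (t+1)))) :=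
        dom_pmul_cs1_strict n hn _ _ _ hAcone hA0 hdP hstrict
      rw [dom_pmul_comm n (Amap n (w (t+1))) (gvec n (s (par (t+1)))) 1,
        dom_pmul_comm n (Amap n (w (t+1))) (w (par (t+1))) 1] at step1
      have step2 : cs n 1 (pmul (gvec n (s (par (t+1)))) (Amap n (w (t+1))))
          ≥ cs n 1 (pmul (gvec n (s (par (t+1)))) (gvec n (s (t+1) + 1))) :=
        dom_pmul n _ _ _ (gvec_cone n _) hdomA 1
      have step3 := hd3 1
      have hWk : cs n 1 W = cs n 1 (pmul (w (par (t+1))) (Amap n (w (t+1)))) := rfl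
      omega
    have hfromL : cs n 0 (gvec n (s (t+1) + 1)) < cs n 0 (Amap n (w (t+1))) →
        cs n 0 (gvec n (s (par (t+1)) + s (t+1) + 1)) < cs n 0 W := by
      intro hstrict
      have step1 : cs n 0 (pmul (w (par (t+1))) (gvec n (s (t+1) + 1)))
          < cs n 0 (pmul (w (par (t+1))) (Amap n (w (t+1)))) :=
        dom_pmul_cs0_strict n hn _ _ _ hcP (h1 (par (t+1)) (by omega)) hdomA hstrict
      have step2 := hd2 0
      have step3 := hd3 0
      have : cs n 0 W = cs n 0 (pmul (w (par (t+1))) (Amap n (w (t+1)))) := rfl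
      omega
    have hcreate : 1 ≤ s (par (t+1)) →
        cs n 1 (gvec n (s (par (t+1)) + s (t+1) + 1)) < cs n 1 W := by
      intro hsP
      have step1 := hd1 1
      have step2 := hd2 1
      have step3 : cs n 1 (gvec n (s (par (t+1)) + (s (t+1) + 1)))
          < cs n 1 (pmul (gvec n (s (par (t+1)))) (gvec n (s (t+1) + 1))) :=
        gmul_cs1_strict n hn _ _ hsP (by omega)
      rw [← add_assoc] at step3
      omega
    -- now the case analysis on GOOD
    rcases hg with hroot | ⟨z, hz1, hzle, hzcase⟩
    · -- root-strict
      by_cases hP0 : par (t+1) = 0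
      · left
        have hW' : w' 0 = W := by rw [← hP0]; exact hw'P
        have hS' : s' 0 = s 0 + s (t+1) + 1 := by rw [← hP0, hs'P, hP0]
        rw [hW', hS']
        rw [hP0] at hpres0
        exact hpres0 hroot
      · left
        rw [hw'o 0 (fun h => hP0 h.symm), hs'o 0 (fun h => hP0 h.symm)]
        exact hroot
    · by_cases hzL : z = t+1
      · -- the eliminated vertex itself is strict; convert through Amap
        subst hzL
        have hkid0 : kids (t+1) par (t+1) = 0 := kids_top t par hpar
        have hA0strict : cs n 0 (gvec n (s (t+1) + 1)) < cs n 0 (Amap n (w (t+1))) := by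
          rcases hzcase with hcs1 | hcs0 | hkid
          · rw [gvec_succ]
            exact Amap_cs1_to_cs0 n hn _ _ (cone_supp n _ hcL) (gvec_supp n _) (hdL 0) hcs1
          · rw [gvec_succ]
            exact Amap_cs0_strict n hn _ _ (cone_supp n _ hcL) (gvec_supp n _) (hdL 1) hcs0
          · omega
        have hWs := hfromL hA0strict
        by_cases hP0 : par (t+1) = 0
        · left
          have hW' : w' 0 = W := by rw [← hP0]; exact hw'P
          have hS' : s' 0 = s 0 + s (t+1) + 1 := by rw [← hP0, hs'P, hP0]
          rw [hW', hS']
          rw [hP0] at hWs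
          exact hWs
        · right
          refine ⟨par (t+1), by omega, hPle, Or.inr (Or.inl ?_)⟩
          rw [hw'P, hs'P]
          exact hWs
      · by_cases hzP : z = par (t+1)
        · -- strictness or kids at the parent of the eliminated vertex
          subst hzP
          rcases hzcase with hcs1 | hcs0 | hkid
          · right
            refine ⟨par (t+1), hz1, hPle, Or.inl ?_⟩
            rw [hw'P, hs'P]
            exact hpres1 hcs1
          · right
            refine ⟨par (t+1), hz1, hPle, Or.inr (Or.inl ?_)⟩
            rw [hw'P, hs'P]
            exact hpres0 hcs0
          · -- kids case
            rw [kids_succ_self t par] at hkid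
            by_cases hk : 1 ≤ kids t par (par (t+1))
            · right
              refine ⟨par (t+1), hz1, hPle, Or.inr (Or.inr ?_)⟩
              rw [hs'P]
              omega
            · -- kids t par P = 0, so min (s P) 1 = 1, i.e. s P ≥ 1
              have hsP : 1 ≤ s (par (t+1)) := by omega
              right
              refine ⟨par (t+1), hz1, hPle, Or.inl ?_⟩
              rw [hw'P, hs'P]
              exact hcreate hsP
        · -- untouched vertex
          right
          have hzle' : z ≤ t := by omega
          refine ⟨z, hz1, hzle', ?_⟩
          rw [hw'o z hzP, hs'o z hzP]
          rcases hzcase with h | h | h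
          · exact Or.inl h
          · exact Or.inr (Or.inl h)
          · refine Or.inr (Or.inr ?_)
            rw [kids_succ_other t par z (fun hh => hzP hh.symm)] at h
            exact h



/-! ### counting colourings -/

/-- adjacency (with loops) on `{0,…,n-1}` : distance at most 1 -/
def nadj (x y : ℕ) : Prop := x ≤ y + 1 ∧ y ≤ x + 1

instance (x y : ℕ) : Decidable (nadj x y) := by unfold nadj; infer_instance

def look {n t : ℕ} (c : Fin t → Fin n) (i : ℕ) : ℕ :=
  if h : i < t then (c ⟨i, h⟩).val else 0

lemma look_lt {n t : ℕ} (hn : 1 ≤ n) (c : Fin t → Fin n) (i : ℕ) : look c i < n := by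
  unfold look
  split_ifs with h
  · exact (c ⟨i, h⟩).isLt
  · omega

lemma look_in {n t : ℕ} (c : Fin t → Fin n) (i : ℕ) (h : i < t) :
    look c i = (c ⟨i, h⟩).val := by
  unfold look; rw [dif_pos h]

/-- weighted count of colourings of the rooted tree `par` on vertices `{0,…,t-1}` -/
def CountW (n t : ℕ) (par : ℕ → ℕ) (w : ℕ → (ℕ → ℕ)) : ℕ :=
  ∑ c : Fin t → Fin n,
    (∏ i ∈ range t, w i (look c i)) *
    (∏ i ∈ range t, if 1 ≤ i then (if nadj (look c (par i)) (look c i) then 1 else 0) else 1)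

lemma cs0_eq_sum (n : ℕ) (v : ℕ → ℕ) : cs n 0 v = ∑ k ∈ range n, v k := by
  rw [cs_eq_ip]
  unfold ip
  apply Finset.sum_congr rfl
  intro k hk
  rw [chi_zero_apply n k (mem_range.1 hk), one_mul]

lemma CountW_one (n : ℕ) (par : ℕ → ℕ) (w : ℕ → (ℕ → ℕ)) :
    CountW n 1 par w = cs n 0 (w 0) := by
  unfold CountW
  rw [cs0_eq_sum]
  have e : ∀ c : Fin 1 → Fin n,
      (∏ i ∈ range 1, w i (look c i)) *
      (∏ i ∈ range 1, if 1 ≤ i then (if nadj (look c (par i)) (look c i) then 1 else 0) else 1)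
      = w 0 ((c 0).val) := by
    intro c
    rw [Finset.prod_range_one, Finset.prod_range_one, if_neg (by omega), mul_one]
    rw [look_in c 0 (by omega)]
    rfl
  rw [Finset.sum_congr rfl (fun c _ => e c)]
  rw [← (Equiv.funUnique (Fin 1) (Fin n)).symm.sum_comp (fun c => w 0 ((c 0).val))]
  simp only [Equiv.funUnique_symm_apply]
  rw [← Fin.sum_univ_eq_sum_range (fun k => w 0 k) n]
  rfl

/-- summing a supported weight against the adjacency indicator gives `Amap` -/
lemma sum_nadj (n : ℕ) (v : ℕ → ℕ) (hv : Supp n v) (x : ℕ) (hx : x < n) :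
    ∑ y : Fin n, v y.val * (if nadj x y.val then 1 else 0) = Amap n v x := by
  rw [Fin.sum_univ_eq_sum_range (fun k => v k * (if nadj x k then 1 else 0)) n]
  have e : ∀ k, v k * (if nadj x k then 1 else 0)
      = (if 1 ≤ x ∧ k = x-1 then 1 else 0) * v k + (if k = x then 1 else 0) * v k
        + (if k = x+1 then 1 else 0) * v k := by
    intro k
    by_cases h : nadj x k <;> simp only [h, ↓reduceIte] <;> unfold nadj at h <;> split_ifs <;> omega
  rw [Finset.sum_congr rfl (fun k _ => e k), Finset.sum_add_distrib, Finset.sum_add_distrib]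
  have d2 : ∑ k ∈ range n, (if k = x then 1 else 0) * v k = v x := ip_delta n x hx v
  have d1 : ∑ k ∈ range n, (if 1 ≤ x ∧ k = x-1 then 1 else 0) * v k
      = if x = 0 then 0 else v (x-1) := by
    by_cases h0 : x = 0
    · subst h0
      simp
    · rw [if_neg h0]
      have : ∀ k, (if 1 ≤ x ∧ k = x-1 then 1 else 0) = (if k = x-1 then (1:ℕ) else 0) := by
        intro k; split_ifs <;> omega
      rw [Finset.sum_congr rfl (fun k _ => by rw [this k])]
      exact ip_delta n (x-1) (by omega) v
    
  have d3 : ∑ k ∈ range n, (if k = x+1 then 1 else 0) * v k = v (x+1) := by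
    by_cases h : x+1 < n
    · exact ip_delta n (x+1) h v
    · rw [hv (x+1) (by omega)]
      apply Finset.sum_eq_zero
      intro k hk
      rw [if_neg (by have := mem_range.1 hk; omega)]
      simp
  rw [d1, d2, d3]
  simp only [Amap]
  have hxn : x + 1 ≤ n := by omega
  rw [if_pos hxn]

lemma look_snoc (n t : ℕ) (c' : Fin (t+1) → Fin n) (y : Fin n) (i : ℕ) :
    look (Fin.snoc c' y : Fin (t+2) → Fin n) i
      = if i = t+1 then y.val else look c' i := by
  unfold look
  by_cases h1 : i = t+1
  · subst h1
    rw [dif_pos (by omega), if_pos rfl]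
    have : (⟨t+1, by omega⟩ : Fin (t+2)) = Fin.last (t+1) := rfl
    rw [this, Fin.snoc_last]
  · rw [if_neg h1]
    by_cases h2 : i < t+1
    · rw [dif_pos (by omega), dif_pos h2]
      have : (⟨i, by omega⟩ : Fin (t+2)) = Fin.castSucc ⟨i, h2⟩ := rfl
      rw [this, Fin.snoc_castSucc]
    · rw [dif_neg (by omega), dif_neg h2]

/-- Fubini : eliminating the last vertex -/
lemma CountW_succ (n t : ℕ) (hn : 1 ≤ n) (par : ℕ → ℕ) (w : ℕ → (ℕ → ℕ))
    (hpar : ∀ i, 1 ≤ i → i ≤ t+1 → par i < i) (hsupp : Supp n (w (t+1))) :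
    CountW n (t+2) par w = CountW n (t+1) par
      (Function.update w (par (t+1)) (pmul (w (par (t+1))) (Amap n (w (t+1))))) := by
  have hP : par (t+1) ≤ t := by have := hpar (t+1) (by omega) (by omega); omega
  have key : ∀ (y : Fin n) (c' : Fin (t+1) → Fin n),
      (∏ i ∈ range (t+2), w i (look (Fin.snoc c' y : Fin (t+2) → Fin n) i)) *
      (∏ i ∈ range (t+2), if 1 ≤ i then
        (if nadj (look (Fin.snoc c' y : Fin (t+2) → Fin n) (par i))
            (look (Fin.snoc c' y : Fin (t+2) → Fin n) i) then 1 else 0) else 1)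
      = ((∏ i ∈ range (t+1), w i (look c' i)) *
         (∏ i ∈ range (t+1), if 1 ≤ i then
            (if nadj (look c' (par i)) (look c' i) then 1 else 0) else 1))
        * (w (t+1) y.val * (if nadj (look c' (par (t+1))) y.val then 1 else 0)) := by
    intro y c'
    have e1 : ∀ i ∈ range (t+1),
        w i (look (Fin.snoc c' y : Fin (t+2) → Fin n) i) = w i (look c' i) := by
      intro i hi
      rw [look_snoc, if_neg (by have := mem_range.1 hi; omega)]
    have e2 : ∀ i ∈ range (t+1),
        (if 1 ≤ i then (if nadj (look (Fin.snoc c' y : Fin (t+2) → Fin n) (par i))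
            (look (Fin.snoc c' y : Fin (t+2) → Fin n) i) then 1 else 0) else 1)
        = (if 1 ≤ i then (if nadj (look c' (par i)) (look c' i) then 1 else 0) else 1) := by
      intro i hi
      have hi' := mem_range.1 hi
      by_cases h1 : 1 ≤ i
      · have hpi : par i < i := hpar i h1 (by omega)
        rw [if_pos h1, if_pos h1, look_snoc, look_snoc,
          if_neg (by omega : ¬ i = t+1), if_neg (by omega : ¬ par i = t+1)]
      · rw [if_neg h1, if_neg h1]
    have ha : look (Fin.snoc c' y : Fin (t+2) → Fin n) (t+1) = y.val := by
      rw [look_snoc, if_pos rfl]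
    have hb : look (Fin.snoc c' y : Fin (t+2) → Fin n) (par (t+1)) = look c' (par (t+1)) := by
      rw [look_snoc, if_neg (by omega : ¬ par (t+1) = t+1)]
    rw [Finset.prod_range_succ (fun i => w i (look (Fin.snoc c' y : Fin (t+2) → Fin n) i)) (t+1),
      Finset.prod_range_succ (fun i => if 1 ≤ i then
        (if nadj (look (Fin.snoc c' y : Fin (t+2) → Fin n) (par i))
            (look (Fin.snoc c' y : Fin (t+2) → Fin n) i) then 1 else 0) else 1) (t+1),
      Finset.prod_congr rfl e1, Finset.prod_congr rfl e2, ha, hb,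
      if_pos (show (1:ℕ) ≤ t+1 by omega)]
    ring
  have step : CountW n (t+2) par w = ∑ p : Fin n × (Fin (t+1) → Fin n),
      (∏ i ∈ range (t+2), w i (look (Fin.snoc p.2 p.1 : Fin (t+2) → Fin n) i)) *
      (∏ i ∈ range (t+2), if 1 ≤ i then
        (if nadj (look (Fin.snoc p.2 p.1 : Fin (t+2) → Fin n) (par i))
            (look (Fin.snoc p.2 p.1 : Fin (t+2) → Fin n) i) then 1 else 0) else 1) := by
    unfold CountW
    rw [← Equiv.sum_comp (Fin.insertNthEquiv (fun _ => Fin n) (Fin.last (t+1)))]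
    apply Finset.sum_congr rfl
    intro p _
    have he : (Fin.insertNthEquiv (fun _ => Fin n) (Fin.last (t+1))) p
        = (Fin.snoc p.2 p.1 : Fin (t+2) → Fin n) := Fin.insertNth_last' p.1 p.2
    rw [he]
  rw [step, Fintype.sum_prod_type,
    Finset.sum_congr rfl (fun y _ => Finset.sum_congr rfl (fun c' _ => key y c')),
    Finset.sum_comm]
  unfold CountW
  apply Finset.sum_congr rfl
  intro c' _
  rw [← Finset.mul_sum]
  have hAm : ∑ y : Fin n, w (t+1) y.val * (if nadj (look c' (par (t+1))) y.val then 1 else 0)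
      = Amap n (w (t+1)) (look c' (par (t+1))) :=
    sum_nadj n _ hsupp _ (look_lt hn c' (par (t+1)))
  rw [hAm]
  have hPmem : par (t+1) ∈ range (t+1) := mem_range.2 (by omega)
  have hprod : ∏ i ∈ range (t+1),
        (Function.update w (par (t+1)) (pmul (w (par (t+1))) (Amap n (w (t+1))))) i (look c' i)
      = (∏ i ∈ range (t+1), w i (look c' i)) * Amap n (w (t+1)) (look c' (par (t+1))) := by
    rw [← Finset.mul_prod_erase _
        (fun i => (Function.update w (par (t+1)) (pmul (w (par (t+1))) (Amap n (w (t+1))))) i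
          (look c' i)) hPmem,
      ← Finset.mul_prod_erase _ (fun i => w i (look c' i)) hPmem]
    have heq : ∀ i ∈ (range (t+1)).erase (par (t+1)),
        (Function.update w (par (t+1)) (pmul (w (par (t+1))) (Amap n (w (t+1))))) i (look c' i)
        = w i (look c' i) := by
      intro i hi
      rw [Function.update_of_ne (Finset.ne_of_mem_erase hi)]
    rw [Finset.prod_congr rfl heq, Function.update_self]
    simp only [pmul_apply]
    ring
  rw [hprod]
  ring



lemma CountW_eq_vecN (n : ℕ) (hn : 1 ≤ n) : ∀ (t : ℕ) (par : ℕ → ℕ) (w : ℕ → (ℕ → ℕ)),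
    (∀ i, 1 ≤ i → i ≤ t → par i < i) →
    (∀ i, i ≤ t → Supp n (w i)) →
    CountW n (t+1) par w = cs n 0 (vecN n t par w) := by
  intro t
  induction t with
  | zero => intro par w _ _; rw [CountW_one, vecN_zero]
  | succ t ih =>
    intro par w hpar hs
    rw [CountW_succ n t hn par w hpar (hs (t+1) (le_refl _)), vecN_succ]
    apply ih
    · intro i h1 h2; exact hpar i h1 (by omega)
    · intro i hi
      by_cases hiP : i = par (t+1)
      · rw [hiP, Function.update_self]
        exact pmul_supp n _ _ (hs _ (by omega))
      · rw [Function.update_of_ne hiP]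
        exact hs i (by omega)

lemma pmul_one_supp (n : ℕ) (x : ℕ → ℕ) (hx : Supp n x) : pmul (chi n 0) x = x := by
  funext k
  by_cases h : k < n
  · show chi n 0 k * x k = x k
    rw [chi_zero_apply n k h, one_mul]
  · show chi n 0 k * x k = x k
    rw [hx k (by omega)]; ring

lemma vecN_path (n : ℕ) : ∀ (t : ℕ) (w : ℕ → (ℕ → ℕ)) (u : ℕ → ℕ),
    (∀ i, i < t → w i = chi n 0) → w t = u → Supp n u →
    vecN n t (fun i => i - 1) w = (Amap n)^[t] u := by
  intro t
  induction t with
  | zero =>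
    intro w u _ h _
    rw [vecN_zero, h]
    rfl
  | succ t ih =>
    intro w u hlow htop hsupp
    rw [vecN_succ]
    have hupd : Function.update w (t+1-1) (pmul (w (t+1-1)) (Amap n (w (t+1))))
         = Function.update w t (Amap n u) := by
      have hp : t + 1 - 1 = t := by omega
      rw [hp]
      congr 1
      rw [hlow t (by omega), htop, pmul_one_supp n _ (Amap_supp n u)]
    rw [hupd, Function.iterate_succ_apply]
    apply ih
    · intro i hi
      rw [Function.update_of_ne (by omega), hlow i (by omega)]
    · rw [Function.update_self]
    · exact Amap_supp n u

lemma vecN_path_one (n : ℕ) (t : ℕ) :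
    vecN n t (fun i => i - 1) (fun _ => chi n 0) = gvec n t :=
  vecN_path n t _ (chi n 0) (fun _ _ => rfl) rfl (chi_supp n 0)

lemma CountW_path (n : ℕ) (hn : 1 ≤ n) (t : ℕ) :
    CountW n (t+1) (fun i => i - 1) (fun _ => chi n 0) = cs n 0 (gvec n t) := by
  rw [CountW_eq_vecN n hn t _ _ (fun i h1 h2 => by omega) (fun i _ => chi_supp n 0),
    vecN_path_one]






end HLcore

/-- The number of `H`-colorings of a simple graph `G`, where the target graph `H`
is given by a (possibly reflexive) adjacency relation `HAdj` on a finite vertex set. -/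
noncomputable def homCount {VG VH : Type} [Fintype VG] [Fintype VH]
    (G : SimpleGraph VG) (HAdj : VH → VH → Prop) : ℕ :=
  Nat.card {f : VG → VH // ∀ u v : VG, G.Adj u v → HAdj (f u) (f v)}

/-- The adjacency relation of the fully looped path `P_n^∘`: consecutive vertices are
adjacent, and every vertex has a loop. -/
def loopedPathAdj (n : ℕ) : Fin n → Fin n → Prop :=
  fun i j => i = j ∨ (SimpleGraph.pathGraph n).Adj i j

namespace HLcore

open Finset
open scoped Classical

lemma looped_iff (n : ℕ) (i j : Fin n) : loopedPathAdj n i j ↔ nadj i.val j.val := by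
  unfold loopedPathAdj nadj
  rw [SimpleGraph.pathGraph_adj]
  constructor
  · rintro (rfl | h | h) <;> omega
  · intro h
    by_cases hij : i = j
    · left; exact hij
    · right
      have hne : i.val ≠ j.val := fun hh => hij (Fin.ext hh)
      omega

lemma nadj_symm {x y : ℕ} (h : nadj x y) : nadj y x := by
  unfold nadj at *; omega

lemma homCount_eq_sum {t n : ℕ} (G : SimpleGraph (Fin t)) :
    homCount G (loopedPathAdj n) = ∑ f : Fin t → Fin n,
      (if ∀ u v : Fin t, G.Adj u v → loopedPathAdj n (f u) (f v) then 1 else 0) := by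
  classical
  rw [homCount, Nat.card_eq_fintype_card, Fintype.card_subtype, Finset.card_filter]

lemma CountW_ones (n t : ℕ) (hn : 1 ≤ n) (par : ℕ → ℕ) :
    CountW n t par (fun _ => chi n 0) = ∑ c : Fin t → Fin n,
      (if ∀ i, 1 ≤ i → i < t → nadj (look c (par i)) (look c i) then 1 else 0) := by
  unfold CountW
  apply Finset.sum_congr rfl
  intro c _
  have h1 : (∏ i ∈ range t, chi n 0 (look c i)) = 1 := by
    apply Finset.prod_eq_one
    intro i _
    exact chi_zero_apply n (look c i) (look_lt hn c i)
  rw [h1, one_mul]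
  have h2 : ∀ i ∈ range t,
      (if 1 ≤ i then (if nadj (look c (par i)) (look c i) then 1 else 0) else 1)
      = (if (1 ≤ i → nadj (look c (par i)) (look c i)) then (1:ℕ) else 0) := by
    intro i _
    by_cases ha : 1 ≤ i
    · by_cases hb : nadj (look c (par i)) (look c i)
      · rw [if_pos ha, if_pos hb, if_pos (fun _ => hb)]
      · rw [if_pos ha, if_neg hb, if_neg (fun hh => hb (hh ha))]
    · rw [if_neg ha, if_pos (fun hh => absurd hh ha)]
  rw [Finset.prod_congr rfl h2, Finset.prod_boole]
  by_cases h : ∀ i, 1 ≤ i → i < t → nadj (look c (par i)) (look c i)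
  · rw [if_pos (fun i hi h1 => h i h1 (Finset.mem_range.1 hi)), if_pos h]
  · rw [if_neg (fun hc => h (fun i h1 h2 => hc i (Finset.mem_range.2 h2) h1)), if_neg h]

/-- transferring `homCount` of a tree through a parent enumeration -/
lemma homCount_eq_CountW (n t : ℕ) (hn : 1 ≤ n) (T : SimpleGraph (Fin t))
    (e : ℕ → Fin t) (par : ℕ → ℕ)
    (hbij : Function.Bijective (fun j : Fin t => e j.val))
    (hpar : ∀ i, 1 ≤ i → i < t → par i < i)
    (hadj : ∀ i, 1 ≤ i → i < t → T.Adj (e (par i)) (e i))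
    (hedge : ∀ a b : Fin t, T.Adj a b →
      ∃ i, 1 ≤ i ∧ i < t ∧ ((e (par i) = a ∧ e i = b) ∨ (e (par i) = b ∧ e i = a))) :
    homCount T (loopedPathAdj n) = CountW n t par (fun _ => chi n 0) := by
  classical
  rw [homCount_eq_sum, CountW_ones n t hn par]
  set E : Fin t ≃ Fin t := Equiv.ofBijective _ hbij with hE
  have hEapp : ∀ j : Fin t, E j = e j.val := fun j => rfl
  set Φ : (Fin t → Fin n) ≃ (Fin t → Fin n) := Equiv.arrowCongr E.symm (Equiv.refl (Fin n))
    with hΦ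
  have hΦapp : ∀ (f : Fin t → Fin n) (j : Fin t), Φ f j = f (E j) := by
    intro f j
    simp [hΦ, Equiv.arrowCongr]
  rw [← Equiv.sum_comp Φ (fun c => if ∀ i, 1 ≤ i → i < t →
      nadj (look c (par i)) (look c i) then (1:ℕ) else 0)]
  apply Finset.sum_congr rfl
  intro f _
  have hlook : ∀ i (h : i < t), look (Φ f) i = (f (e i)).val := by
    intro i h
    rw [look_in (Φ f) i h, hΦapp f ⟨i, h⟩, hEapp]
  have hiff : (∀ u v : Fin t, T.Adj u v → loopedPathAdj n (f u) (f v)) ↔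
      (∀ i, 1 ≤ i → i < t → nadj (look (Φ f) (par i)) (look (Φ f) i)) := by
    constructor
    · intro h i h1 h2
      rw [hlook i h2, hlook (par i) (by have := hpar i h1 h2; omega)]
      exact (looped_iff n _ _).1 (h _ _ (hadj i h1 h2))
    · intro h u v huv
      obtain ⟨i, h1, h2, hcase⟩ := hedge u v huv
      have hni := h i h1 h2
      rw [hlook i h2, hlook (par i) (by have := hpar i h1 h2; omega)] at hni
      rcases hcase with ⟨ha, hb⟩ | ⟨ha, hb⟩
      · rw [← ha, ← hb]
        exact (looped_iff n _ _).2 hni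
      · rw [← ha, ← hb]
        exact (looped_iff n _ _).2 (nadj_symm hni)
  by_cases h : ∀ u v : Fin t, T.Adj u v → loopedPathAdj n (f u) (f v)
  · rw [if_pos h, if_pos (hiff.1 h)]
  · rw [if_neg h, if_neg (fun hc => h (hiff.2 hc))]


/-! ### enumeration of connected graphs -/

lemma walk_cross {V : Type} (G : SimpleGraph V) (S : Set V) :
    ∀ {a b : V} (_ : G.Walk a b), a ∈ S → b ∉ S →
      ∃ u v', G.Adj u v' ∧ u ∈ S ∧ v' ∉ S := by
  intro a b w
  induction w with
  | nil => intro h1 h2; exact absurd h1 h2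
  | @cons u x b h p ih =>
    intro h1 h2
    by_cases hx : x ∈ S
    · exact ih hx h2
    · exact ⟨u, x, h, h1, hx⟩

lemma tree_enum (t : ℕ) (ht : 1 ≤ t) (T : SimpleGraph (Fin t)) (hconn : T.Connected)
    (r : Fin t) :
    ∃ (e : ℕ → Fin t) (par : ℕ → ℕ),
      e 0 = r ∧
      (∀ i j, i < t → j < t → e i = e j → i = j) ∧
      (∀ i, 1 ≤ i → i < t → par i < i) ∧
      (∀ i, 1 ≤ i → i < t → T.Adj (e (par i)) (e i)) := by
  classical
  have claim : ∀ k, 1 ≤ k → k ≤ t → ∃ (e : ℕ → Fin t) (par : ℕ → ℕ),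
      e 0 = r ∧
      (∀ i j, i < k → j < k → e i = e j → i = j) ∧
      (∀ i, 1 ≤ i → i < k → par i < i) ∧
      (∀ i, 1 ≤ i → i < k → T.Adj (e (par i)) (e i)) := by
    intro k
    induction k with
    | zero => omega
    | succ k ih =>
      intro _ hk1
      by_cases hk : k = 0
      · subst hk
        exact ⟨fun _ => r, id, rfl, fun i j hi hj _ => by omega,
          fun i h1 h2 => by omega, fun i h1 h2 => by omega⟩
      · obtain ⟨e, par, he0, hinj, hpar, hadj⟩ := ih (by omega) (by omega)
        -- the set of already-listed vertices
        set S : Set (Fin t) := {x | ∃ j, j < k ∧ e j = x} with hS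
        have hrS : r ∈ S := ⟨0, by omega, he0⟩
        have hex : ∃ b, b ∉ S := by
          by_contra hall
          push_neg at hall
          have hι : ∀ x : Fin t, ∃ j, j < k ∧ e j = x := hall
          choose ι hι1 hι2 using hι
          have hinjι : Function.Injective (fun x : Fin t => (⟨ι x, hι1 x⟩ : Fin k)) := by
            intro x y hxy
            have : ι x = ι y := by simpa using hxy
            rw [← hι2 x, ← hι2 y, this]
          have := Fintype.card_le_of_injective _ hinjι
          simp only [Fintype.card_fin] at this
          omega
        obtain ⟨b, hb⟩ := hex
        obtain ⟨w⟩ := hconn r b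
        obtain ⟨u, v', huv, huS, hv'S⟩ := walk_cross T S w hrS hb
        obtain ⟨j, hj, hej⟩ := huS
        refine ⟨Function.update e k v', Function.update par k j, ?_, ?_, ?_, ?_⟩
        · rw [Function.update_of_ne (by omega)]; exact he0
        · intro i i' hi hi' heq
          by_cases hik : i = k <;> by_cases hik' : i' = k
          · omega
          · exfalso
            rw [hik, Function.update_self, Function.update_of_ne hik'] at heq
            exact hv'S ⟨i', by omega, heq.symm⟩
          · exfalso
            rw [hik', Function.update_self, Function.update_of_ne hik] at heq
            exact hv'S ⟨i, by omega, heq⟩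
          · rw [Function.update_of_ne hik, Function.update_of_ne hik'] at heq
            exact hinj i i' (by omega) (by omega) heq
        · intro i h1 h2
          by_cases hik : i = k
          · rw [hik, Function.update_self]; omega
          · rw [Function.update_of_ne hik]
            exact hpar i h1 (by omega)
        · intro i h1 h2
          by_cases hik : i = k
          · subst hik
            rw [Function.update_self, Function.update_self,
              Function.update_of_ne (by omega : ¬ j = i)]
            rw [hej]
            exact huv
          · have hi : i < k := by omega
            have hpi := hpar i h1 hi
            rw [Function.update_of_ne hik, Function.update_of_ne hik,
              Function.update_of_ne (by omega : ¬ par i = k)]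
            exact hadj i h1 hi
  exact claim t ht (le_refl t)

/-! ### edge completeness via cardinality -/

lemma tree_edges (t : ℕ) (T : SimpleGraph (Fin t)) (htree : T.IsTree)
    (e : ℕ → Fin t) (par : ℕ → ℕ)
    (hinj : ∀ i j, i < t → j < t → e i = e j → i = j)
    (hpar : ∀ i, 1 ≤ i → i < t → par i < i)
    (hadj : ∀ i, 1 ≤ i → i < t → T.Adj (e (par i)) (e i)) :
    ∀ a b : Fin t, T.Adj a b →
      ∃ i, 1 ≤ i ∧ i < t ∧ ((e (par i) = a ∧ e i = b) ∨ (e (par i) = b ∧ e i = a)) := by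
  classical
  have hcard : T.edgeFinset.card + 1 = t := by
    have := htree.card_edgeFinset
    simpa using this
  have hsub : (Finset.Ico 1 t).image (fun i => s(e (par i), e i)) ⊆ T.edgeFinset := by
    intro x hx
    obtain ⟨i, hi, rfl⟩ := Finset.mem_image.1 hx
    obtain ⟨hi1, hi2⟩ := Finset.mem_Ico.1 hi
    rw [SimpleGraph.mem_edgeFinset, SimpleGraph.mem_edgeSet]
    exact hadj i hi1 hi2
  have hinjOn : Set.InjOn (fun i => s(e (par i), e i)) (Finset.Ico 1 t) := by
    intro i hi j hj hij
    obtain ⟨hi1, hi2⟩ := Finset.mem_Ico.1 (Finset.mem_coe.1 hi)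
    obtain ⟨hj1, hj2⟩ := Finset.mem_Ico.1 (Finset.mem_coe.1 hj)
    simp only [Sym2.eq_iff] at hij
    rcases hij with ⟨h1, h2⟩ | ⟨h1, h2⟩
    · exact hinj i j hi2 hj2 h2
    · have hpi := hpar i hi1 hi2
      have hpj := hpar j hj1 hj2
      have e1 : par i = j := hinj (par i) j (by omega) hj2 h1
      have e2 : i = par j := hinj i (par j) hi2 (by omega) h2
      omega
  have hcardim : ((Finset.Ico 1 t).image (fun i => s(e (par i), e i))).card = t - 1 := by
    rw [Finset.card_image_of_injOn hinjOn, Nat.card_Ico]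
  have heq : (Finset.Ico 1 t).image (fun i => s(e (par i), e i)) = T.edgeFinset :=
    Finset.eq_of_subset_of_card_le hsub (by omega)
  intro a b hab
  have hmem : s(a, b) ∈ (Finset.Ico 1 t).image (fun i => s(e (par i), e i)) := by
    rw [heq, SimpleGraph.mem_edgeFinset, SimpleGraph.mem_edgeSet]
    exact hab
  obtain ⟨i, hi, hphi⟩ := Finset.mem_image.1 hmem
  obtain ⟨hi1, hi2⟩ := Finset.mem_Ico.1 hi
  refine ⟨i, hi1, hi2, ?_⟩
  rw [Sym2.eq_iff] at hphi
  tauto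

/-! ### existence of a leaf -/

lemma exists_leaf (t : ℕ) (ht : 2 ≤ t) (T : SimpleGraph (Fin t)) (htree : T.IsTree) :
    ∃ r : Fin t, T.degree r = 1 := by
  classical
  have hconn := htree.isConnected
  have hdeg1 : ∀ v : Fin t, 1 ≤ T.degree v := by
    intro v
    obtain ⟨u, hu⟩ := Fintype.exists_ne_of_one_lt_card (by simp; omega) v
    obtain ⟨w⟩ := hconn v u
    cases w with
    | nil => exact absurd rfl hu.symm
    | cons h p =>
      have : 0 < T.degree v := by
        rw [SimpleGraph.degree_pos_iff_exists_adj]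
        exact ⟨_, h⟩
      omega
  by_contra hno
  push_neg at hno
  have h2 : ∀ v : Fin t, 2 ≤ T.degree v := by
    intro v
    have ha := hdeg1 v
    have hb := hno v
    omega
  have hsum := T.sum_degrees_eq_twice_card_edges
  have hcard : T.edgeFinset.card + 1 = t := by simpa using htree.card_edgeFinset
  have hge : 2 * t ≤ ∑ v : Fin t, T.degree v := by
    calc 2 * t = ∑ _v : Fin t, 2 := by
          rw [Finset.sum_const, Finset.card_univ, Fintype.card_fin, smul_eq_mul]; ring
    _ ≤ _ := Finset.sum_le_sum (fun v _ => h2 v)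
  omega

/-! ### root has few children when rooted at a leaf -/

lemma kids_root_le (n t : ℕ) (ht : 1 ≤ t) (T : SimpleGraph (Fin t))
    (e : ℕ → Fin t) (par : ℕ → ℕ) (r : Fin t) (he0 : e 0 = r)
    (hinj : ∀ i j, i < t → j < t → e i = e j → i = j)
    (hadj : ∀ i, 1 ≤ i → i < t → T.Adj (e (par i)) (e i)) :
    kids (t-1) par 0 ≤ T.degree r := by
  classical
  have hrange : range ((t-1)+1) = range t := by congr 1; omega
  unfold kids
  rw [hrange]
  rw [SimpleGraph.degree]
  apply Finset.card_le_card_of_injOn (fun i => e i)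
  · intro i hi
    obtain ⟨hi0, hpi⟩ := (Finset.mem_filter.1 hi).2
    have hit := mem_range.1 (Finset.mem_filter.1 hi).1
    rw [Finset.mem_coe, SimpleGraph.mem_neighborFinset, ← he0, ← hpi]
    exact hadj i hi0 hit
  · intro i hi j hj hij
    have hit := mem_range.1 (Finset.mem_filter.1 (Finset.mem_coe.1 hi)).1
    have hjt := mem_range.1 (Finset.mem_filter.1 (Finset.mem_coe.1 hj)).1
    exact hinj i j hit hjt hij

/-! ### forcing the path shape -/

lemma force_pred (t : ℕ) (par : ℕ → ℕ)
    (hpar : ∀ i, 1 ≤ i → i < t → par i < i)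
    (hfib : ∀ i j, 1 ≤ i → i < t → 1 ≤ j → j < t → par i = par j → i = j) :
    ∀ i, 1 ≤ i → i < t → par i = i - 1 := by
  intro i
  induction i using Nat.strong_induction_on with
  | _ i ih =>
    intro h1 h2
    have hlt := hpar i h1 h2
    by_contra hne
    have hle : par i < i - 1 := by omega
    have hm := ih (par i + 1) (by omega) (by omega) (by omega)
    have := hfib (par i + 1) i (by omega) (by omega) h1 h2 (by omega)
    omega

lemma kids_le_one_fib (t : ℕ) (par : ℕ → ℕ)
    (hpar : ∀ i, 1 ≤ i → i < t → par i < i)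
    (hk : ∀ z, z ≤ t - 1 → kids (t-1) par z ≤ 1) :
    ∀ i j, 1 ≤ i → i < t → 1 ≤ j → j < t → par i = par j → i = j := by
  intro i j hi1 hi2 hj1 hj2 hij
  by_contra hne
  have hz : par i ≤ t - 1 := by have := hpar i hi1 hi2; omega
  have hcard := hk (par i) hz
  unfold kids at hcard
  have hrange : range ((t-1)+1) = range t := by congr 1; omega
  rw [hrange] at hcard
  have hiF : i ∈ (range t).filter (fun m => 1 ≤ m ∧ par m = par i) :=
    Finset.mem_filter.2 ⟨mem_range.2 hi2, hi1, rfl⟩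
  have hjF : j ∈ (range t).filter (fun m => 1 ≤ m ∧ par m = par i) :=
    Finset.mem_filter.2 ⟨mem_range.2 hj2, hj1, hij.symm⟩
  have := Finset.card_le_one.1 hcard i hiF j hjF
  omega

/-! ### iso with the path graph -/

lemma iso_of_pred (t : ℕ) (T : SimpleGraph (Fin t)) (e : ℕ → Fin t)
    (hbij : Function.Bijective (fun j : Fin t => e j.val))
    (hadj : ∀ i, 1 ≤ i → i < t → T.Adj (e (i-1)) (e i))
    (hedge : ∀ a b : Fin t, T.Adj a b →
      ∃ i, 1 ≤ i ∧ i < t ∧ ((e (i-1) = a ∧ e i = b) ∨ (e (i-1) = b ∧ e i = a))) :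
    Nonempty (T ≃g SimpleGraph.pathGraph t) := by
  have hinj : ∀ i j, i < t → j < t → e i = e j → i = j := by
    intro i j hi hj h
    have := hbij.injective (a₁ := ⟨i, hi⟩) (a₂ := ⟨j, hj⟩) h
    exact Fin.mk.inj_iff.1 this
  have hchar : ∀ u v : Fin t, T.Adj (e u.val) (e v.val) ↔ (SimpleGraph.pathGraph t).Adj u v := by
    intro u v
    rw [SimpleGraph.pathGraph_adj]
    constructor
    · intro h
      obtain ⟨i, h1, h2, hc⟩ := hedge _ _ h
      rcases hc with ⟨ha, hb⟩ | ⟨ha, hb⟩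
      · have e1 := hinj (i-1) u.val (by omega) u.isLt ha
        have e2 := hinj i v.val h2 v.isLt hb
        omega
      · have e1 := hinj (i-1) v.val (by omega) v.isLt ha
        have e2 := hinj i u.val h2 u.isLt hb
        omega
    · rintro (h | h)
      · have hv := hadj v.val (by omega) v.isLt
        rw [show v.val - 1 = u.val by omega] at hv
        exact hv
      · have hu := hadj u.val (by omega) u.isLt
        rw [show u.val - 1 = v.val by omega] at hu
        exact hu.symm
  refine ⟨⟨(Equiv.ofBijective _ hbij).symm, @fun a b => ?_⟩⟩
  have ha : e (((Equiv.ofBijective _ hbij).symm a).val) = a :=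
    (Equiv.ofBijective _ hbij).apply_symm_apply a
  have hb : e (((Equiv.ofBijective _ hbij).symm b).val) = b :=
    (Equiv.ofBijective _ hbij).apply_symm_apply b
  conv_rhs => rw [← ha, ← hb]
  exact (hchar _ _).symm


/-! ### counting colourings of the path graph -/

lemma path_count (n t : ℕ) (hn : 1 ≤ n) (ht : 1 ≤ t) :
    homCount (SimpleGraph.pathGraph t) (loopedPathAdj n) = cs n 0 (gvec n (t-1)) := by
  set e : ℕ → Fin t := fun i => if h : i < t then ⟨i, h⟩ else ⟨0, by omega⟩ with he
  have heval : ∀ i, i < t → (e i).val = i := by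
    intro i hi; simp only [he]; rw [dif_pos hi]
  have hbij : Function.Bijective (fun j : Fin t => e j.val) := by
    apply Finite.injective_iff_bijective.1
    intro a b hab
    apply Fin.ext
    have h := congrArg Fin.val hab
    rwa [heval _ a.isLt, heval _ b.isLt] at h
  have hpar : ∀ i, 1 ≤ i → i < t → (fun i => i - 1) i < i := fun i h1 _ => by
    show i - 1 < i; omega
  have hadj : ∀ i, 1 ≤ i → i < t → (SimpleGraph.pathGraph t).Adj (e (i-1)) (e i) := by
    intro i h1 h2
    rw [SimpleGraph.pathGraph_adj]
    left
    rw [heval _ (by omega), heval _ h2]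
    omega
  have hedge : ∀ a b : Fin t, (SimpleGraph.pathGraph t).Adj a b →
      ∃ i, 1 ≤ i ∧ i < t ∧ ((e (i-1) = a ∧ e i = b) ∨ (e (i-1) = b ∧ e i = a)) := by
    intro a b hab
    rw [SimpleGraph.pathGraph_adj] at hab
    rcases hab with h | h
    · refine ⟨b.val, by omega, b.isLt, Or.inl ⟨?_, ?_⟩⟩
      · apply Fin.ext; rw [heval _ (by omega)]; omega
      · apply Fin.ext; rw [heval _ b.isLt]
    · refine ⟨a.val, by omega, a.isLt, Or.inr ⟨?_, ?_⟩⟩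
      · apply Fin.ext; rw [heval _ (by omega)]; omega
      · apply Fin.ext; rw [heval _ a.isLt]
  rw [homCount_eq_CountW n t hn _ e (fun i => i - 1) hbij hpar hadj hedge]
  obtain ⟨m, rfl⟩ : ∃ m, t = m + 1 := ⟨t - 1, by omega⟩
  exact CountW_path n hn m

/-! ### degenerate targets -/

lemma homCount_eq_of_small (n : ℕ) (hn1 : 1 ≤ n) (hn2 : n ≤ 2) {t : ℕ}
    (G G' : SimpleGraph (Fin t)) :
    homCount G (loopedPathAdj n) = homCount G' (loopedPathAdj n) := by
  have hall : ∀ i j : Fin n, loopedPathAdj n i j := by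
    intro i j
    rw [looped_iff]
    have hi := i.isLt
    have hj := j.isLt
    unfold nadj
    omega
  rw [homCount_eq_sum, homCount_eq_sum]
  apply Finset.sum_congr rfl
  intro f _
  rw [if_pos (fun u v _ => hall _ _), if_pos (fun u v _ => hall _ _)]

lemma iso_one (T : SimpleGraph (Fin 1)) : Nonempty (T ≃g SimpleGraph.pathGraph 1) := by
  refine ⟨⟨Equiv.refl _, @fun a b => ?_⟩⟩
  have h1 : ¬ T.Adj a b := fun h => T.ne_of_adj h (Subsingleton.elim a b)
  have h2 : ¬ (SimpleGraph.pathGraph 1).Adj a b := fun h =>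
    (SimpleGraph.pathGraph 1).ne_of_adj h (Subsingleton.elim a b)
  exact iff_of_false h2 h1

/-! ### the tree side -/

lemma tree_ge (n : ℕ) (hn : 3 ≤ n) (t : ℕ) (ht : 1 ≤ t) (T : SimpleGraph (Fin t))
    (htree : T.IsTree) (r : Fin t) :
    cs n 0 (gvec n (t-1)) ≤ homCount T (loopedPathAdj n) ∧
    ((T.degree r = 1 ∧ ¬ Nonempty (T ≃g SimpleGraph.pathGraph t)) →
      cs n 0 (gvec n (t-1)) < homCount T (loopedPathAdj n)) := by
  obtain ⟨e, par, he0, hinj, hpar, hadj⟩ := tree_enum t ht T htree.isConnected r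
  have hedge := tree_edges t T htree e par hinj hpar hadj
  have hbij : Function.Bijective (fun j : Fin t => e j.val) := by
    apply Finite.injective_iff_bijective.1
    intro a b hab
    exact Fin.ext (hinj a.val b.val a.isLt b.isLt hab)
  have hcount : homCount T (loopedPathAdj n) = CountW n t par (fun _ => chi n 0) :=
    homCount_eq_CountW n t (by omega) T e par hbij hpar hadj hedge
  obtain ⟨m, rfl⟩ : ∃ m, t = m + 1 := ⟨t - 1, by omega⟩
  have hparm : ∀ i, 1 ≤ i → i ≤ m → par i < i := fun i h1 h2 => hpar i h1 (by omega)
  have hCV : CountW n (m+1) par (fun _ => chi n 0) = cs n 0 (vecN n m par (fun _ => chi n 0)) :=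
    CountW_eq_vecN n (by omega) m par _ hparm (fun i _ => chi_supp n 0)
  have hmain := main n hn m par (fun _ => chi n 0) (fun _ => 0) hparm
      (fun i _ => cone_one n)
      (fun i _ => by show 1 ≤ chi n 0 0; rw [chi_zero_apply n 0 (by omega)])
      (fun i _ => dom_refl n _)
  have hzero : (m + ∑ i ∈ range (m+1), (fun _ => (0:ℕ)) i) = m := by simp
  rw [hzero] at hmain
  constructor
  · rw [hcount, hCV]
    exact hmain.1 0
  · rintro ⟨hdeg, hniso⟩
    rw [hcount, hCV]
    by_cases hbr : ∃ z, 1 ≤ z ∧ z ≤ m ∧ 2 ≤ kids m par z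
    · obtain ⟨z, hz1, hz2, hz3⟩ := hbr
      apply hmain.2
      right
      exact ⟨z, hz1, hz2, Or.inr (Or.inr (by simpa using hz3))⟩
    · exfalso
      push_neg at hbr
      have hk : ∀ z, z ≤ m → kids m par z ≤ 1 := by
        intro z hz
        by_cases hz0 : z = 0
        · subst hz0
          have hle := kids_root_le n (m+1) (by omega) T e par r he0 hinj hadj
          rw [hdeg] at hle
          exact hle
        · have := hbr z (by omega) hz
          omega
      have hfib := kids_le_one_fib (m+1) par hpar hk
      have hforce := force_pred (m+1) par hpar hfib
      have hadj' : ∀ i, 1 ≤ i → i < m+1 → T.Adj (e (i-1)) (e i) := by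
        intro i h1 h2
        have h := hadj i h1 h2
        rwa [hforce i h1 h2] at h
      have hedge' : ∀ a b : Fin (m+1), T.Adj a b →
          ∃ i, 1 ≤ i ∧ i < m+1 ∧ ((e (i-1) = a ∧ e i = b) ∨ (e (i-1) = b ∧ e i = a)) := by
        intro a b hab
        obtain ⟨i, h1, h2, hc⟩ := hedge a b hab
        exact ⟨i, h1, h2, by rwa [hforce i h1 h2] at hc⟩
      exact hniso (iso_of_pred (m+1) T e hbij hadj' hedge')

end HLcore

/-- **Theorem.** For every `n ≥ 1`, the fully looped path `P_n^∘` is Hoffman-London, and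
for every `n ≥ 3` it is strongly Hoffman-London. -/
theorem looped_path_hoffman_london (n : ℕ) (hn : 1 ≤ n) :
    (∀ t : ℕ, 1 ≤ t → ∀ T : SimpleGraph (Fin t), T.IsTree →
      homCount (SimpleGraph.pathGraph t) (loopedPathAdj n) ≤
        homCount T (loopedPathAdj n)) ∧
    (3 ≤ n → ∀ t : ℕ, 1 ≤ t → ∀ T : SimpleGraph (Fin t), T.IsTree →
      ¬ Nonempty (T ≃g SimpleGraph.pathGraph t) →
      homCount (SimpleGraph.pathGraph t) (loopedPathAdj n) <
        homCount T (loopedPathAdj n)) := by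
  constructor
  · intro t ht T htree
    by_cases hn3 : 3 ≤ n
    · have h1 := HLcore.path_count n t (by omega) ht
      have h2 := (HLcore.tree_ge n hn3 t ht T htree ⟨0, by omega⟩).1
      omega
    · exact le_of_eq (HLcore.homCount_eq_of_small n hn (by omega) _ _)
  · intro hn3 t ht T htree hniso
    by_cases ht1 : t = 1
    · subst ht1
      exact absurd (HLcore.iso_one T) hniso
    · obtain ⟨r, hdeg⟩ := HLcore.exists_leaf t (by omega) T htree
      have h1 := HLcore.path_count n t (by omega) ht
      have h2 := (HLcore.tree_ge n hn3 t ht T htree r).2 ⟨hdeg, hniso⟩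
      omega
end

section
/- Let H be a target graph possessing an ordering of its automorphic similarity classes whose automorphic similarity matrix has the increasing columns property, and let H̃ be obtained from H by adding some number b ≥ 1 of looped dominating vertices (new looped vertices each adjacent to every other vertex of H̃). Then H̃ is Hoffman-London. -/
/-- The graph obtained from `H` by adding `b` looped dominating vertices: each new vertex
is looped and adjacent to every other vertex (old and new). -/
def addLoopedDominating {VH : Type} (HAdj : VH → VH → Prop) (b : ℕ) :
    (VH ⊕ Fin b) → (VH ⊕ Fin b) → Prop
  | Sum.inl u, Sum.inl v => HAdj u v
  | _, _ => True

set_option linter.unusedSectionVars false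
set_option maxHeartbeats 1000000

namespace HL
open Finset
open scoped Classical

variable {VH : Type} [Fintype VH] {k b : ℕ}

def iotaW (cls : VH → Fin k) (b : ℕ) : VH ⊕ Fin b → ℕ
  | Sum.inl v => (cls v).val
  | Sum.inr _ => k

lemma iota_le (cls : VH → Fin k) (z : VH ⊕ Fin b) : iotaW cls b z ≤ k := by
  cases z with
  | inl v => exact (cls v).isLt.le
  | inr j => exact le_rfl

lemma adjW_symm (HAdj : VH → VH → Prop) (hsymm : Symmetric HAdj) (z w : VH ⊕ Fin b) :
    addLoopedDominating HAdj b z w ↔ addLoopedDominating HAdj b w z := by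
  cases z <;> cases w <;> simp [addLoopedDominating] <;>
    exact ⟨fun h => hsymm h, fun h => hsymm h⟩

noncomputable def Asum (HAdj : VH → VH → Prop) (b : ℕ) (g : VH ⊕ Fin b → ℕ)
    (z : VH ⊕ Fin b) : ℕ :=
  ∑ w : VH ⊕ Fin b, if addLoopedDominating HAdj b z w then g w else 0

noncomputable def topsum (cls : VH → Fin k) (b : ℕ) (c : ℕ) (g : VH ⊕ Fin b → ℕ) : ℕ :=
  ∑ z : VH ⊕ Fin b, if c ≤ iotaW cls b z then g z else 0

def MCF (cls : VH → Fin k) (b : ℕ) (g : VH ⊕ Fin b → ℕ) : Prop :=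
  ∀ z z', iotaW cls b z ≤ iotaW cls b z' → g z ≤ g z'

def Dom (cls : VH → Fin k) (b : ℕ) (u v : VH ⊕ Fin b → ℕ) : Prop :=
  ∀ c : ℕ, topsum cls b c v ≤ topsum cls b c u

lemma dom_refl (cls : VH → Fin k) (u : VH ⊕ Fin b → ℕ) : Dom cls b u u := fun _ => le_rfl

lemma mcf_mul {cls : VH → Fin k} {g h : VH ⊕ Fin b → ℕ} (hg : MCF cls b g)
    (hh : MCF cls b h) : MCF cls b (fun z => g z * h z) :=
  fun z z' hz => Nat.mul_le_mul (hg z z' hz) (hh z z' hz)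

lemma mcf_itetop {cls : VH → Fin k} {g : VH ⊕ Fin b → ℕ} (hg : MCF cls b g) (γ : ℕ) :
    MCF cls b (fun z => if γ ≤ iotaW cls b z then g z else 0) := by
  intro z z' hz
  dsimp only
  by_cases h : γ ≤ iotaW cls b z
  · rw [if_pos h, if_pos (h.trans hz)]; exact hg z z' hz
  · simp [h]

lemma mcf_const (cls : VH → Fin k) (a : ℕ) : MCF cls b (fun _ => a) := fun _ _ _ => le_rfl

/-- Decomposition of a monotone class function into tail indicators. -/
lemma exists_delta {cls : VH → Fin k} {g : VH ⊕ Fin b → ℕ} (hg : MCF cls b g) :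
    ∃ δ : ℕ → ℕ, ∀ z, g z = ∑ c ∈ range (k + 1), if c ≤ iotaW cls b z then δ c else 0 := by
  set gh : ℕ → ℕ := fun c => (univ.filter (fun z : VH ⊕ Fin b => iotaW cls b z ≤ c)).sup g
    with hgh
  have ghz : ∀ z, gh (iotaW cls b z) = g z := by
    intro z
    apply le_antisymm
    · exact Finset.sup_le fun z' hz' => hg z' z (by simpa using (Finset.mem_filter.mp hz').2)
    · exact Finset.le_sup (by simp)
  have ghmono : Monotone gh := by
    intro c c' hc
    apply Finset.sup_mono
    intro z hz
    simp only [Finset.mem_filter, Finset.mem_univ, true_and] at *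
    omega
  set δ : ℕ → ℕ := fun c => match c with
    | 0 => gh 0
    | (c + 1) => gh (c + 1) - gh c with hδ
  have hsum : ∀ m : ℕ, ∑ c ∈ range (m + 1), δ c = gh m := by
    intro m
    induction m with
    | zero => simp [hδ]
    | succ m ih =>
        rw [Finset.sum_range_succ, ih]
        have : gh m ≤ gh (m + 1) := ghmono (Nat.le_succ m)
        simp only [hδ]
        omega
  refine ⟨δ, fun z => ?_⟩
  have h1 : (range (k + 1)).filter (fun c => c ≤ iotaW cls b z) = range (iotaW cls b z + 1) := by
    ext c
    simp only [Finset.mem_filter, Finset.mem_range]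
    have := iota_le cls (b := b) z
    omega
  rw [← Finset.sum_filter, h1, hsum, ghz]

lemma dom_mul_le {cls : VH → Fin k} {g u v : VH ⊕ Fin b → ℕ} (hg : MCF cls b g)
    (huv : Dom cls b u v) : ∑ z, g z * v z ≤ ∑ z, g z * u z := by
  obtain ⟨δ, hδ⟩ := exists_delta hg
  have key : ∀ w : VH ⊕ Fin b → ℕ,
      ∑ z, g z * w z = ∑ c ∈ range (k + 1), δ c * topsum cls b c w := by
    intro w
    calc ∑ z, g z * w z
        = ∑ z, ∑ c ∈ range (k + 1), (if c ≤ iotaW cls b z then δ c * w z else 0) := by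
          refine Finset.sum_congr rfl fun z _ => ?_
          rw [hδ z, Finset.sum_mul]
          refine Finset.sum_congr rfl fun c _ => ?_
          split <;> simp
      _ = ∑ c ∈ range (k + 1), ∑ z, (if c ≤ iotaW cls b z then δ c * w z else 0) :=
          Finset.sum_comm
      _ = ∑ c ∈ range (k + 1), δ c * topsum cls b c w := by
          refine Finset.sum_congr rfl fun c _ => ?_
          rw [topsum, Finset.mul_sum]
          refine Finset.sum_congr rfl fun z _ => ?_
          split <;> simp
  rw [key u, key v]
  exact Finset.sum_le_sum fun c _ => Nat.mul_le_mul_left _ (huv c)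

noncomputable def tcount (HAdj : VH → VH → Prop) (cls : VH → Fin k) (b : ℕ) (c : ℕ)
    (z : VH ⊕ Fin b) : ℕ :=
  ∑ w : VH ⊕ Fin b, if addLoopedDominating HAdj b z w ∧ c ≤ iotaW cls b w then 1 else 0

lemma topsum_Asum {HAdj : VH → VH → Prop} (hsymm : Symmetric HAdj) (cls : VH → Fin k)
    (c : ℕ) (u : VH ⊕ Fin b → ℕ) :
    topsum cls b c (Asum HAdj b u) = ∑ w, tcount HAdj cls b c w * u w := by
  unfold topsum Asum tcount
  calc ∑ z, (if c ≤ iotaW cls b z then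
          ∑ w, (if addLoopedDominating HAdj b z w then u w else 0) else 0)
      = ∑ z, ∑ w, (if addLoopedDominating HAdj b z w ∧ c ≤ iotaW cls b z then u w else 0) := by
        refine Finset.sum_congr rfl fun z _ => ?_
        by_cases h : c ≤ iotaW cls b z
        · rw [if_pos h]; exact Finset.sum_congr rfl fun w _ => by simp [h]
        · rw [if_neg h]; exact (Finset.sum_eq_zero fun w _ => if_neg (fun hh => h hh.2)).symm
    _ = ∑ w, ∑ z, (if addLoopedDominating HAdj b z w ∧ c ≤ iotaW cls b z then u w else 0) :=
        Finset.sum_comm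
    _ = ∑ w, (∑ z, (if addLoopedDominating HAdj b w z ∧ c ≤ iotaW cls b z then 1 else 0)) * u w := by
        refine Finset.sum_congr rfl fun w _ => ?_
        rw [Finset.sum_mul]
        refine Finset.sum_congr rfl fun z _ => ?_
        rw [show addLoopedDominating HAdj b z w ↔ addLoopedDominating HAdj b w z from
          adjW_symm HAdj hsymm z w]
        split <;> simp

lemma tcount_inr (HAdj : VH → VH → Prop) (cls : VH → Fin k) (c : ℕ) (j : Fin b) :
    tcount HAdj cls b c (Sum.inr j) = ∑ w, if c ≤ iotaW cls b w then 1 else 0 := by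
  unfold tcount
  refine Finset.sum_congr rfl fun w _ => ?_
  have : addLoopedDominating HAdj b (Sum.inr j) w := by cases w <;> trivial
  simp [this]

lemma tcount_le_inr (HAdj : VH → VH → Prop) (cls : VH → Fin k) (c : ℕ)
    (z : VH ⊕ Fin b) (j : Fin b) :
    tcount HAdj cls b c z ≤ tcount HAdj cls b c (Sum.inr j) := by
  rw [tcount_inr]
  unfold tcount
  refine Finset.sum_le_sum fun w _ => ?_
  by_cases h : addLoopedDominating HAdj b z w ∧ c ≤ iotaW cls b w
  · rw [if_pos h, if_pos h.2]
  · rw [if_neg h]; exact Nat.zero_le _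

lemma tcount_zero (HAdj : VH → VH → Prop) (cls : VH → Fin k) {c : ℕ} (hc : k < c)
    (z : VH ⊕ Fin b) : tcount HAdj cls b c z = 0 := by
  unfold tcount
  refine Finset.sum_eq_zero fun w _ => ?_
  have := iota_le cls (b := b) w
  rw [if_neg]
  rintro ⟨-, h⟩
  omega

lemma nat_card_subtype {α : Type} [Fintype α] (p : α → Prop) :
    Nat.card {x // p x} = ∑ x : α, if p x then 1 else 0 := by
  classical
  rw [Nat.card_eq_fintype_card, Fintype.card_subtype, Finset.card_filter]

lemma card_nbr (HAdj : VH → VH → Prop) (cls : VH → Fin k) (m : Fin k → Fin k → ℕ)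
    (hm : ∀ (i j : Fin k) (v : VH), cls v = i →
      Nat.card {w : VH // HAdj v w ∧ cls w = j} = m i j) (v : VH) (j : Fin k) :
    ∑ u : VH, (if HAdj v u ∧ cls u = j then 1 else 0) = m (cls v) j := by
  rw [← hm (cls v) j v rfl, nat_card_subtype]
  exact Finset.sum_congr rfl fun x _ => by by_cases h : HAdj v x ∧ cls x = j <;> simp [h]

lemma tcount_inl (HAdj : VH → VH → Prop) (cls : VH → Fin k) (m : Fin k → Fin k → ℕ)
    (hm : ∀ (i j : Fin k) (v : VH), cls v = i →
      Nat.card {w : VH // HAdj v w ∧ cls w = j} = m i j)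
    {c : ℕ} (hc : c ≤ k) (v : VH) :
    tcount HAdj cls b c (Sum.inl v)
      = (∑ j : Fin k, if c ≤ (j : ℕ) then m (cls v) j else 0) + b := by
  unfold tcount
  rw [Fintype.sum_sum_type]
  have h2 : (∑ j : Fin b, if addLoopedDominating HAdj b (Sum.inl v) (Sum.inr j)
      ∧ c ≤ iotaW cls b (Sum.inr j) then 1 else 0) = b := by
    have hadj : ∀ j : Fin b, addLoopedDominating HAdj b (Sum.inl v) (Sum.inr j) :=
      fun j => trivial
    simp [iotaW, hadj, hc]
  rw [h2]
  congr 1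
  have hswap : ∑ j : Fin k, (if c ≤ (j : ℕ) then m (cls v) j else 0)
      = ∑ u : VH, ∑ j : Fin k, (if c ≤ (j : ℕ) ∧ HAdj v u ∧ cls u = j then 1 else 0) := by
    rw [Finset.sum_comm]
    refine Finset.sum_congr rfl fun j _ => ?_
    by_cases hcj : c ≤ (j : ℕ)
    · rw [if_pos hcj, ← card_nbr HAdj cls m hm v j]
      refine Finset.sum_congr rfl fun u _ => ?_
      by_cases h : HAdj v u ∧ cls u = j
      · rw [if_pos h, if_pos ⟨hcj, h⟩]
      · rw [if_neg h, if_neg (fun hh => h ⟨hh.2.1, hh.2.2⟩)]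
    · rw [if_neg hcj]
      exact (Finset.sum_eq_zero fun u _ => if_neg (fun hh => hcj hh.1)).symm
  rw [hswap]
  refine Finset.sum_congr rfl fun u _ => ?_
  have hpt : ∀ j : Fin k, (if c ≤ (j : ℕ) ∧ HAdj v u ∧ cls u = j then 1 else 0)
      = if j = cls u then (if HAdj v u ∧ c ≤ ((cls u) : ℕ) then (1:ℕ) else 0) else 0 := by
    intro j
    by_cases hj : j = cls u
    · subst hj
      by_cases h : HAdj v u ∧ c ≤ ((cls u) : ℕ)
      · rw [if_pos ⟨h.2, h.1, rfl⟩, if_pos rfl, if_pos h]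
      · rw [if_neg (fun hh => h ⟨hh.2.1, hh.1⟩), if_pos rfl, if_neg h]
    · rw [if_neg (fun hh => hj hh.2.2.symm), if_neg hj]
  rw [show addLoopedDominating HAdj b (Sum.inl v) (Sum.inl u) = HAdj v u from rfl]
  rw [Finset.sum_congr rfl (fun j _ => hpt j), Finset.sum_ite_eq' Finset.univ (cls u)]
  simp [iotaW]
  exact if_congr Iff.rfl rfl rfl

lemma row_mono (m : Fin k → Fin k → ℕ)
    (hinc : ∀ (c i : Fin k) (hi : i.val + 1 < k),
      ∑ j : Fin k, (if c ≤ j then m i j else 0) ≤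
      ∑ j : Fin k, (if c ≤ j then m ⟨i.val + 1, hi⟩ j else 0))
    {c : ℕ} (hc : c ≤ k) (i i' : Fin k) (hii : (i : ℕ) ≤ (i' : ℕ)) :
    ∑ j : Fin k, (if c ≤ (j : ℕ) then m i j else 0)
      ≤ ∑ j : Fin k, (if c ≤ (j : ℕ) then m i' j else 0) := by
  rcases Nat.eq_or_lt_of_le hc with hck | hck
  · -- c = k : all terms vanish
    have hz : ∀ i'' : Fin k, ∑ j : Fin k, (if c ≤ (j : ℕ) then m i'' j else 0) = 0 := by
      intro i''
      refine Finset.sum_eq_zero fun j _ => if_neg (fun h => ?_)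
      have := j.isLt; omega
    rw [hz i, hz i']
  · -- c < k
    have key : ∀ (d : ℕ) (a : Fin k), (ha : (a : ℕ) + d < k) →
        ∑ j : Fin k, (if c ≤ (j : ℕ) then m a j else 0)
          ≤ ∑ j : Fin k, (if c ≤ (j : ℕ) then m ⟨(a : ℕ) + d, ha⟩ j else 0) := by
      intro d
      induction d with
      | zero =>
          intro a ha
          have : (⟨(a : ℕ) + 0, ha⟩ : Fin k) = a := by ext; simp
          rw [this]
      | succ d ih =>
          intro a ha
          have ha' : (a : ℕ) + d < k := by omega
          refine (ih a ha').trans ?_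
          have step := hinc ⟨c, hck⟩ ⟨(a : ℕ) + d, ha'⟩ (by omega : ((a:ℕ)+d) + 1 < k)
          have hcast : ∀ (x : Fin k) (mm : Fin k → ℕ),
              (∑ j : Fin k, if (⟨c, hck⟩ : Fin k) ≤ j then mm j else 0)
                = ∑ j : Fin k, if c ≤ (j : ℕ) then mm j else 0 := by
            intro x mm
            refine Finset.sum_congr rfl fun j _ => ?_
            by_cases h : c ≤ (j : ℕ)
            · rw [if_pos (show (⟨c, hck⟩ : Fin k) ≤ j from h), if_pos h]
            · rw [if_neg (show ¬((⟨c, hck⟩ : Fin k) ≤ j) from h), if_neg h]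
          rw [hcast i (m ⟨(a:ℕ)+d, ha'⟩), hcast i (m ⟨(a:ℕ)+d+1, _⟩)] at step
      
          have : (⟨(a : ℕ) + (d + 1), ha⟩ : Fin k) = ⟨(a : ℕ) + d + 1, by omega⟩ := by
            ext; simp; omega
          rw [this]
          exact step
    have hd : (i' : ℕ) = (i : ℕ) + ((i' : ℕ) - (i : ℕ)) := by omega
    have := key ((i' : ℕ) - (i : ℕ)) i (by omega)
    have hi' : (⟨(i : ℕ) + ((i' : ℕ) - (i : ℕ)), by omega⟩ : Fin k) = i' := by ext; simp; omega
    rwa [hi'] at this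

lemma tcount_mcf (HAdj : VH → VH → Prop) (cls : VH → Fin k) (m : Fin k → Fin k → ℕ)
    (hm : ∀ (i j : Fin k) (v : VH), cls v = i →
      Nat.card {w : VH // HAdj v w ∧ cls w = j} = m i j)
    (hinc : ∀ (c i : Fin k) (hi : i.val + 1 < k),
      ∑ j : Fin k, (if c ≤ j then m i j else 0) ≤
      ∑ j : Fin k, (if c ≤ j then m ⟨i.val + 1, hi⟩ j else 0))
    (c : ℕ) : MCF cls b (tcount HAdj cls b c) := by
  intro z z' hz
  by_cases hc : c ≤ k
  swap
  · rw [tcount_zero HAdj cls (by omega) z, tcount_zero HAdj cls (by omega) z']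
  cases z' with
  | inr j => exact tcount_le_inr HAdj cls c z j
  | inl v' =>
    cases z with
    | inr j =>
        exfalso
        have h1 : iotaW cls b (Sum.inr j : VH ⊕ Fin b) = k := rfl
        have h2 : iotaW cls b (Sum.inl v' : VH ⊕ Fin b) = (cls v' : ℕ) := rfl
        rw [h1, h2] at hz
        have := (cls v').isLt
        omega
    | inl v =>
        rw [tcount_inl HAdj cls m hm hc v, tcount_inl HAdj cls m hm hc v']
        have : (cls v : ℕ) ≤ (cls v' : ℕ) := hz
        exact Nat.add_le_add_right (row_mono m hinc hc (cls v) (cls v') this) b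

lemma mcf_Asum {HAdj : VH → VH → Prop} {cls : VH → Fin k} (m : Fin k → Fin k → ℕ)
    (hm : ∀ (i j : Fin k) (v : VH), cls v = i →
      Nat.card {w : VH // HAdj v w ∧ cls w = j} = m i j)
    (hinc : ∀ (c i : Fin k) (hi : i.val + 1 < k),
      ∑ j : Fin k, (if c ≤ j then m i j else 0) ≤
      ∑ j : Fin k, (if c ≤ j then m ⟨i.val + 1, hi⟩ j else 0))
    {g : VH ⊕ Fin b → ℕ} (hg : MCF cls b g) : MCF cls b (Asum HAdj b g) := by
  obtain ⟨δ, hδ⟩ := exists_delta hg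
  have key : ∀ z, Asum HAdj b g z
      = ∑ c ∈ range (k + 1), δ c * tcount HAdj cls b c z := by
    intro z
    unfold Asum tcount
    calc ∑ w, (if addLoopedDominating HAdj b z w then g w else 0)
        = ∑ w, ∑ c ∈ range (k + 1),
            (if addLoopedDominating HAdj b z w ∧ c ≤ iotaW cls b w then δ c else 0) := by
          refine Finset.sum_congr rfl fun w _ => ?_
          by_cases h : addLoopedDominating HAdj b z w
          · rw [if_pos h, hδ w]
            exact Finset.sum_congr rfl fun c _ => by
              by_cases h2 : c ≤ iotaW cls b w
              · rw [if_pos h2, if_pos ⟨h, h2⟩]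
              · rw [if_neg h2, if_neg (fun hh => h2 hh.2)]
          · rw [if_neg h]
            exact (Finset.sum_eq_zero fun c _ => if_neg (fun hh => h hh.1)).symm
      _ = ∑ c ∈ range (k + 1), ∑ w,
            (if addLoopedDominating HAdj b z w ∧ c ≤ iotaW cls b w then δ c else 0) :=
          Finset.sum_comm
      _ = ∑ c ∈ range (k + 1), δ c *
            ∑ w, (if addLoopedDominating HAdj b z w ∧ c ≤ iotaW cls b w then 1 else 0) := by
          refine Finset.sum_congr rfl fun c _ => ?_
          rw [Finset.mul_sum]
          exact Finset.sum_congr rfl fun w _ => by split <;> simp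
  intro z z' hz
  rw [key z, key z']
  exact Finset.sum_le_sum fun c _ =>
    Nat.mul_le_mul_left _ (tcount_mcf HAdj cls m hm hinc c z z' hz)

lemma dom_Asum {HAdj : VH → VH → Prop} (hsymm : Symmetric HAdj) {cls : VH → Fin k}
    (m : Fin k → Fin k → ℕ)
    (hm : ∀ (i j : Fin k) (v : VH), cls v = i →
      Nat.card {w : VH // HAdj v w ∧ cls w = j} = m i j)
    (hinc : ∀ (c i : Fin k) (hi : i.val + 1 < k),
      ∑ j : Fin k, (if c ≤ j then m i j else 0) ≤
      ∑ j : Fin k, (if c ≤ j then m ⟨i.val + 1, hi⟩ j else 0))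
    {u v : VH ⊕ Fin b → ℕ} (h : Dom cls b u v) :
    Dom cls b (Asum HAdj b u) (Asum HAdj b v) := by
  intro c
  rw [topsum_Asum hsymm cls c u, topsum_Asum hsymm cls c v]
  exact dom_mul_le (tcount_mcf HAdj cls m hm hinc c) h

noncomputable def pvec (HAdj : VH → VH → Prop) (b : ℕ) : ℕ → (VH ⊕ Fin b → ℕ)
  | 0 => fun _ => 1
  | (m + 1) => Asum HAdj b (pvec HAdj b m)

lemma mcf_pvec (HAdj : VH → VH → Prop) (cls : VH → Fin k) (m : Fin k → Fin k → ℕ)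
    (hm : ∀ (i j : Fin k) (v : VH), cls v = i →
      Nat.card {w : VH // HAdj v w ∧ cls w = j} = m i j)
    (hinc : ∀ (c i : Fin k) (hi : i.val + 1 < k),
      ∑ j : Fin k, (if c ≤ j then m i j else 0) ≤
      ∑ j : Fin k, (if c ≤ j then m ⟨i.val + 1, hi⟩ j else 0))
    (s : ℕ) : MCF cls b (pvec HAdj b s) := by
  induction s with
  | zero => exact mcf_const cls 1
  | succ s ih => exact mcf_Asum m hm hinc ih

noncomputable def Rmat (HAdj : VH → VH → Prop) (b : ℕ) : ℕ → (VH ⊕ Fin b) → (VH ⊕ Fin b) → ℕ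
  | 0 => fun z w => if z = w then 1 else 0
  | (m + 1) => fun z w => ∑ y, if addLoopedDominating HAdj b z y then Rmat HAdj b m y w else 0

lemma Rmat_succ_right (HAdj : VH → VH → Prop) (m : ℕ) (z w : VH ⊕ Fin b) :
    Rmat HAdj b (m + 1) z w = ∑ y, if addLoopedDominating HAdj b y w then Rmat HAdj b m z y else 0 := by
  induction m generalizing z w with
  | zero =>
      have hL : Rmat HAdj b (0+1) z w = (if addLoopedDominating HAdj b z w then 1 else 0) := by
        show (∑ y, if addLoopedDominating HAdj b z y then (if y = w then 1 else 0) else 0) = _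
        rw [Finset.sum_congr rfl (fun y _ => show
          (if addLoopedDominating HAdj b z y then (if y = w then 1 else 0) else 0)
            = if y = w then (if addLoopedDominating HAdj b z y then 1 else 0) else 0 from by
              split <;> split <;> simp_all)]
        rw [Finset.sum_ite_eq' Finset.univ w]
        simp
      have hR : (∑ y : VH ⊕ Fin b, if addLoopedDominating HAdj b y w then Rmat HAdj b 0 z y else 0)
          = (if addLoopedDominating HAdj b z w then 1 else 0) := by
        rw [Finset.sum_congr rfl (fun y _ => show
          (if addLoopedDominating HAdj b y w then Rmat HAdj b 0 z y else 0)
            = if z = y then (if addLoopedDominating HAdj b y w then 1 else 0) else 0 from by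
              show (if addLoopedDominating HAdj b y w then (if z = y then 1 else 0) else 0) = _
              split <;> split <;> simp_all)]
        rw [Finset.sum_ite_eq Finset.univ z]
        simp
      rw [hR]
      exact hL
  | succ m ih =>
      show (∑ y, if addLoopedDominating HAdj b z y then Rmat HAdj b (m+1) y w else 0) = _
      calc (∑ y, if addLoopedDominating HAdj b z y then Rmat HAdj b (m+1) y w else 0)
          = ∑ y, if addLoopedDominating HAdj b z y then
              (∑ x, if addLoopedDominating HAdj b x w then Rmat HAdj b m y x else 0) else 0 := by
            exact Finset.sum_congr rfl fun y _ => by rw [ih]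
        _ = ∑ y, ∑ x, if addLoopedDominating HAdj b x w ∧ addLoopedDominating HAdj b z y then
              Rmat HAdj b m y x else 0 := by
            refine Finset.sum_congr rfl fun y _ => ?_
            by_cases h : addLoopedDominating HAdj b z y
            · rw [if_pos h]
              exact Finset.sum_congr rfl fun x _ => by
                by_cases h2 : addLoopedDominating HAdj b x w
                · rw [if_pos h2, if_pos ⟨h2, h⟩]
                · rw [if_neg h2, if_neg (fun hh => h2 hh.1)]
            · rw [if_neg h]
              exact (Finset.sum_eq_zero fun x _ => if_neg (fun hh => h hh.2)).symm
        _ = ∑ x, ∑ y, if addLoopedDominating HAdj b x w ∧ addLoopedDominating HAdj b z y then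
              Rmat HAdj b m y x else 0 := Finset.sum_comm
        _ = ∑ x, if addLoopedDominating HAdj b x w then Rmat HAdj b (m+1) z x else 0 := by
            refine Finset.sum_congr rfl fun x _ => ?_
            by_cases h2 : addLoopedDominating HAdj b x w
            · rw [if_pos h2]
              show _ = ∑ y, if addLoopedDominating HAdj b z y then Rmat HAdj b m y x else 0
              exact Finset.sum_congr rfl fun y _ => by
                by_cases h : addLoopedDominating HAdj b z y
                · rw [if_pos ⟨h2, h⟩, if_pos h]
                · rw [if_neg (fun hh => h hh.2), if_neg h]
            · rw [if_neg h2]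
              exact Finset.sum_eq_zero fun y _ => if_neg (fun hh => h2 hh.1)

lemma Rmat_symm {HAdj : VH → VH → Prop} (hsymm : Symmetric HAdj) (m : ℕ)
    (z w : VH ⊕ Fin b) : Rmat HAdj b m z w = Rmat HAdj b m w z := by
  induction m generalizing z w with
  | zero =>
      show (if z = w then (1:ℕ) else 0) = if w = z then 1 else 0
      by_cases h : z = w
      · rw [if_pos h, if_pos h.symm]
      · rw [if_neg h, if_neg (fun hh => h hh.symm)]
  | succ m ih =>
      rw [Rmat_succ_right HAdj m w z]
      show (∑ y, if addLoopedDominating HAdj b z y then Rmat HAdj b m y w else 0) = _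
      refine Finset.sum_congr rfl fun y _ => ?_
      rw [ih y w]
      by_cases h : addLoopedDominating HAdj b z y
      · rw [if_pos h, if_pos ((adjW_symm HAdj hsymm z y).mp h)]
      · rw [if_neg h, if_neg (fun hh => h ((adjW_symm HAdj hsymm y z).mp hh))]

lemma pvec_eq_R (HAdj : VH → VH → Prop) (m : ℕ) (z : VH ⊕ Fin b) :
    pvec HAdj b m z = ∑ w, Rmat HAdj b m z w := by
  induction m generalizing z with
  | zero => show (1:ℕ) = ∑ w, (if z = w then 1 else 0); rw [Finset.sum_ite_eq Finset.univ z]; simp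
  | succ m ih =>
      show Asum HAdj b (pvec HAdj b m) z = _
      unfold Asum
      calc ∑ y, (if addLoopedDominating HAdj b z y then pvec HAdj b m y else 0)
          = ∑ y, ∑ w, (if addLoopedDominating HAdj b z y then Rmat HAdj b m y w else 0) := by
            refine Finset.sum_congr rfl fun y _ => ?_
            by_cases h : addLoopedDominating HAdj b z y
            · rw [if_pos h, ih y]; exact Finset.sum_congr rfl fun w _ => (if_pos h).symm
            · rw [if_neg h]; exact (Finset.sum_eq_zero fun w _ => if_neg h).symm
        _ = ∑ w, ∑ y, (if addLoopedDominating HAdj b z y then Rmat HAdj b m y w else 0) :=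
            Finset.sum_comm
        _ = ∑ w, Rmat HAdj b (m+1) z w := rfl

lemma pvec_comp (HAdj : VH → VH → Prop) (s t : ℕ) (z : VH ⊕ Fin b) :
    pvec HAdj b (s + t) z = ∑ w, Rmat HAdj b s z w * pvec HAdj b t w := by
  induction s generalizing z with
  | zero =>
      rw [Nat.zero_add]
      rw [Finset.sum_congr rfl (fun w _ => show Rmat HAdj b 0 z w * pvec HAdj b t w
        = if z = w then pvec HAdj b t w else 0 from by
          show (if z = w then 1 else 0) * _ = _
          split <;> simp)]
      rw [Finset.sum_ite_eq Finset.univ z]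
      simp
  | succ s ih =>
      have hst : s + 1 + t = (s + t) + 1 := by omega
      rw [hst]
      show Asum HAdj b (pvec HAdj b (s + t)) z = _
      unfold Asum
      calc ∑ y, (if addLoopedDominating HAdj b z y then pvec HAdj b (s+t) y else 0)
          = ∑ y, ∑ w, (if addLoopedDominating HAdj b z y then
              Rmat HAdj b s y w * pvec HAdj b t w else 0) := by
            refine Finset.sum_congr rfl fun y _ => ?_
            by_cases h : addLoopedDominating HAdj b z y
            · rw [if_pos h, ih y]; exact Finset.sum_congr rfl fun w _ => (if_pos h).symm
            · rw [if_neg h]; exact (Finset.sum_eq_zero fun w _ => if_neg h).symm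
        _ = ∑ w, ∑ y, (if addLoopedDominating HAdj b z y then
              Rmat HAdj b s y w * pvec HAdj b t w else 0) := Finset.sum_comm
        _ = ∑ w, Rmat HAdj b (s+1) z w * pvec HAdj b t w := by
            refine Finset.sum_congr rfl fun w _ => ?_
            show _ = (∑ y, if addLoopedDominating HAdj b z y then Rmat HAdj b s y w else 0) * _
            rw [Finset.sum_mul]
            exact Finset.sum_congr rfl fun y _ => by split <;> simp

noncomputable def DW (HAdj : VH → VH → Prop) (cls : VH → Fin k) (b : ℕ) (s : ℕ)
    (a c : ℕ) : ℕ :=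
  ∑ z : VH ⊕ Fin b, ∑ w : VH ⊕ Fin b,
    if a ≤ iotaW cls b z ∧ c ≤ iotaW cls b w then Rmat HAdj b s z w else 0

lemma DW_symm {HAdj : VH → VH → Prop} (hsymm : Symmetric HAdj) (cls : VH → Fin k)
    (s a c : ℕ) : DW HAdj cls b s a c = DW HAdj cls b s c a := by
  unfold DW
  rw [Finset.sum_comm]
  refine Finset.sum_congr rfl fun x _ => Finset.sum_congr rfl fun y _ => ?_
  rw [Rmat_symm hsymm s y x]
  by_cases h : c ≤ iotaW cls b x ∧ a ≤ iotaW cls b y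
  · rw [if_pos ⟨h.2, h.1⟩, if_pos h]
  · rw [if_neg (fun hh => h ⟨hh.2, hh.1⟩), if_neg h]

lemma DW_le (HAdj : VH → VH → Prop) (cls : VH → Fin k) (s a c : ℕ) :
    DW HAdj cls b s a c ≤ DW HAdj cls b s a 0 := by
  unfold DW
  refine Finset.sum_le_sum fun z _ => Finset.sum_le_sum fun w _ => ?_
  by_cases h : a ≤ iotaW cls b z ∧ c ≤ iotaW cls b w
  · rw [if_pos h, if_pos ⟨h.1, Nat.zero_le _⟩]
  · rw [if_neg h]; exact Nat.zero_le _

/-- The key combinatorial inequality: walks with both endpoints restricted are at most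
walks with one endpoint restricted to the larger class threshold. -/
lemma DW_key {HAdj : VH → VH → Prop} (hsymm : Symmetric HAdj) (cls : VH → Fin k)
    (s a c : ℕ) : DW HAdj cls b s a c ≤ DW HAdj cls b s (max a c) 0 := by
  rcases le_total a c with h | h
  · rw [max_eq_right h]
    calc DW HAdj cls b s a c = DW HAdj cls b s c a := DW_symm hsymm cls s a c
      _ ≤ DW HAdj cls b s c 0 := DW_le HAdj cls s c a
  · rw [max_eq_left h]
    exact DW_le HAdj cls s a c

lemma path_prod {HAdj : VH → VH → Prop} (hsymm : Symmetric HAdj) {cls : VH → Fin k}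
    (m : Fin k → Fin k → ℕ)
    (hm : ∀ (i j : Fin k) (v : VH), cls v = i →
      Nat.card {w : VH // HAdj v w ∧ cls w = j} = m i j)
    (hinc : ∀ (c i : Fin k) (hi : i.val + 1 < k),
      ∑ j : Fin k, (if c ≤ j then m i j else 0) ≤
      ∑ j : Fin k, (if c ≤ j then m ⟨i.val + 1, hi⟩ j else 0))
    (γ s t : ℕ) :
    topsum cls b γ (pvec HAdj b (s + t))
      ≤ topsum cls b γ (fun z => pvec HAdj b s z * pvec HAdj b t z) := by
  set q : VH ⊕ Fin b → ℕ :=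
    fun w => ∑ z, if γ ≤ iotaW cls b z then Rmat HAdj b s z w else 0 with hq
  set u : VH ⊕ Fin b → ℕ :=
    fun w => if γ ≤ iotaW cls b w then pvec HAdj b s w else 0 with hu
  have step1 : topsum cls b γ (pvec HAdj b (s + t)) = ∑ w, pvec HAdj b t w * q w := by
    unfold topsum
    calc ∑ z, (if γ ≤ iotaW cls b z then pvec HAdj b (s+t) z else 0)
        = ∑ z, ∑ w, (if γ ≤ iotaW cls b z then Rmat HAdj b s z w * pvec HAdj b t w else 0) := by
          refine Finset.sum_congr rfl fun z _ => ?_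
          by_cases h : γ ≤ iotaW cls b z
          · rw [if_pos h, pvec_comp HAdj s t z]
            exact Finset.sum_congr rfl fun w _ => (if_pos h).symm
          · rw [if_neg h]; exact (Finset.sum_eq_zero fun w _ => if_neg h).symm
      _ = ∑ w, ∑ z, (if γ ≤ iotaW cls b z then Rmat HAdj b s z w * pvec HAdj b t w else 0) :=
          Finset.sum_comm
      _ = ∑ w, pvec HAdj b t w * q w := by
          refine Finset.sum_congr rfl fun w _ => ?_
          rw [hq]
          dsimp only
          rw [Finset.mul_sum]
          exact Finset.sum_congr rfl fun z _ => by split <;> ring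
  have step2 : Dom cls b u q := by
    intro c
    have hql : topsum cls b c q = DW HAdj cls b s γ c := by
      unfold topsum DW
      calc ∑ w, (if c ≤ iotaW cls b w then q w else 0)
          = ∑ w, ∑ z, (if γ ≤ iotaW cls b z ∧ c ≤ iotaW cls b w
              then Rmat HAdj b s z w else 0) := by
            refine Finset.sum_congr rfl fun w _ => ?_
            by_cases h : c ≤ iotaW cls b w
            · rw [if_pos h, hq]
              dsimp only
              refine Finset.sum_congr rfl fun z _ => ?_
              by_cases h2 : γ ≤ iotaW cls b z
              · rw [if_pos h2, if_pos ⟨h2, h⟩]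
              · rw [if_neg h2, if_neg (fun hh => h2 hh.1)]
            · rw [if_neg h]
              exact (Finset.sum_eq_zero fun z _ => if_neg (fun hh => h hh.2)).symm
        _ = DW HAdj cls b s γ c := Finset.sum_comm
    have hqu : topsum cls b c u = DW HAdj cls b s (max γ c) 0 := by
      unfold topsum DW
      calc ∑ w, (if c ≤ iotaW cls b w then u w else 0)
          = ∑ z, (if max γ c ≤ iotaW cls b z then pvec HAdj b s z else 0) := by
            refine Finset.sum_congr rfl fun w _ => ?_
            rw [hu]
            dsimp only
            by_cases h : c ≤ iotaW cls b w <;> by_cases h2 : γ ≤ iotaW cls b w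
            · rw [if_pos h, if_pos h2, if_pos (by omega : max γ c ≤ iotaW cls b w)]
            · rw [if_pos h, if_neg h2, if_neg (by omega : ¬ max γ c ≤ iotaW cls b w)]
            · rw [if_neg h, if_neg (by omega : ¬ max γ c ≤ iotaW cls b w)]
            · rw [if_neg h, if_neg (by omega : ¬ max γ c ≤ iotaW cls b w)]
        _ = ∑ z, ∑ w, (if max γ c ≤ iotaW cls b z ∧ 0 ≤ iotaW cls b w
              then Rmat HAdj b s z w else 0) := by
            refine Finset.sum_congr rfl fun z _ => ?_
            by_cases h : max γ c ≤ iotaW cls b z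
            · rw [if_pos h, pvec_eq_R]
              exact Finset.sum_congr rfl fun w _ => (if_pos ⟨h, Nat.zero_le _⟩).symm
            · rw [if_neg h]
              exact (Finset.sum_eq_zero fun w _ => if_neg (fun hh => h hh.1)).symm
    rw [hql, hqu]
    exact DW_key hsymm cls s γ c
  rw [step1]
  have hfin := dom_mul_le (g := pvec HAdj b t) (mcf_pvec HAdj cls m hm hinc t) step2
  refine hfin.trans (le_of_eq ?_)
  unfold topsum
  refine Finset.sum_congr rfl fun w _ => ?_
  rw [hu]
  dsimp only
  by_cases h : γ ≤ iotaW cls b w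
  · rw [if_pos h, if_pos h]
    ring
  · rw [if_neg h, if_neg h]
    ring

lemma dom_mul {HAdj : VH → VH → Prop} (hsymm : Symmetric HAdj) {cls : VH → Fin k}
    (m : Fin k → Fin k → ℕ)
    (hm : ∀ (i j : Fin k) (v : VH), cls v = i →
      Nat.card {w : VH // HAdj v w ∧ cls w = j} = m i j)
    (hinc : ∀ (c i : Fin k) (hi : i.val + 1 < k),
      ∑ j : Fin k, (if c ≤ j then m i j else 0) ≤
      ∑ j : Fin k, (if c ≤ j then m ⟨i.val + 1, hi⟩ j else 0))
    {g₁ g₂ : VH ⊕ Fin b → ℕ} {a₁ a₂ : ℕ}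
    (hg₁ : MCF cls b g₁) (hg₂ : MCF cls b g₂)
    (hd₁ : Dom cls b g₁ (pvec HAdj b a₁)) (hd₂ : Dom cls b g₂ (pvec HAdj b a₂)) :
    Dom cls b (fun z => g₁ z * g₂ z) (pvec HAdj b (a₁ + a₂)) := by
  intro γ
  have e1 : topsum cls b γ (fun z => pvec HAdj b a₁ z * pvec HAdj b a₂ z)
      = ∑ z, (if γ ≤ iotaW cls b z then pvec HAdj b a₁ z else 0) * pvec HAdj b a₂ z := by
    unfold topsum
    refine Finset.sum_congr rfl fun z _ => ?_
    split <;> simp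
  have e2 : ∑ z, (if γ ≤ iotaW cls b z then pvec HAdj b a₁ z else 0) * g₂ z
      = ∑ z, (if γ ≤ iotaW cls b z then g₂ z else 0) * pvec HAdj b a₁ z := by
    refine Finset.sum_congr rfl fun z _ => ?_
    split <;> ring
  have e3 : ∑ z, (if γ ≤ iotaW cls b z then g₂ z else 0) * g₁ z
      = topsum cls b γ (fun z => g₁ z * g₂ z) := by
    unfold topsum
    refine Finset.sum_congr rfl fun z _ => ?_
    split
    · ring
    · simp
  calc topsum cls b γ (pvec HAdj b (a₁ + a₂))
      ≤ topsum cls b γ (fun z => pvec HAdj b a₁ z * pvec HAdj b a₂ z) :=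
        path_prod hsymm m hm hinc γ a₁ a₂
    _ = ∑ z, (if γ ≤ iotaW cls b z then pvec HAdj b a₁ z else 0) * pvec HAdj b a₂ z := e1
    _ ≤ ∑ z, (if γ ≤ iotaW cls b z then pvec HAdj b a₁ z else 0) * g₂ z :=
        dom_mul_le (mcf_itetop (mcf_pvec HAdj cls m hm hinc a₁) γ) hd₂
    _ = ∑ z, (if γ ≤ iotaW cls b z then g₂ z else 0) * pvec HAdj b a₁ z := e2
    _ ≤ ∑ z, (if γ ≤ iotaW cls b z then g₂ z else 0) * g₁ z :=
        dom_mul_le (mcf_itetop hg₂ γ) hd₁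
    _ = topsum cls b γ (fun z => g₁ z * g₂ z) := e3

lemma dom_total {cls : VH → Fin k} {u v : VH ⊕ Fin b → ℕ} (h : Dom cls b u v) :
    ∑ z, v z ≤ ∑ z, u z := by
  have h0 := h 0
  unfold topsum at h0
  simpa using h0

/-! ### Graph side -/

lemma card_fiber {α β : Type} [Fintype α] [Fintype β] (Q : (α → β) → Prop)
    (φ : (α → β) → β) :
    Nat.card {f : α → β // Q f} = ∑ w : β, Nat.card {f : α → β // Q f ∧ φ f = w} := by
  classical
  rw [nat_card_subtype]
  rw [Finset.sum_congr rfl (fun w _ => nat_card_subtype (fun f : α → β => Q f ∧ φ f = w))]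
  rw [Finset.sum_comm]
  refine Finset.sum_congr rfl fun f _ => ?_
  by_cases h : Q f
  · rw [if_pos h]
    simp [h]
  · rw [if_neg h]
    exact (Finset.sum_eq_zero fun w _ => if_neg (fun hh => h hh.1)).symm

noncomputable def cnt (HAdj : VH → VH → Prop) (b : ℕ) {V : Type} (T : SimpleGraph V)
    (r : V) (x : VH ⊕ Fin b) : ℕ :=
  Nat.card {f : V → VH ⊕ Fin b //
    (∀ u v : V, T.Adj u v → addLoopedDominating HAdj b (f u) (f v)) ∧ f r = x}

lemma reach_cover {V : Type} {T : SimpleGraph V} {r c : V} (hconn : T.Preconnected)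
    (v : V) : (T.deleteEdges {s(r,c)}).Reachable r v ∨
      (T.deleteEdges {s(r,c)}).Reachable c v := by
  suffices H : ∀ (x y : V) (_ : T.Walk x y),
      ((T.deleteEdges {s(r,c)}).Reachable r x ∨ (T.deleteEdges {s(r,c)}).Reachable c x) →
      ((T.deleteEdges {s(r,c)}).Reachable r y ∨ (T.deleteEdges {s(r,c)}).Reachable c y) by
    obtain ⟨w⟩ := hconn r v
    exact H r v w (Or.inl (SimpleGraph.Reachable.refl r))
  intro x y w
  induction w with
  | nil => exact id
  | @cons a d e h p ih =>
      intro hx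
      apply ih
      by_cases he : s(a, d) = (s(r, c) : Sym2 V)
      · rcases Sym2.eq_iff.mp he with ⟨rfl, rfl⟩ | ⟨rfl, rfl⟩
        · exact Or.inr (SimpleGraph.Reachable.refl _)
        · exact Or.inl (SimpleGraph.Reachable.refl _)
      · have hadj : (T.deleteEdges {s(r,c)}).Adj a d := by
          rw [SimpleGraph.deleteEdges_adj]
          exact ⟨h, by simpa using he⟩
        rcases hx with hx | hx
        · exact Or.inl (hx.trans hadj.reachable)
        · exact Or.inr (hx.trans hadj.reachable)

lemma not_reach_of_tree {V : Type} {T : SimpleGraph V} (hT : T.IsTree) {r c : V}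
    (hadj : T.Adj r c) : ¬ (T.deleteEdges {s(r,c)}).Reachable r c := by
  have hb := (SimpleGraph.isAcyclic_iff_forall_adj_isBridge.mp hT.IsAcyclic) hadj
  rw [SimpleGraph.isBridge_iff] at hb
  exact hb

lemma walk_in_induce {V : Type} {G G' : SimpleGraph V}
    (hle : ∀ {a b' : V}, G'.Adj a b' → G.Adj a b')
    {S : Set V} (hclosed : ∀ {z y : V}, z ∈ S → G'.Adj z y → y ∈ S)
    {a bb : V} (w : G'.Walk a bb) (ha : a ∈ S) :
    ∃ hb : bb ∈ S, (G.induce S).Reachable ⟨a, ha⟩ ⟨bb, hb⟩ := by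
  induction w with
  | nil => exact ⟨ha, SimpleGraph.Reachable.refl _⟩
  | @cons u d e h p ih =>
      have hd : d ∈ S := hclosed ha h
      obtain ⟨hb, hr⟩ := ih hd
      refine ⟨hb, SimpleGraph.Reachable.trans ?_ hr⟩
      exact SimpleGraph.Adj.reachable
        (show (G.induce S).Adj ⟨u, ha⟩ ⟨d, hd⟩ from hle h)

lemma acyclic_induce {V : Type} {G : SimpleGraph V} (hG : G.IsAcyclic) (S : Set V) :
    (G.induce S).IsAcyclic := by
  intro x p hp
  exact hG (p.map (SimpleGraph.Embedding.induce (G := G) S).toHom)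
    ((SimpleGraph.Walk.map_isCycle_iff_of_injective
      (SimpleGraph.Embedding.induce (G := G) S).injective).mpr hp)

lemma split_data {V : Type} (T : SimpleGraph V) (hT : T.IsTree) {r c : V}
    (hadj : T.Adj r c) :
    ∃ S : Set V, r ∈ S ∧ c ∈ Sᶜ ∧
      (∀ u v : V, T.Adj u v →
        ((u ∈ S ∧ v ∈ S) ∨ (u ∈ Sᶜ ∧ v ∈ Sᶜ) ∨ (u = r ∧ v = c) ∨ (u = c ∧ v = r))) ∧
      (T.induce S).IsTree ∧ (T.induce Sᶜ).IsTree := by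
  classical
  set T' := T.deleteEdges {s(r,c)} with hT'
  set S : Set V := {v | T'.Reachable r v} with hSdef
  have hrS : r ∈ S := SimpleGraph.Reachable.refl r
  have hcS : c ∈ Sᶜ := fun hcs => not_reach_of_tree hT hadj hcs
  have hle : ∀ {a b' : V}, T'.Adj a b' → T.Adj a b' := fun h =>
    (SimpleGraph.deleteEdges_adj.mp h).1
  have hcover : ∀ v : V, v ∈ Sᶜ → T'.Reachable c v := by
    intro v hv
    rcases reach_cover (r := r) (c := c) hT.isConnected.preconnected v with h | h
    · exact absurd h hv
    · exact h
  have hSclosed : ∀ {z y : V}, z ∈ S → T'.Adj z y → y ∈ S :=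
    fun hz hzy => SimpleGraph.Reachable.trans hz hzy.reachable
  have hCclosed : ∀ {z y : V}, z ∈ Sᶜ → T'.Adj z y → y ∈ Sᶜ := by
    intro z y hz hzy hy
    exact hz (SimpleGraph.Reachable.trans hy (hzy.symm.reachable))
  have htri : ∀ u v : V, T.Adj u v →
      ((u ∈ S ∧ v ∈ S) ∨ (u ∈ Sᶜ ∧ v ∈ Sᶜ) ∨ (u = r ∧ v = c) ∨ (u = c ∧ v = r)) := by
    intro u v huv
    by_cases he : s(u, v) = (s(r, c) : Sym2 V)
    · rcases Sym2.eq_iff.mp he with ⟨rfl, rfl⟩ | ⟨rfl, rfl⟩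
      · exact Or.inr (Or.inr (Or.inl ⟨rfl, rfl⟩))
      · exact Or.inr (Or.inr (Or.inr ⟨rfl, rfl⟩))
    · have hadj' : T'.Adj u v := by
        rw [hT', SimpleGraph.deleteEdges_adj]
        exact ⟨huv, by simpa using he⟩
      by_cases hu : u ∈ S
      · exact Or.inl ⟨hu, hSclosed hu hadj'⟩
      · exact Or.inr (Or.inl ⟨hu, hCclosed hu hadj'⟩)
  refine ⟨S, hrS, hcS, htri, ?_, ?_⟩
  · constructor
    · rw [SimpleGraph.connected_iff]
      refine ⟨?_, ⟨⟨r, hrS⟩⟩⟩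
      rintro ⟨a, ha⟩ ⟨bb, hb⟩
      obtain ⟨w⟩ : T'.Reachable a bb := SimpleGraph.Reachable.trans
        (SimpleGraph.Reachable.symm ha) hb
      obtain ⟨hb', hr⟩ := walk_in_induce hle hSclosed w ha
      convert hr using 2
    · exact acyclic_induce hT.IsAcyclic S
  · constructor
    · rw [SimpleGraph.connected_iff]
      refine ⟨?_, ⟨⟨c, hcS⟩⟩⟩
      rintro ⟨a, ha⟩ ⟨bb, hb⟩
      obtain ⟨w⟩ : T'.Reachable a bb := SimpleGraph.Reachable.trans
        (SimpleGraph.Reachable.symm (hcover a ha)) (hcover bb hb)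
      obtain ⟨hb', hr⟩ := walk_in_induce hle hCclosed w ha
      convert hr using 2
    · exact acyclic_induce hT.IsAcyclic Sᶜ

lemma cnt_split (HAdj : VH → VH → Prop) (hsymm : Symmetric HAdj) {V : Type} [Fintype V]
    (T : SimpleGraph V) {r c : V} (hadj : T.Adj r c) {S : Set V} (hr : r ∈ S) (hc : c ∈ Sᶜ)
    (htri : ∀ u v : V, T.Adj u v →
        ((u ∈ S ∧ v ∈ S) ∨ (u ∈ Sᶜ ∧ v ∈ Sᶜ) ∨ (u = r ∧ v = c) ∨ (u = c ∧ v = r)))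
    (x : VH ⊕ Fin b) :
    cnt HAdj b T r x = cnt HAdj b (T.induce S) ⟨r, hr⟩ x *
      Asum HAdj b (cnt HAdj b (T.induce Sᶜ) ⟨c, hc⟩) x := by
  classical
  haveI : Fintype ↥S := Fintype.ofFinite _
  haveI : Fintype ↥(Sᶜ : Set V) := Fintype.ofFinite _
  have hcS : ¬ c ∈ S := hc
  have E : {f : V → VH ⊕ Fin b //
        (∀ u v : V, T.Adj u v → addLoopedDominating HAdj b (f u) (f v)) ∧ f r = x}
      ≃ {g : ↥S → VH ⊕ Fin b // (∀ u v : ↥S, (T.induce S).Adj u v →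
            addLoopedDominating HAdj b (g u) (g v)) ∧ g ⟨r, hr⟩ = x}
        × {h : ↥(Sᶜ : Set V) → VH ⊕ Fin b //
            (∀ u v : ↥(Sᶜ : Set V), (T.induce Sᶜ).Adj u v →
              addLoopedDominating HAdj b (h u) (h v))
            ∧ addLoopedDominating HAdj b x (h ⟨c, hc⟩)} := by
    refine Equiv.mk
      (fun f => (⟨fun a => f.1 a.1,
          fun u v huv => f.2.1 u.1 v.1 huv, f.2.2⟩,
        ⟨fun a => f.1 a.1,
          fun u v huv => f.2.1 u.1 v.1 huv, by have h0 := f.2.1 r c hadj; rwa [f.2.2] at h0⟩))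
      (fun gh => ⟨fun v => if hv : v ∈ S then gh.1.1 ⟨v, hv⟩ else gh.2.1 ⟨v, hv⟩, ?_, ?_⟩)
      ?_ ?_
    · -- hom condition of the glued map
      intro u v huv
      rcases htri u v huv with ⟨h1, h2⟩ | ⟨h1, h2⟩ | ⟨rfl, rfl⟩ | ⟨rfl, rfl⟩
      · dsimp only
        rw [dif_pos h1, dif_pos h2]
        exact gh.1.2.1 ⟨u, h1⟩ ⟨v, h2⟩ huv
      · dsimp only
        rw [dif_neg h1, dif_neg h2]
        exact gh.2.2.1 ⟨u, h1⟩ ⟨v, h2⟩ huv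
      · dsimp only
        rw [dif_pos hr, dif_neg hcS]
        rw [gh.1.2.2]
        exact gh.2.2.2
      · dsimp only
        rw [dif_neg hcS, dif_pos hr]
        apply (adjW_symm HAdj hsymm _ _).mp
        rw [gh.1.2.2]
        exact gh.2.2.2
    · dsimp only
      rw [dif_pos hr]
      exact gh.1.2.2
    · intro f
      apply Subtype.ext
      funext v
      dsimp only
      by_cases hv : v ∈ S
      · exact dif_pos hv
      · exact dif_neg hv
    · intro gh
      obtain ⟨⟨g, hg⟩, ⟨h, hh⟩⟩ := gh
      dsimp only
      rw [Prod.mk.injEq]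
      constructor
      · apply Subtype.ext
        funext a
        exact dif_pos a.2
      · apply Subtype.ext
        funext a
        exact dif_neg a.2
  unfold cnt
  rw [Nat.card_congr E, Nat.card_prod]
  congr 1
  rw [card_fiber (Q := fun h : ↥(Sᶜ : Set V) → VH ⊕ Fin b =>
      (∀ u v : ↥(Sᶜ : Set V), (T.induce Sᶜ).Adj u v →
        addLoopedDominating HAdj b (h u) (h v))
      ∧ addLoopedDominating HAdj b x (h ⟨c, hc⟩)) (φ := fun h => h ⟨c, hc⟩)]
  unfold Asum
  refine Finset.sum_congr rfl fun w _ => ?_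
  by_cases haw : addLoopedDominating HAdj b x w
  · rw [if_pos haw]
    apply Nat.card_congr
    apply Equiv.subtypeEquivRight
    intro h
    constructor
    · rintro ⟨⟨h1, _⟩, h3⟩
      exact ⟨h1, h3⟩
    · rintro ⟨h1, h3⟩
      exact ⟨⟨h1, by rw [h3]; exact haw⟩, h3⟩
  · rw [if_neg haw]
    haveI : IsEmpty {h : ↥(Sᶜ : Set V) → VH ⊕ Fin b //
        ((∀ u v : ↥(Sᶜ : Set V), (T.induce Sᶜ).Adj u v →
          addLoopedDominating HAdj b (h u) (h v))
        ∧ addLoopedDominating HAdj b x (h ⟨c, hc⟩)) ∧ h ⟨c, hc⟩ = w} :=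
      ⟨fun ⟨h, hh⟩ => haw (hh.2 ▸ hh.1.2)⟩
    exact Nat.card_of_isEmpty

theorem tree_main (HAdj : VH → VH → Prop) (hsymm : Symmetric HAdj) (cls : VH → Fin k)
    (m : Fin k → Fin k → ℕ)
    (hm : ∀ (i j : Fin k) (v : VH), cls v = i →
      Nat.card {w : VH // HAdj v w ∧ cls w = j} = m i j)
    (hinc : ∀ (c i : Fin k) (hi : i.val + 1 < k),
      ∑ j : Fin k, (if c ≤ j then m i j else 0) ≤
      ∑ j : Fin k, (if c ≤ j then m ⟨i.val + 1, hi⟩ j else 0)) :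
    ∀ (N : ℕ) (V : Type) (_ : Fintype V) (T : SimpleGraph V), T.IsTree → ∀ (r : V),
      Nat.card V = N →
      MCF cls b (cnt HAdj b T r) ∧ Dom cls b (cnt HAdj b T r) (pvec HAdj b (N - 1)) := by
  intro N
  induction N using Nat.strong_induction_on with
  | _ N ih =>
    intro V instV T hT r hcard
    haveI := instV
    by_cases hN : N < 2
    · -- single vertex
      haveI : Nonempty V := ⟨r⟩
      have hN1 : N = 1 := by
        have : 0 < Nat.card V := Nat.card_pos
        omega
      have hsub : Subsingleton V := by
        rw [hN1] at hcard
        exact (Nat.card_eq_one_iff_unique.mp hcard).1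
      have hcnt : ∀ x, cnt HAdj b T r x = 1 := by
        intro x
        unfold cnt
        haveI hne : Nonempty {f : V → VH ⊕ Fin b //
            (∀ u v : V, T.Adj u v → addLoopedDominating HAdj b (f u) (f v)) ∧ f r = x} :=
          ⟨⟨fun _ => x, fun u v huv => by
              rw [Subsingleton.elim u v] at huv
              exact absurd huv T.irrefl, rfl⟩⟩
        haveI : Subsingleton {f : V → VH ⊕ Fin b //
            (∀ u v : V, T.Adj u v → addLoopedDominating HAdj b (f u) (f v)) ∧ f r = x} :=
          ⟨fun f g => Subtype.ext (funext fun v => by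
              rw [Subsingleton.elim v r, f.2.2, g.2.2])⟩
        exact Nat.card_unique
      constructor
      · intro z z' _
        rw [hcnt z, hcnt z']
      · intro γ
        rw [hN1]
        unfold topsum
        refine Finset.sum_le_sum fun z _ => ?_
        rw [hcnt z]
        exact le_of_eq rfl
    · push_neg at hN
      have hlt : 1 < Fintype.card V := by rw [← Nat.card_eq_fintype_card, hcard]; omega
      obtain ⟨v0, hv0⟩ := Fintype.exists_ne_of_one_lt_card hlt r
      obtain ⟨wlk⟩ := hT.isConnected.preconnected r v0
      have hcex : ∃ c, T.Adj r c := by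
        cases wlk with
        | nil => exact absurd rfl hv0
        | cons h p => exact ⟨_, h⟩
      obtain ⟨c, hadj⟩ := hcex
      obtain ⟨S, hrS, hcS, htri, hT1, hT2⟩ := split_data T hT hadj
      haveI : Fintype ↥S := Fintype.ofFinite _
      haveI : Fintype ↥(Sᶜ : Set V) := Fintype.ofFinite _
      haveI : Nonempty ↥S := ⟨⟨r, hrS⟩⟩
      haveI : Nonempty ↥(Sᶜ : Set V) := ⟨⟨c, hcS⟩⟩
      set N₁ := Nat.card ↥S with hN₁
      set N₂ := Nat.card ↥(Sᶜ : Set V) with hN₂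
      have hsum : N₁ + N₂ = N := by
        rw [← hcard, hN₁, hN₂, ← Nat.card_sum]
        exact Nat.card_congr (Equiv.Set.sumCompl S)
      have hpos₁ : 0 < N₁ := Nat.card_pos
      have hpos₂ : 0 < N₂ := Nat.card_pos
      obtain ⟨hmcf₁, hdom₁⟩ := ih N₁ (by omega) ↥S inferInstance (T.induce S) hT1 ⟨r, hrS⟩ rfl
      obtain ⟨hmcf₂, hdom₂⟩ := ih N₂ (by omega) ↥(Sᶜ : Set V) inferInstance (T.induce Sᶜ) hT2 ⟨c, hcS⟩ rfl
      have hsplit := fun x : VH ⊕ Fin b => cnt_split (b := b) HAdj hsymm T hadj hrS hcS htri x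
      have hmcfA : MCF cls b (Asum HAdj b (cnt HAdj b (T.induce Sᶜ) ⟨c, hcS⟩)) :=
        mcf_Asum m hm hinc hmcf₂
      have hdomA : Dom cls b (Asum HAdj b (cnt HAdj b (T.induce Sᶜ) ⟨c, hcS⟩))
          (pvec HAdj b N₂) := by
        have hda := dom_Asum hsymm m hm hinc hdom₂
        have hh : N₂ = N₂ - 1 + 1 := by omega
        rw [hh]
        exact hda
      constructor
      · intro z z' hz
        rw [hsplit z, hsplit z']
        exact Nat.mul_le_mul (hmcf₁ z z' hz) (hmcfA z z' hz)
      · intro γ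
        have e : topsum cls b γ (cnt HAdj b T r)
            = topsum cls b γ (fun z => cnt HAdj b (T.induce S) ⟨r, hrS⟩ z *
                Asum HAdj b (cnt HAdj b (T.induce Sᶜ) ⟨c, hcS⟩) z) := by
          unfold topsum
          refine Finset.sum_congr rfl fun z _ => ?_
          rw [hsplit z]
        rw [e]
        have hmain := dom_mul hsymm m hm hinc hmcf₁ hmcfA hdom₁ hdomA γ
        have hidx : (N₁ - 1) + N₂ = N - 1 := by omega
        rw [hidx] at hmain
        exact hmain

lemma path_count (HAdj : VH → VH → Prop) (hsymm : Symmetric HAdj) :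
    ∀ (n : ℕ) (x : VH ⊕ Fin b),
    Nat.card {f : Fin (n+1) → VH ⊕ Fin b //
      (∀ u v : Fin (n+1), (SimpleGraph.pathGraph (n+1)).Adj u v →
        addLoopedDominating HAdj b (f u) (f v))
      ∧ f (Fin.last n) = x} = pvec HAdj b n x := by
  intro n
  induction n with
  | zero =>
      intro x
      haveI : Nonempty {f : Fin 1 → VH ⊕ Fin b //
          (∀ u v : Fin 1, (SimpleGraph.pathGraph 1).Adj u v →
            addLoopedDominating HAdj b (f u) (f v)) ∧ f (Fin.last 0) = x} :=
        ⟨⟨fun _ => x, fun u v huv => by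
            rw [Subsingleton.elim u v] at huv
            exact absurd huv (SimpleGraph.pathGraph 1).irrefl, rfl⟩⟩
      haveI : Subsingleton {f : Fin 1 → VH ⊕ Fin b //
          (∀ u v : Fin 1, (SimpleGraph.pathGraph 1).Adj u v →
            addLoopedDominating HAdj b (f u) (f v)) ∧ f (Fin.last 0) = x} :=
        ⟨fun f g => Subtype.ext (funext fun v => by
            rw [Subsingleton.elim v (Fin.last 0), f.2.2, g.2.2])⟩
      exact Nat.card_unique
  | succ n ihn =>
      intro x
      classical
      rw [card_fiber (Q := fun f : Fin (n+2) → VH ⊕ Fin b =>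
          (∀ u v : Fin (n+2), (SimpleGraph.pathGraph (n+2)).Adj u v →
            addLoopedDominating HAdj b (f u) (f v)) ∧ f (Fin.last (n+1)) = x)
        (φ := fun f => f (Fin.castSucc (Fin.last n)))]
      show _ = Asum HAdj b (pvec HAdj b n) x
      unfold Asum
      refine Finset.sum_congr rfl fun w _ => ?_
      by_cases haw : addLoopedDominating HAdj b x w
      · rw [if_pos haw]
        rw [← ihn w]
        apply Nat.card_congr
        refine Equiv.mk
          (fun f => ⟨fun j => f.1 (Fin.castSucc j), fun u v huv => ?_, ?_⟩)
          (fun g => ⟨(Fin.snoc g.1 x : Fin (n+2) → VH ⊕ Fin b), ⟨?_, ?_⟩, ?_⟩)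
          ?_ ?_
        · -- restricted hom
          apply f.2.1.1
          rw [SimpleGraph.pathGraph_adj] at huv ⊢
          simpa using huv
        · exact f.2.2
        · -- snoc is a hom
          have key : ∀ u v : Fin (n+2), (u : ℕ) + 1 = (v : ℕ) →
              addLoopedDominating HAdj b ((Fin.snoc g.1 x : Fin (n+2) → VH ⊕ Fin b) u)
                ((Fin.snoc g.1 x : Fin (n+2) → VH ⊕ Fin b) v) := by
            intro u v huv
            by_cases hv : v = Fin.last (n+1)
            · subst hv
              have hu : u = Fin.castSucc (Fin.last n) := by
                apply Fin.ext
                simp only [Fin.val_last] at huv ⊢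
                simpa using huv
              subst hu
              rw [Fin.snoc_castSucc, Fin.snoc_last, g.2.2]
              exact (adjW_symm HAdj hsymm x w).mp haw
            · have hvlt : (v : ℕ) < n + 1 := by
                rcases Nat.lt_or_ge (v : ℕ) (n+1) with h | h
                · exact h
                · exact absurd (Fin.ext (by omega : (v : ℕ) = n + 1)) hv
              set v' : Fin (n+1) := ⟨(v : ℕ), hvlt⟩ with hv'
              set u' : Fin (n+1) := ⟨(u : ℕ), by omega⟩ with hu'
              have hvv : v = Fin.castSucc v' := Fin.ext rfl
              have huu : u = Fin.castSucc u' := Fin.ext rfl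
              rw [hvv, huu, Fin.snoc_castSucc, Fin.snoc_castSucc]
              apply g.2.1
              rw [SimpleGraph.pathGraph_adj]
              left
              simpa using huv
          intro u v huv
          rcases SimpleGraph.pathGraph_adj.mp huv with h | h
          · exact key u v h
          · exact (adjW_symm HAdj hsymm _ _).mp (key v u h)
        · show (Fin.snoc g.1 x : Fin (n+2) → VH ⊕ Fin b) (Fin.last (n+1)) = x
          rw [Fin.snoc_last]
        · show (Fin.snoc g.1 x : Fin (n+2) → VH ⊕ Fin b) (Fin.castSucc (Fin.last n)) = w
          rw [Fin.snoc_castSucc]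
          exact g.2.2
        · intro f
          apply Subtype.ext
          funext i
          show (Fin.snoc (fun j => f.1 (Fin.castSucc j)) x : Fin (n+2) → VH ⊕ Fin b) i = f.1 i
          refine Fin.lastCases ?_ ?_ i
          · rw [Fin.snoc_last, f.2.1.2]
          · intro j
            rw [Fin.snoc_castSucc]
        · intro g
          apply Subtype.ext
          funext j
          show (Fin.snoc g.1 x : Fin (n+2) → VH ⊕ Fin b) (Fin.castSucc j) = g.1 j
          rw [Fin.snoc_castSucc]
      · rw [if_neg haw]
        haveI : IsEmpty {f : Fin (n+2) → VH ⊕ Fin b //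
            ((∀ u v : Fin (n+2), (SimpleGraph.pathGraph (n+2)).Adj u v →
              addLoopedDominating HAdj b (f u) (f v)) ∧ f (Fin.last (n+1)) = x)
            ∧ f (Fin.castSucc (Fin.last n)) = w} := by
          refine ⟨fun f => haw ?_⟩
          have hadj : (SimpleGraph.pathGraph (n+2)).Adj
              (Fin.castSucc (Fin.last n)) (Fin.last (n+1)) := by
            rw [SimpleGraph.pathGraph_adj]
            left
            simp
          have h1 := f.2.1.1 _ _ hadj
          rw [f.2.1.2, f.2.2] at h1
          exact (adjW_symm HAdj hsymm w x).mp h1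
        exact Nat.card_of_isEmpty

end HL

/-- **Proposition.** Let `H` be a target graph whose automorphic similarity classes can be
ordered so that the automorphic similarity matrix has the increasing columns property, and
let `H̃` be obtained from `H` by adding `b ≥ 1` looped dominating vertices. Then `H̃` is
Hoffman-London. -/
theorem add_looped_dominating_hoffman_london
    {VH : Type} [Fintype VH]
    (HAdj : VH → VH → Prop) (hsymm : Symmetric HAdj)
    (k : ℕ) (cls : VH → Fin k) (hsurj : Function.Surjective cls)
    (hcls : ∀ u v : VH, cls u = cls v ↔
      ∃ φ : VH ≃ VH, (∀ x y : VH, HAdj x y ↔ HAdj (φ x) (φ y)) ∧ φ u = v)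
    (m : Fin k → Fin k → ℕ)
    (hm : ∀ (i j : Fin k) (v : VH), cls v = i →
      Nat.card {w : VH // HAdj v w ∧ cls w = j} = m i j)
    (hinc : ∀ (c i : Fin k) (hi : i.val + 1 < k),
      ∑ j : Fin k, (if c ≤ j then m i j else 0) ≤
      ∑ j : Fin k, (if c ≤ j then m ⟨i.val + 1, hi⟩ j else 0))
    (b : ℕ) (hb : 1 ≤ b) :
    ∀ n : ℕ, 1 ≤ n → ∀ T : SimpleGraph (Fin n), T.IsTree →
      homCount (SimpleGraph.pathGraph n) (addLoopedDominating HAdj b) ≤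
        homCount T (addLoopedDominating HAdj b) := by
  intro n hn T hT
  obtain ⟨n', rfl⟩ : ∃ n', n = n' + 1 := ⟨n - 1, by omega⟩
  classical
  set r : Fin (n' + 1) := ⟨0, by omega⟩ with hr
  have h1 : homCount (SimpleGraph.pathGraph (n'+1)) (addLoopedDominating HAdj b)
      = ∑ x : VH ⊕ Fin b, HL.pvec HAdj b n' x := by
    unfold homCount
    rw [HL.card_fiber (Q := fun f : Fin (n'+1) → VH ⊕ Fin b =>
        ∀ u v, (SimpleGraph.pathGraph (n'+1)).Adj u v →
          addLoopedDominating HAdj b (f u) (f v)) (φ := fun f => f (Fin.last n'))]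
    exact Finset.sum_congr rfl fun x _ => HL.path_count HAdj hsymm n' x
  have h2 : homCount T (addLoopedDominating HAdj b) = ∑ x : VH ⊕ Fin b, HL.cnt HAdj b T r x := by
    unfold homCount HL.cnt
    rw [HL.card_fiber (Q := fun f : Fin (n'+1) → VH ⊕ Fin b =>
        ∀ u v, T.Adj u v → addLoopedDominating HAdj b (f u) (f v)) (φ := fun f => f r)]
  obtain ⟨-, hdom⟩ := HL.tree_main HAdj hsymm cls m hm hinc (n'+1) (Fin (n'+1))
      inferInstance T hT r (by rw [Nat.card_eq_fintype_card, Fintype.card_fin])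
  have htot := HL.dom_total hdom
  rw [h1, h2]
  simpa using htot
end

section
/- Let S_{t+1}^∘ be the fully looped star on vertices v_0, v_1, …, v_t with center v_0 (edges v_0 v_i for 1 ≤ i ≤ t and a loop at every vertex), and let n = (n_0, n_1, …, n_t) be any vector of positive integers. Then the blow-up of S_{t+1}^∘ by n is Hoffman-London. -/
/-- The adjacency relation of the blow-up of the fully looped star `S_{t+1}^∘` (center
`v_0`, leaves `v_1, …, v_t`, loops everywhere) by the vector `m = (m 0, …, m t)`: vertex
`⟨i, x⟩` is in the cluster replacing `v_i`, and two vertices are adjacent exactly when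
they lie in the same cluster or one of them lies in the cluster of the center. -/
def starBlowupAdj (t : ℕ) (m : Fin (t + 1) → ℕ) :
    (Σ i : Fin (t + 1), Fin (m i)) → (Σ i : Fin (t + 1), Fin (m i)) → Prop :=
  fun x y => x.1 = y.1 ∨ x.1 = 0 ∨ y.1 = 0

namespace StarHL

variable {t : ℕ} (m : Fin (t + 1) → ℕ)

/-- cluster adjacency in the looped star -/
def adjCl (h h' : Fin (t + 1)) : Prop := h = h' ∨ h = 0 ∨ h' = 0

instance (h h' : Fin (t+1)) : Decidable (adjCl h h') := by
  unfold adjCl; infer_instance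

lemma adjCl_symm {h h' : Fin (t+1)} (H : adjCl h h') : adjCl h' h := by
  unfold adjCl at *; tauto

lemma adjCl_refl (h : Fin (t+1)) : adjCl h h := Or.inl rfl

lemma adjCl_zero (h : Fin (t+1)) : adjCl 0 h := Or.inr (Or.inl rfl)

/-- weighted transfer operator -/
def Bv (w : Fin (t+1) → ℕ) : Fin (t+1) → ℕ :=
  fun h => ∑ h', if adjCl h h' then m h' * w h' else 0

/-- weighted total -/
def sig (w : Fin (t+1) → ℕ) : ℕ := ∑ h, m h * w h

/-- path vectors -/
def cvec : ℕ → Fin (t+1) → ℕ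
  | 0 => fun _ => 1
  | (k+1) => Bv m (cvec k)

lemma sig_adj (x y : Fin (t+1) → ℕ) :
    sig m (fun h => x h * Bv m y h) = sig m (fun h => Bv m x h * y h) := by
  unfold sig Bv
  simp only [Finset.mul_sum, Finset.sum_mul]
  rw [Finset.sum_comm]
  apply Finset.sum_congr rfl
  intro h _
  apply Finset.sum_congr rfl
  intro h' _
  by_cases H : adjCl h h'
  · rw [if_pos H, if_pos (adjCl_symm H)]; ring
  · rw [if_neg H, if_neg (fun c => H (adjCl_symm c))]; ring

end StarHL

namespace StarHL

variable {t : ℕ} (m : Fin (t + 1) → ℕ)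

/-- the comparison preorder on clusters: center on top, others by weight -/
def leCl (h h' : Fin (t+1)) : Prop := h' = 0 ∨ (h ≠ 0 ∧ m h ≤ m h')

lemma leCl_total (h h' : Fin (t+1)) : leCl m h h' ∨ leCl m h' h := by
  unfold leCl
  by_cases h0 : h = 0
  · right; left; exact h0
  · by_cases h0' : h' = 0
    · left; left; exact h0'
    · rcases le_total (m h) (m h') with H | H
      · left; right; exact ⟨h0, H⟩
      · right; right; exact ⟨h0', H⟩

/-- alignment of a vector with the cluster preorder -/
def aligned (w : Fin (t+1) → ℕ) : Prop := ∀ h h', leCl m h h' → w h ≤ w h'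

lemma aligned_one : aligned m (fun _ => 1) := fun _ _ _ => le_refl _

lemma aligned_mul {x y : Fin (t+1) → ℕ} (hx : aligned m x) (hy : aligned m y) :
    aligned m (fun h => x h * y h) :=
  fun h h' H => Nat.mul_le_mul (hx h h' H) (hy h h' H)

lemma Bv_zero (w : Fin (t+1) → ℕ) : Bv m w 0 = sig m w := by
  unfold Bv sig
  apply Finset.sum_congr rfl
  intro h _
  rw [if_pos (adjCl_zero h)]

lemma Bv_ne_zero (w : Fin (t+1) → ℕ) {h : Fin (t+1)} (h0 : h ≠ 0) :
    Bv m w h = m 0 * w 0 + m h * w h := by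
  unfold Bv
  have key : ∀ h'' : Fin (t+1), (if adjCl h h'' then m h'' * w h'' else 0)
      = (if h'' = 0 then m 0 * w 0 else 0) + (if h'' = h then m h * w h else 0) := by
    intro h''
    by_cases H0 : h'' = 0
    · subst H0
      rw [if_pos (adjCl_symm (adjCl_zero h)), if_pos rfl, if_neg (fun c => h0 c.symm)]
      omega
    · by_cases Hh : h'' = h
      · subst Hh
        rw [if_pos (adjCl_refl h''), if_neg H0, if_pos rfl]
        omega
      · have hna : ¬ adjCl h h'' := by
          unfold adjCl
          push_neg
          exact ⟨fun c => Hh c.symm, h0, H0⟩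
        rw [if_neg hna, if_neg H0, if_neg Hh]
  rw [Finset.sum_congr rfl (fun h'' _ => key h''), Finset.sum_add_distrib,
    Finset.sum_ite_eq' Finset.univ 0 (fun _ => m 0 * w 0),
    Finset.sum_ite_eq' Finset.univ h (fun _ => m h * w h),
    if_pos (Finset.mem_univ _), if_pos (Finset.mem_univ _)]

lemma pair_le_sig (w : Fin (t+1) → ℕ) {h : Fin (t+1)} (h0 : h ≠ 0) :
    m 0 * w 0 + m h * w h ≤ sig m w := by
  unfold sig
  have hne : (0 : Fin (t+1)) ≠ h := fun c => h0 c.symm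
  have hp : (∑ x ∈ ({0, h} : Finset (Fin (t+1))), m x * w x) = m 0 * w 0 + m h * w h :=
    Finset.sum_pair hne
  rw [← hp]
  exact Finset.sum_le_sum_of_subset (Finset.subset_univ _)

lemma aligned_Bv {w : Fin (t+1) → ℕ} (hw : aligned m w) : aligned m (Bv m w) := by
  intro h h' H
  rcases H with H | ⟨hne, Hm⟩
  · subst H
    rw [Bv_zero]
    by_cases h0 : h = 0
    · subst h0; rw [Bv_zero]
    · rw [Bv_ne_zero m w h0]
      exact pair_le_sig m w h0
  · by_cases h0' : h' = 0
    · subst h0'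
      rw [Bv_zero, Bv_ne_zero m w hne]
      exact pair_le_sig m w hne
    · rw [Bv_ne_zero m w hne, Bv_ne_zero m w h0']
      have : w h ≤ w h' := hw h h' (Or.inr ⟨hne, Hm⟩)
      exact Nat.add_le_add (le_refl _) (Nat.mul_le_mul Hm this)

lemma aligned_cvec (k : ℕ) : aligned m (cvec m k) := by
  induction k with
  | zero => exact aligned_one m
  | succ k ih => exact aligned_Bv m ih

end StarHL

namespace StarHL

variable {t : ℕ} (m : Fin (t + 1) → ℕ)

/-- matrix powers of the weighted transfer matrix -/
def Nmat : ℕ → Fin (t+1) → Fin (t+1) → ℕ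
  | 0 => fun h h' => if h = h' then 1 else 0
  | (q+1) => fun h h' => ∑ h'', (if adjCl h h'' then m h'' else 0) * Nmat q h'' h'

lemma Nmat_apply (q : ℕ) (p : ℕ) (h : Fin (t+1)) :
    ∑ h', Nmat m q h h' * cvec m p h' = cvec m (p + q) h := by
  induction q generalizing h with
  | zero =>
      simp [Nmat, ite_mul, Finset.sum_ite_eq]
  | succ q ih =>
      have rhs : cvec m (p + (q+1)) h
          = ∑ h'', if adjCl h h'' then m h'' * cvec m (p+q) h'' else 0 := by
        have e : p + (q+1) = (p+q)+1 := by omega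
        rw [e]
        rfl
      rw [rhs]
      simp only [Nmat, Finset.sum_mul]
      rw [Finset.sum_comm]
      apply Finset.sum_congr rfl
      intro h'' _
      have e1 : ∑ h', (if adjCl h h'' then m h'' else 0) * Nmat m q h'' h' * cvec m p h'
          = (if adjCl h h'' then m h'' else 0) * ∑ h', Nmat m q h'' h' * cvec m p h' := by
        rw [Finset.mul_sum]
        apply Finset.sum_congr rfl
        intro h' _
        ring
      rw [e1, ih h'']
      by_cases H : adjCl h h''
      · rw [if_pos H, if_pos H]
      · rw [if_neg H, if_neg H, Nat.zero_mul]

lemma Nmat_rowsum (q : ℕ) (h : Fin (t+1)) :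
    ∑ h', Nmat m q h h' = cvec m q h := by
  have := Nmat_apply m q 0 h
  simp only [cvec, Nat.mul_one, Nat.zero_add] at this
  exact this

lemma Nmat_succ_right (q : ℕ) (h h' : Fin (t+1)) :
    Nmat m (q+1) h h' = ∑ h'', Nmat m q h h'' * ((if adjCl h'' h' then m h' else 0)) := by
  induction q generalizing h with
  | zero =>
      have L : Nmat m 1 h h' = (if adjCl h h' then m h' else 0) := by
        show (∑ h'', (if adjCl h h'' then m h'' else 0) * Nmat m 0 h'' h') = _
        have e : ∀ h'', (if adjCl h h'' then m h'' else 0) * Nmat m 0 h'' h'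
            = (if h'' = h' then (if adjCl h h'' then m h'' else 0) else 0) := by
          intro h''
          show _ * (if h'' = h' then 1 else 0) = _
          by_cases H : h'' = h' <;> simp [H]
        rw [Finset.sum_congr rfl (fun a _ => e a),
          Finset.sum_ite_eq' Finset.univ h' (fun h'' => if adjCl h h'' then m h'' else 0),
          if_pos (Finset.mem_univ _)]
      have R : (∑ h'', Nmat m 0 h h'' * (if adjCl h'' h' then m h' else 0))
          = (if adjCl h h' then m h' else 0) := by
        have e : ∀ h'', Nmat m 0 h h'' * (if adjCl h'' h' then m h' else 0)
            = (if h = h'' then (if adjCl h'' h' then m h' else 0) else 0) := by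
          intro h''
          show (if h = h'' then 1 else 0) * _ = _
          by_cases H : h = h'' <;> simp [H]
        rw [Finset.sum_congr rfl (fun a _ => e a),
          Finset.sum_ite_eq Finset.univ h (fun h'' => if adjCl h'' h' then m h' else 0),
          if_pos (Finset.mem_univ _)]
      rw [L, R]
  | succ q ih =>
      show (∑ a, (if adjCl h a then m a else 0) * Nmat m (q+1) a h') = _
      have e : ∀ a, (if adjCl h a then m a else 0) * Nmat m (q+1) a h'
          = ∑ b, (if adjCl h a then m a else 0) * (Nmat m q a b * (if adjCl b h' then m h' else 0)) := by
        intro a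
        rw [ih a, Finset.mul_sum]
      rw [Finset.sum_congr rfl (fun a _ => e a), Finset.sum_comm]
      apply Finset.sum_congr rfl
      intro b _
      show _ = (∑ a, (if adjCl h a then m a else 0) * Nmat m q a b) * (if adjCl b h' then m h' else 0)
      rw [Finset.sum_mul]
      apply Finset.sum_congr rfl
      intro a _
      ring

lemma Nmat_rev (q : ℕ) (h h' : Fin (t+1)) :
    m h * Nmat m q h h' = m h' * Nmat m q h' h := by
  induction q generalizing h h' with
  | zero =>
      by_cases H : h = h'
      · subst H; rfl
      · show m h * (if h = h' then 1 else 0) = m h' * (if h' = h then 1 else 0)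
        rw [if_neg H, if_neg (fun c => H c.symm), Nat.mul_zero, Nat.mul_zero]
  | succ q ih =>
      show m h * (∑ h'', (if adjCl h h'' then m h'' else 0) * Nmat m q h'' h') = m h' * Nmat m (q+1) h' h
      rw [Nmat_succ_right, Finset.mul_sum, Finset.mul_sum]
      apply Finset.sum_congr rfl
      intro h'' _
      by_cases H : adjCl h h''
      · rw [if_pos H, if_pos (adjCl_symm H)]
        have := ih h'' h'
        calc m h * ((m h'') * Nmat m q h'' h') = (m h'' * Nmat m q h'' h') * m h := by ring
          _ = (m h' * Nmat m q h' h'') * m h := by rw [this]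
          _ = m h' * (Nmat m q h' h'' * m h) := by ring
      · rw [if_neg H, if_neg (fun c => H (adjCl_symm c))]
        simp


lemma aligned_pair {x y : Fin (t+1) → ℕ} (hx : aligned m x) (hy : aligned m y)
    (h h' : Fin (t+1)) : 0 ≤ ((x h : ℤ) - x h') * ((y h : ℤ) - y h') := by
  rcases leCl_total m h h' with H | H
  · have h1 : (x h : ℤ) ≤ x h' := Int.ofNat_le.mpr (hx h h' H)
    have h2 : (y h : ℤ) ≤ y h' := Int.ofNat_le.mpr (hy h h' H)
    have e : ((x h : ℤ) - x h') * ((y h : ℤ) - y h')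
        = ((x h' : ℤ) - x h) * ((y h' : ℤ) - y h) := by ring
    rw [e]
    exact mul_nonneg (sub_nonneg.mpr h1) (sub_nonneg.mpr h2)
  · have h1 : (x h' : ℤ) ≤ x h := Int.ofNat_le.mpr (hx h' h H)
    have h2 : (y h' : ℤ) ≤ y h := Int.ofNat_le.mpr (hy h' h H)
    exact mul_nonneg (sub_nonneg.mpr h1) (sub_nonneg.mpr h2)

/-- the key merge inequality -/
lemma merge_ineq {w : Fin (t+1) → ℕ} (hw : aligned m w) (p q : ℕ) :
    sig m (fun h => w h * cvec m (p+q) h) ≤ sig m (fun h => w h * (cvec m p h * cvec m q h)) := by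
  set A : Fin (t+1) → Fin (t+1) → ℤ := fun h h' => ((m h : ℤ) * (Nmat m q h h' : ℤ)) with hA
  have hArev : ∀ h h', A h h' = A h' h := by
    intro h h'
    have := Nmat_rev m q h h'
    simp only [hA]
    exact_mod_cast this
  have hAnn : ∀ h h', 0 ≤ A h h' := by
    intro h h'
    exact mul_nonneg (Int.natCast_nonneg _) (Int.natCast_nonneg _)
  set X : ℤ := ∑ h, ∑ h', A h h' * ((w h : ℤ) * ((cvec m p h : ℤ) - (cvec m p h' : ℤ))) with hX
  have key : (sig m (fun h => w h * (cvec m p h * cvec m q h)) : ℤ)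
      - (sig m (fun h => w h * cvec m (p+q) h) : ℤ) = X := by
    unfold sig
    push_cast
    rw [← Finset.sum_sub_distrib]
    apply Finset.sum_congr rfl
    intro h _
    have hq : (cvec m q h : ℤ) = ∑ h', (Nmat m q h h' : ℤ) := by
      exact_mod_cast (Nmat_rowsum m q h).symm
    have hpq : (cvec m (p+q) h : ℤ) = ∑ h', (Nmat m q h h' : ℤ) * (cvec m p h' : ℤ) := by
      exact_mod_cast (Nmat_apply m q p h).symm
    have expand : ∑ h', A h h' * ((w h : ℤ) * ((cvec m p h : ℤ) - (cvec m p h' : ℤ)))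
        = (m h : ℤ) * (w h : ℤ) * (cvec m p h : ℤ) * (∑ h', (Nmat m q h h' : ℤ))
          - (m h : ℤ) * (w h : ℤ) * (∑ h', (Nmat m q h h' : ℤ) * (cvec m p h' : ℤ)) := by
      rw [Finset.mul_sum, Finset.mul_sum, ← Finset.sum_sub_distrib]
      apply Finset.sum_congr rfl
      intro h' _
      simp only [hA]
      ring
    rw [expand, ← hq, ← hpq]
    ring
  have swap : X = ∑ h, ∑ h', A h h' * ((-(w h' : ℤ)) * ((cvec m p h : ℤ) - (cvec m p h' : ℤ))) := by
    rw [hX, Finset.sum_comm]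
    apply Finset.sum_congr rfl
    intro h _
    apply Finset.sum_congr rfl
    intro h' _
    rw [hArev h' h]
    ring
  have two : X + X = ∑ h, ∑ h', A h h' * (((w h : ℤ) - (w h' : ℤ))
      * ((cvec m p h : ℤ) - (cvec m p h' : ℤ))) := by
    nth_rewrite 2 [swap]
    rw [hX, ← Finset.sum_add_distrib]
    apply Finset.sum_congr rfl
    intro h _
    rw [← Finset.sum_add_distrib]
    apply Finset.sum_congr rfl
    intro h' _
    ring
  have hXnn : 0 ≤ X + X := by
    rw [two]
    apply Finset.sum_nonneg
    intro h _
    apply Finset.sum_nonneg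
    intro h' _
    exact mul_nonneg (hAnn h h') (aligned_pair m hw (aligned_cvec m p) h h')
  have hX0 : 0 ≤ X := by linarith
  have hfin : (sig m (fun h => w h * cvec m (p+q) h) : ℤ)
      ≤ (sig m (fun h => w h * (cvec m p h * cvec m q h)) : ℤ) := by linarith
  exact_mod_cast hfin

end StarHL

namespace StarHL

section Graph

variable {t : ℕ} {m : Fin (t + 1) → ℕ}

/-- canonical vertex of cluster `h` -/
def vtx (hm : ∀ i, 1 ≤ m i) (h : Fin (t+1)) : Σ i : Fin (t + 1), Fin (m i) :=
  ⟨h, ⟨0, hm h⟩⟩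

@[simp] lemma vtx_fst (hm : ∀ i, 1 ≤ m i) (h : Fin (t+1)) : (vtx hm h).1 = h := rfl

variable {V : Type}

/-- validity of a coloring -/
def good (G : SimpleGraph V) (f : V → Σ i : Fin (t + 1), Fin (m i)) : Prop :=
  ∀ u v, G.Adj u v → starBlowupAdj t m (f u) (f v)

lemma sba_iff (x y : Σ i : Fin (t + 1), Fin (m i)) :
    starBlowupAdj t m x y ↔ adjCl x.1 y.1 := Iff.rfl

/-- rooted weighted hom-vector -/
noncomputable def Yg (hm : ∀ i, 1 ≤ m i) (G : SimpleGraph V) (r : V) (h : Fin (t+1)) : ℕ :=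
  Nat.card {f : V → Σ i : Fin (t + 1), Fin (m i) // good G f ∧ f r = vtx hm h}

/-- cluster symmetry: the count with the root sent to any fixed vertex only
depends on the cluster of that vertex -/
lemma card_root_fixed (hm : ∀ i, 1 ≤ m i) (G : SimpleGraph V) (r : V)
    (x : Σ i : Fin (t + 1), Fin (m i)) :
    Nat.card {f : V → Σ i : Fin (t + 1), Fin (m i) // good G f ∧ f r = x}
      = Yg hm G r x.1 := by
  set π := Equiv.swap x (vtx hm x.1) with hπ
  have hfst : ∀ y, (π y).1 = y.1 := by
    intro y
    by_cases h1 : y = x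
    · subst h1
      rw [hπ, Equiv.swap_apply_left]
      rfl
    · by_cases h2 : y = vtx hm x.1
      · subst h2
        rw [hπ, Equiv.swap_apply_right]
        rfl
      · rw [hπ, Equiv.swap_apply_of_ne_of_ne h1 h2]
  have hadj : ∀ a b, starBlowupAdj t m (π a) (π b) ↔ starBlowupAdj t m a b := by
    intro a b
    rw [sba_iff, sba_iff, hfst, hfst]
  apply Nat.card_congr
  refine Equiv.subtypeEquiv (Equiv.piCongrRight fun _ => π) ?_
  intro f
  constructor
  · rintro ⟨hg, hr⟩
    constructor
    · intro u v huv
      exact (hadj _ _).mpr (hg u v huv)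
    · show π (f r) = vtx hm x.1
      rw [hr, hπ, Equiv.swap_apply_left]
  · rintro ⟨hg, hr⟩
    constructor
    · intro u v huv
      exact (hadj _ _).mp (hg u v huv)
    · have : π (f r) = vtx hm x.1 := hr
      have h2 : π x = vtx hm x.1 := Equiv.swap_apply_left _ _
      rw [← h2] at this
      exact π.injective this

/-- partition of colorings according to the value at one vertex -/
lemma card_partition [Fintype V] (P : (V → Σ i : Fin (t + 1), Fin (m i)) → Prop) (r : V) :
    Nat.card {f : V → Σ i : Fin (t + 1), Fin (m i) // P f}
      = ∑ x : Σ i : Fin (t + 1), Fin (m i),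
          Nat.card {f : V → Σ i : Fin (t + 1), Fin (m i) // P f ∧ f r = x} := by
  classical
  have e1 : {f : V → Σ i : Fin (t + 1), Fin (m i) // P f}
      ≃ Σ x : Σ i : Fin (t + 1), Fin (m i),
          {g : {f : V → Σ i : Fin (t + 1), Fin (m i) // P f} // g.1 r = x} :=
    (Equiv.sigmaFiberEquiv (fun g : {f // P f} => g.1 r)).symm
  rw [Nat.card_congr e1]
  rw [Nat.card_eq_fintype_card, Fintype.card_sigma]
  apply Finset.sum_congr rfl
  intro x _
  rw [← Nat.card_eq_fintype_card]
  exact Nat.card_congr (Equiv.subtypeSubtypeEquivSubtypeInter P (fun f => f r = x))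

/-- grouping a sigma-indexed sum into clusters -/
lemma sum_sigma_clusters (F : Fin (t+1) → ℕ) :
    ∑ x : Σ i : Fin (t + 1), Fin (m i), F x.1 = ∑ h, m h * F h := by
  rw [← Finset.univ_sigma_univ, Finset.sum_sigma]
  apply Finset.sum_congr rfl
  intro h _
  show ∑ _s : Fin (m h), F h = m h * F h
  rw [Finset.sum_const, Finset.card_univ, Fintype.card_fin, smul_eq_mul]

lemma homCount_eq_sig (hm : ∀ i, 1 ≤ m i) [Fintype V] (G : SimpleGraph V) (r : V) :
    homCount G (starBlowupAdj t m) = sig m (Yg hm G r) := by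
  show Nat.card {f : V → Σ i : Fin (t + 1), Fin (m i) // good G f} = _
  rw [card_partition (fun f => good G f) r]
  have : ∀ x : Σ i : Fin (t + 1), Fin (m i),
      Nat.card {f : V → Σ i : Fin (t + 1), Fin (m i) // good G f ∧ f r = x}
        = Yg hm G r x.1 := fun x => card_root_fixed hm G r x
  rw [Finset.sum_congr rfl (fun x _ => this x), sum_sigma_clusters]
  rfl

/-- single-vertex case -/
lemma Yg_single (hm : ∀ i, 1 ≤ m i) (G : SimpleGraph V) (r : V)
    (hV : ∀ v : V, v = r) (h : Fin (t+1)) : Yg hm G r h = 1 := by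
  unfold Yg
  rw [Nat.card_eq_one_iff_unique]
  constructor
  · constructor
    intro f g
    apply Subtype.ext
    funext v
    rw [hV v, f.2.2, g.2.2]
  · refine ⟨⟨fun _ => vtx hm h, ?_, rfl⟩⟩
    intro u v huv
    exact absurd ((hV u).trans (hV v).symm) (G.ne_of_adj huv)


section Path

open SimpleGraph

lemma path_adj_succ (n : ℕ) (i j : Fin (n+1)) :
    (pathGraph (n+2)).Adj i.succ j.succ ↔ (pathGraph (n+1)).Adj i j := by
  rw [pathGraph_adj, pathGraph_adj]
  simp only [Fin.val_succ]
  omega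

lemma path_adj_zero (n : ℕ) (j : Fin (n+1)) :
    (pathGraph (n+2)).Adj 0 j.succ ↔ j = 0 := by
  rw [pathGraph_adj]
  simp only [Fin.val_succ, Fin.val_zero]
  constructor
  · intro H
    have : j.val = 0 := by omega
    exact Fin.ext this
  · intro H
    subst H
    left
    rfl

lemma path_zero_ne_succ (n : ℕ) (j : Fin (n+1)) : (0 : Fin (n+2)) ≠ j.succ := by
  intro c
  have : (0 : ℕ) = j.val + 1 := congrArg Fin.val c
  omega

/-- the path recursion -/
lemma Yg_path_succ (hm : ∀ i, 1 ≤ m i) (n : ℕ) (h : Fin (t+1)) :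
    Yg hm (pathGraph (n+2)) 0 h = Bv m (Yg hm (pathGraph (n+1)) 0) h := by
  classical
  have bv : Bv m (Yg hm (pathGraph (n+1)) 0) h
      = ∑ x : Σ i : Fin (t + 1), Fin (m i),
          (if adjCl h x.1 then Yg hm (pathGraph (n+1)) 0 x.1 else 0) := by
    rw [sum_sigma_clusters (fun h' => if adjCl h h' then Yg hm (pathGraph (n+1)) 0 h' else 0)]
    unfold Bv
    apply Finset.sum_congr rfl
    intro h' _
    by_cases H : adjCl h h' <;> simp [H]
  rw [bv]
  show Nat.card {f : Fin (n+2) → Σ i : Fin (t + 1), Fin (m i) //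
      good (pathGraph (n+2)) f ∧ f 0 = vtx hm h} = _
  rw [card_partition (fun f => good (pathGraph (n+2)) f ∧ f 0 = vtx hm h) (1 : Fin (n+2))]
  apply Finset.sum_congr rfl
  intro x _
  by_cases hx : adjCl h x.1
  · rw [if_pos hx]
    have e : {f : Fin (n+2) → Σ i : Fin (t + 1), Fin (m i) //
          (good (pathGraph (n+2)) f ∧ f 0 = vtx hm h) ∧ f 1 = x}
        ≃ {g : Fin (n+1) → Σ i : Fin (t + 1), Fin (m i) //
          good (pathGraph (n+1)) g ∧ g 0 = x} := by
      refine ⟨fun f => ⟨fun i => f.1 i.succ, ?_, ?_⟩,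
              fun g => ⟨Fin.cases (vtx hm h) g.1, ⟨?_, ?_⟩, ?_⟩, ?_, ?_⟩
      · intro u v huv
        exact f.2.1.1 u.succ v.succ ((path_adj_succ n u v).mpr huv)
      · show f.1 (Fin.succ 0) = x
        exact f.2.2
      · intro u v huv
        rcases Fin.eq_zero_or_eq_succ u with hu | ⟨i, hu⟩ <;>
          rcases Fin.eq_zero_or_eq_succ v with hv | ⟨j, hv⟩ <;> subst hu <;> subst hv
        · exact absurd rfl ((pathGraph (n+2)).ne_of_adj huv)
        · have hj : j = 0 := (path_adj_zero n j).mp huv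
          subst hj
          show starBlowupAdj t m
            (Fin.cases (motive := fun _ => (i : Fin (t + 1)) × Fin (m i)) (vtx hm h) g.1 0)
            (Fin.cases (motive := fun _ => (i : Fin (t + 1)) × Fin (m i)) (vtx hm h) g.1 (Fin.succ 0))
          rw [Fin.cases_zero, Fin.cases_succ]
          rw [sba_iff, g.2.2]
          exact hx
        · have hi : i = 0 := (path_adj_zero n i).mp huv.symm
          subst hi
          show starBlowupAdj t m
            (Fin.cases (motive := fun _ => (i : Fin (t + 1)) × Fin (m i)) (vtx hm h) g.1 (Fin.succ 0))
            (Fin.cases (motive := fun _ => (i : Fin (t + 1)) × Fin (m i)) (vtx hm h) g.1 0)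
          rw [Fin.cases_zero, Fin.cases_succ]
          rw [sba_iff, g.2.2]
          exact adjCl_symm hx
        · show starBlowupAdj t m
            (Fin.cases (motive := fun _ => (i : Fin (t + 1)) × Fin (m i)) (vtx hm h) g.1 i.succ)
            (Fin.cases (motive := fun _ => (i : Fin (t + 1)) × Fin (m i)) (vtx hm h) g.1 j.succ)
          rw [Fin.cases_succ, Fin.cases_succ]
          exact g.2.1 i j ((path_adj_succ n i j).mp huv)
      · show Fin.cases (motive := fun _ => (i : Fin (t + 1)) × Fin (m i)) (vtx hm h) g.1 0 = vtx hm h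
        simp
      · show Fin.cases (motive := fun _ => (i : Fin (t + 1)) × Fin (m i)) (vtx hm h) g.1 (Fin.succ 0) = x
        rw [Fin.cases_succ]
        exact g.2.2
      · intro f
        apply Subtype.ext
        funext v
        refine Fin.cases ?_ ?_ v
        · show vtx hm h = f.1 0
          exact f.2.1.2.symm
        · intro i
          simp
      · intro g
        apply Subtype.ext
        funext v
        simp
    rw [Nat.card_congr e]
    exact card_root_fixed hm (pathGraph (n+1)) 0 x
  · rw [if_neg hx]
    rw [Nat.card_eq_zero]
    left
    constructor
    rintro ⟨f, ⟨hg, h0⟩, h1⟩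
    apply hx
    have := hg 0 1 (by
      have e1 : (1 : Fin (n+2)) = (0 : Fin (n+1)).succ := rfl
      rw [e1]
      exact (path_adj_zero n 0).mpr rfl)
    rw [sba_iff, h0, h1] at this
    exact this

/-- hom-vector of the path rooted at an end -/
lemma Yg_path (hm : ∀ i, 1 ≤ m i) (n : ℕ) :
    Yg hm (pathGraph (n+1)) 0 = cvec m n := by
  induction n with
  | zero =>
      funext h
      have : ∀ v : Fin 1, v = 0 := fun v => Subsingleton.elim v 0
      exact Yg_single hm (pathGraph 1) 0 this h
  | succ n ih =>
      funext h
      rw [Yg_path_succ hm n h, ih]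
      rfl

end Path

section Split

open SimpleGraph

variable {W : Type}

lemma isAcyclic_induce {G : SimpleGraph W} (hG : G.IsAcyclic) (s : Set W) :
    (G.induce s).IsAcyclic := by
  intro v c hc
  have := hc.map (f := (SimpleGraph.Embedding.induce s (G := G)).toHom)
    (SimpleGraph.Embedding.induce s (G := G)).injective
  exact hG _ this

lemma support_reach {D : SimpleGraph W} :
    ∀ {x y : W} (w : D.Walk x y) (z : W), z ∈ w.support → D.Reachable x z := by
  intro x y w
  induction w with
  | nil =>
      intro z hz
      rw [SimpleGraph.Walk.support_nil, List.mem_singleton] at hz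
      subst hz
      exact Reachable.refl _
  | @cons a b c hab p ih =>
      intro z hz
      rw [SimpleGraph.Walk.support_cons, List.mem_cons] at hz
      rcases hz with hz | hz
      · subst hz; exact Reachable.refl _
      · exact (hab.reachable).trans (ih z hz)

lemma induce_reach {G D : SimpleGraph W} (hle : ∀ a b, D.Adj a b → G.Adj a b) (s : Set W) :
    ∀ {x y : W} (w : D.Walk x y) (hx : x ∈ s) (hy : y ∈ s),
      (∀ z ∈ w.support, z ∈ s) → (G.induce s).Reachable ⟨x, hx⟩ ⟨y, hy⟩ := by
  intro x y w
  induction w with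
  | nil =>
      intro hx hy _
      exact Reachable.refl _
  | @cons a b c hab p ih =>
      intro hx hy hsupp
      have hb : b ∈ s := by
        apply hsupp
        rw [SimpleGraph.Walk.support_cons]
        exact List.mem_cons_of_mem _ (SimpleGraph.Walk.start_mem_support p)
      have adj' : (G.induce s).Adj ⟨a, hx⟩ ⟨b, hb⟩ := by
        simp only [SimpleGraph.comap_adj, Function.Embedding.coe_subtype]
        exact hle a b hab
      refine (adj'.reachable).trans (ih hb hy ?_)
      intro z hz
      apply hsupp
      rw [SimpleGraph.Walk.support_cons]
      exact List.mem_cons_of_mem _ hz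

/-- main splitting lemma: cutting a tree at an edge at the root -/
lemma split_tree {T : SimpleGraph W} (hT : T.IsTree) {r r₁ : W} (hadj : T.Adj r r₁) :
    ∃ S : Set W, r ∉ S ∧ r₁ ∈ S ∧
      (T.induce S).IsTree ∧ (T.induce Sᶜ).IsTree ∧
      (∀ a b, T.Adj a b → a ∈ S → b ∉ S → a = r₁ ∧ b = r) := by
  classical
  set D := T.deleteEdges {s(r, r₁)} with hD
  set S : Set W := {v | D.Reachable r₁ v} with hSdef
  have hDadj : ∀ a b, D.Adj a b ↔ (T.Adj a b ∧ s(a, b) ≠ s(r, r₁)) := by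
    intro a b
    rw [hD]
    simp [SimpleGraph.deleteEdges_adj]
  have hDle : ∀ a b, D.Adj a b → T.Adj a b := fun a b hab => ((hDadj a b).mp hab).1
  have hbr : ¬ D.Reachable r r₁ := by
    have hb := (isAcyclic_iff_forall_adj_isBridge.mp hT.IsAcyclic) hadj
    exact isBridge_iff.mp hb
  have hr₁S : r₁ ∈ S := Reachable.refl _
  have hrS : r ∉ S := fun c => hbr (Reachable.symm c)
  have cross : ∀ a b, T.Adj a b → a ∈ S → b ∉ S → a = r₁ ∧ b = r := by
    intro a b hab haS hbS
    by_cases he : s(a, b) = s(r, r₁)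
    · rw [Sym2.eq_iff] at he
      rcases he with ⟨ha, hb⟩ | ⟨ha, hb⟩
      · subst ha; exact absurd haS hrS
      · exact ⟨ha, hb⟩
    · exact absurd (haS.trans ((hDadj a b).mpr ⟨hab, he⟩).reachable) hbS
  have reach_or : ∀ v, D.Reachable r v ∨ D.Reachable r₁ v := by
    have key : ∀ (u v : W) (_ : T.Walk u v),
        (D.Reachable r u ∨ D.Reachable r₁ u) → (D.Reachable r v ∨ D.Reachable r₁ v) := by
      intro u v w
      induction w with
      | nil => exact id
      | @cons a b c hab p ih =>
          intro hu
          apply ih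
          by_cases he : s(a, b) = s(r, r₁)
          · rw [Sym2.eq_iff] at he
            rcases he with ⟨ha, hb⟩ | ⟨ha, hb⟩
            · subst hb; right; exact Reachable.refl _
            · subst hb; left; exact Reachable.refl _
          · have : D.Adj a b := (hDadj a b).mpr ⟨hab, he⟩
            rcases hu with hu | hu
            · left; exact hu.trans this.reachable
            · right; exact hu.trans this.reachable
    intro v
    obtain ⟨w⟩ := hT.isConnected.preconnected r v
    exact key r v w (Or.inl (Reachable.refl _))
  have reach_c : ∀ v, v ∉ S → D.Reachable r v := by
    intro v hv
    rcases reach_or v with h | h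
    · exact h
    · exact absurd h hv
  refine ⟨S, hrS, hr₁S, ⟨?_, isAcyclic_induce hT.IsAcyclic S⟩,
      ⟨?_, isAcyclic_induce hT.IsAcyclic Sᶜ⟩, cross⟩
  · -- connectivity of T.induce S
    rw [SimpleGraph.connected_iff]
    refine ⟨?_, ⟨⟨r₁, hr₁S⟩⟩⟩
    · intro a b
      have key : ∀ c : ↥S, (T.induce S).Reachable ⟨r₁, hr₁S⟩ c := by
        rintro ⟨v, hv⟩
        have hv' : D.Reachable r₁ v := hv
        obtain ⟨w⟩ := hv'
        refine induce_reach hDle S w hr₁S hv ?_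
        intro z hz
        exact support_reach w z hz
      exact (key a).symm.trans (key b)
  · -- connectivity of T.induce Sᶜ
    rw [SimpleGraph.connected_iff]
    refine ⟨?_, ⟨⟨r, hrS⟩⟩⟩
    · intro a b
      have key : ∀ c : ↥(Sᶜ), (T.induce Sᶜ).Reachable ⟨r, hrS⟩ c := by
        rintro ⟨v, hv⟩
        obtain ⟨w⟩ := reach_c v hv
        refine induce_reach hDle Sᶜ w hrS hv ?_
        intro z hz
        intro hzS
        exact hrS ((hzS : D.Reachable r₁ z).trans (support_reach w z hz).symm)
      exact (key a).symm.trans (key b)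

end Split

section Count

open SimpleGraph

lemma card_adj_constraint (hm : ∀ i, 1 ≤ m i) {W : Type} [Fintype W]
    (G : SimpleGraph W) (ρ : W) (h : Fin (t+1)) :
    Nat.card {k : W → Σ i : Fin (t + 1), Fin (m i) // good G k ∧ adjCl h ((k ρ).1)}
      = Bv m (Yg hm G ρ) h := by
  classical
  rw [card_partition (fun k => good G k ∧ adjCl h ((k ρ).1)) ρ]
  have bv : Bv m (Yg hm G ρ) h
      = ∑ x : Σ i : Fin (t + 1), Fin (m i),
          (if adjCl h x.1 then Yg hm G ρ x.1 else 0) := by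
    rw [sum_sigma_clusters (fun h' => if adjCl h h' then Yg hm G ρ h' else 0)]
    unfold Bv
    apply Finset.sum_congr rfl
    intro h' _
    by_cases H : adjCl h h' <;> simp [H]
  rw [bv]
  apply Finset.sum_congr rfl
  intro x _
  by_cases hx : adjCl h x.1
  · rw [if_pos hx]
    have e : {k : W → Σ i : Fin (t + 1), Fin (m i) //
          (good G k ∧ adjCl h ((k ρ).1)) ∧ k ρ = x}
        ≃ {k : W → Σ i : Fin (t + 1), Fin (m i) // good G k ∧ k ρ = x} := by
      apply Equiv.subtypeEquivRight
      intro k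
      constructor
      · rintro ⟨⟨hg, _⟩, hx'⟩
        exact ⟨hg, hx'⟩
      · rintro ⟨hg, hx'⟩
        refine ⟨⟨hg, ?_⟩, hx'⟩
        rw [hx']
        exact hx
    rw [Nat.card_congr e]
    exact card_root_fixed hm G ρ x
  · rw [if_neg hx, Nat.card_eq_zero]
    left
    constructor
    rintro ⟨k, ⟨_, hka⟩, hkx⟩
    rw [hkx] at hka
    exact hx hka

lemma Yg_split (hm : ∀ i, 1 ≤ m i) {V : Type} [Fintype V] (T : SimpleGraph V)
    {r r₁ : V} (hadj : T.Adj r r₁) (S : Set V) (hrS : r ∉ S) (hr₁S : r₁ ∈ S)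
    (cross : ∀ a b, T.Adj a b → a ∈ S → b ∉ S → a = r₁ ∧ b = r) (h : Fin (t+1)) :
    Yg hm T r h = Yg hm (T.induce Sᶜ) ⟨r, hrS⟩ h
      * Bv m (Yg hm (T.induce S) ⟨r₁, hr₁S⟩) h := by
  classical
  have e : {f : V → Σ i : Fin (t + 1), Fin (m i) // good T f ∧ f r = vtx hm h}
      ≃ {g : ↥(Sᶜ) → Σ i : Fin (t + 1), Fin (m i) //
          good (T.induce Sᶜ) g ∧ g ⟨r, hrS⟩ = vtx hm h}
        × {k : ↥S → Σ i : Fin (t + 1), Fin (m i) //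
          good (T.induce S) k ∧ adjCl h ((k ⟨r₁, hr₁S⟩).1)} := by
    refine ⟨fun f => ⟨⟨fun a => f.1 a.1, ?_, ?_⟩, ⟨fun a => f.1 a.1, ?_, ?_⟩⟩,
            fun gk => ⟨fun v => if hv : v ∈ S then gk.2.1 ⟨v, hv⟩ else gk.1.1 ⟨v, hv⟩,
              ?_, ?_⟩, ?_, ?_⟩
    · intro u v huv
      simp only [SimpleGraph.comap_adj, Function.Embedding.coe_subtype] at huv
      exact f.2.1 u.1 v.1 huv
    · exact f.2.2
    · intro u v huv
      simp only [SimpleGraph.comap_adj, Function.Embedding.coe_subtype] at huv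
      exact f.2.1 u.1 v.1 huv
    · have := f.2.1 r r₁ hadj
      rw [sba_iff, f.2.2] at this
      exact this
    · rintro u v huv
      by_cases hu : u ∈ S <;> by_cases hv : v ∈ S
      · simp only [dif_pos hu, dif_pos hv]
        refine gk.2.2.1 ⟨u, hu⟩ ⟨v, hv⟩ ?_
        simp only [SimpleGraph.comap_adj, Function.Embedding.coe_subtype]
        exact huv
      · obtain ⟨hu₁, hv₁⟩ := cross u v huv hu hv
        simp only [dif_pos hu, dif_neg hv]
        have e1 : (⟨u, hu⟩ : ↥S) = ⟨r₁, hr₁S⟩ := Subtype.ext hu₁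
        have e2 : (⟨v, hv⟩ : ↥(Sᶜ)) = ⟨r, hrS⟩ := Subtype.ext hv₁
        rw [sba_iff, e1, e2, gk.1.2.2]
        exact adjCl_symm gk.2.2.2
      · obtain ⟨hv₁, hu₁⟩ := cross v u huv.symm hv hu
        simp only [dif_pos hv, dif_neg hu]
        have e1 : (⟨v, hv⟩ : ↥S) = ⟨r₁, hr₁S⟩ := Subtype.ext hv₁
        have e2 : (⟨u, hu⟩ : ↥(Sᶜ)) = ⟨r, hrS⟩ := Subtype.ext hu₁
        rw [sba_iff, e1, e2, gk.1.2.2]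
        exact gk.2.2.2
      · simp only [dif_neg hu, dif_neg hv]
        refine gk.1.2.1 ⟨u, hu⟩ ⟨v, hv⟩ ?_
        simp only [SimpleGraph.comap_adj, Function.Embedding.coe_subtype]
        exact huv
    · simp only [dif_neg hrS]
      exact gk.1.2.2
    · intro f
      apply Subtype.ext
      funext v
      by_cases hv : v ∈ S
      · simp only [dif_pos hv]
      · simp only [dif_neg hv]
    · rintro ⟨g, k⟩
      apply Prod.ext
      · apply Subtype.ext
        funext a
        obtain ⟨v, hv⟩ := a
        have hv' : v ∉ S := hv
        simp only [dif_neg hv']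
      · apply Subtype.ext
        funext a
        obtain ⟨v, hv⟩ := a
        simp only [dif_pos hv]
  show Nat.card {f : V → Σ i : Fin (t + 1), Fin (m i) // good T f ∧ f r = vtx hm h} = _
  rw [Nat.card_congr e, Nat.card_prod]
  congr 1
  exact card_adj_constraint hm (T.induce S) ⟨r₁, hr₁S⟩ h

end Count

section Master

open SimpleGraph

lemma sig_congr {x y : Fin (t+1) → ℕ} (hxy : ∀ h', x h' = y h') : sig m x = sig m y := by
  unfold sig
  apply Finset.sum_congr rfl
  intro h _
  rw [hxy h]

lemma exists_neighbor {V : Type} [Fintype V] (T : SimpleGraph V) (hconn : T.Connected)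
    (hcard : 1 < Nat.card V) (r : V) : ∃ r₁, T.Adj r r₁ := by
  rw [Nat.card_eq_fintype_card] at hcard
  have : Nontrivial V := Fintype.one_lt_card_iff_nontrivial.mp hcard
  obtain ⟨v, hv⟩ := exists_ne r
  obtain ⟨w⟩ := hconn.preconnected r v
  cases w with
  | nil => exact absurd rfl (Ne.symm hv)
  | cons h p => exact ⟨_, h⟩

theorem master (hm : ∀ i, 1 ≤ m i) :
    ∀ (N : ℕ) (V : Type) [Fintype V] (T : SimpleGraph V), T.IsTree →
      Nat.card V = N + 1 → ∀ r : V,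
      aligned m (Yg hm T r) ∧
      ∀ u, aligned m u →
        sig m (fun h => u h * cvec m N h) ≤ sig m (fun h => u h * Yg hm T r h) := by
  intro N
  induction N using Nat.strong_induction_on with
  | _ N ih =>
    intro V _ T hT hcard r
    classical
    rcases Nat.eq_zero_or_pos N with hN | hN
    · -- base case: single vertex
      subst hN
      have hsing : ∀ v : V, v = r := by
        have h1 := Nat.card_eq_one_iff_unique.mp hcard
        have := h1.1
        intro v
        exact Subsingleton.elim v r
      have hY : ∀ h, Yg hm T r h = 1 := Yg_single hm T r hsing
      constructor
      · intro h h' hle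
        rw [hY h, hY h']
      · intro u hu
        apply le_of_eq
        apply sig_congr
        intro h
        rw [hY h]
        rfl
    · -- inductive step
      obtain ⟨K, rfl⟩ : ∃ K, N = K + 1 := ⟨N - 1, by omega⟩
      obtain ⟨r₁, hadj⟩ := exists_neighbor T hT.isConnected (by omega) r
      obtain ⟨S, hrS, hr₁S, hT₁, hT', cross⟩ := split_tree hT hadj
      set A := Yg hm (T.induce Sᶜ) ⟨r, hrS⟩ with hA
      set B := Yg hm (T.induce S) ⟨r₁, hr₁S⟩ with hB
      have hsplit : ∀ h, Yg hm T r h = A h * Bv m B h :=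
        fun h => Yg_split hm T hadj S hrS hr₁S cross h
      -- cardinalities
      have hcards : Nat.card ↥S + Nat.card ↥(Sᶜ) = K + 2 := by
        rw [← hcard]
        rw [← Nat.card_sum]
        apply Nat.card_congr
        exact Equiv.sumCompl (· ∈ S)
      have hSpos : 0 < Nat.card ↥S := Nat.card_pos_iff.mpr ⟨⟨⟨r₁, hr₁S⟩⟩, inferInstance⟩
      have hScpos : 0 < Nat.card ↥(Sᶜ) := Nat.card_pos_iff.mpr ⟨⟨⟨r, hrS⟩⟩, inferInstance⟩
      obtain ⟨a, ha⟩ : ∃ a, Nat.card ↥S = a + 1 := ⟨Nat.card ↥S - 1, by omega⟩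
      obtain ⟨b, hb⟩ : ∃ b, Nat.card ↥(Sᶜ) = b + 1 := ⟨Nat.card ↥(Sᶜ) - 1, by omega⟩
      have hab : a + b = K := by omega
      have iha := ih a (by omega) ↥S (T.induce S) hT₁ ha ⟨r₁, hr₁S⟩
      have ihb := ih b (by omega) ↥(Sᶜ) (T.induce Sᶜ) hT' hb ⟨r, hrS⟩
      have hAal : aligned m A := by rw [hA]; exact ihb.1
      have hBal : aligned m B := by rw [hB]; exact iha.1
      constructor
      · intro h h' hle
        rw [hsplit h, hsplit h']
        exact Nat.mul_le_mul (hAal h h' hle) (aligned_Bv m hBal h h' hle)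
      · intro u hu
        have step1 : sig m (fun h => u h * Yg hm T r h)
            = sig m (fun h => (fun h' => u h' * A h') h * Bv m B h) := by
          apply sig_congr
          intro h
          rw [hsplit h]
          ring
        have step2 : sig m (fun h => (fun h' => u h' * A h') h * Bv m B h)
            = sig m (fun h => Bv m (fun h' => u h' * A h') h * B h) := by
          have := sig_adj m (fun h' => u h' * A h') B
          exact this
        have step3 : sig m (fun h => Bv m (fun h' => u h' * A h') h * cvec m a h)
            ≤ sig m (fun h => Bv m (fun h' => u h' * A h') h * B h) := by
          have halg : aligned m (Bv m (fun h' => u h' * A h')) :=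
            aligned_Bv m (aligned_mul m hu hAal)
          have := iha.2 (Bv m (fun h' => u h' * A h')) halg
          rw [← hB] at this
          exact this
        have step4 : sig m (fun h => Bv m (fun h' => u h' * A h') h * cvec m a h)
            = sig m (fun h => (fun h' => u h' * cvec m (a+1) h') h * A h) := by
          refine ((sig_adj m (fun h' => u h' * A h') (cvec m a)).symm).trans ?_
          apply sig_congr
          intro h
          show u h * A h * Bv m (cvec m a) h = u h * cvec m (a+1) h * A h
          have e : cvec m (a+1) h = Bv m (cvec m a) h := rfl
          rw [e]
          ring
        have step5 : sig m (fun h => (fun h' => u h' * cvec m (a+1) h') h * cvec m b h)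
            ≤ sig m (fun h => (fun h' => u h' * cvec m (a+1) h') h * A h) := by
          have halg : aligned m (fun h' => u h' * cvec m (a+1) h') :=
            aligned_mul m hu (aligned_cvec m (a+1))
          have := ihb.2 (fun h' => u h' * cvec m (a+1) h') halg
          rw [← hA] at this
          exact this
        have step6 : sig m (fun h => u h * cvec m (K+1) h)
            ≤ sig m (fun h => (fun h' => u h' * cvec m (a+1) h') h * cvec m b h) := by
          have e2 : sig m (fun h => (fun h' => u h' * cvec m (a+1) h') h * cvec m b h)
              = sig m (fun h => u h * (cvec m (a+1) h * cvec m b h)) := by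
            apply sig_congr
            intro h
            ring
          rw [e2]
          have e3 : K + 1 = (a+1) + b := by omega
          rw [e3]
          exact merge_ineq m hu (a+1) b
        calc sig m (fun h => u h * cvec m (K+1) h)
            ≤ sig m (fun h => (fun h' => u h' * cvec m (a+1) h') h * cvec m b h) := step6
          _ ≤ sig m (fun h => (fun h' => u h' * cvec m (a+1) h') h * A h) := step5
          _ = sig m (fun h => Bv m (fun h' => u h' * A h') h * cvec m a h) := step4.symm
          _ ≤ sig m (fun h => Bv m (fun h' => u h' * A h') h * B h) := step3
          _ = sig m (fun h => (fun h' => u h' * A h') h * Bv m B h) := step2.symm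
          _ = sig m (fun h => u h * Yg hm T r h) := step1.symm
end Master
end Graph

end StarHL

/-- **Corollary.** For any vector `m` of positive integers, the blow-up of the fully
looped star `S_{t+1}^∘` by `m` is Hoffman-London. -/
theorem star_blowup_hoffman_london (t : ℕ) (m : Fin (t + 1) → ℕ) (hm : ∀ i, 1 ≤ m i) :
    ∀ n : ℕ, 1 ≤ n → ∀ T : SimpleGraph (Fin n), T.IsTree →
      homCount (SimpleGraph.pathGraph n) (starBlowupAdj t m) ≤
        homCount T (starBlowupAdj t m) := by
  intro n hn T hT
  obtain ⟨N, rfl⟩ : ∃ N, n = N + 1 := ⟨n - 1, by omega⟩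
  have hcard : Nat.card (Fin (N+1)) = N + 1 := by
    rw [Nat.card_eq_fintype_card, Fintype.card_fin]
  have hpath : homCount (SimpleGraph.pathGraph (N+1)) (starBlowupAdj t m)
      = StarHL.sig m (StarHL.cvec m N) := by
    rw [StarHL.homCount_eq_sig hm (SimpleGraph.pathGraph (N+1)) 0, StarHL.Yg_path hm N]
  have htree : homCount T (starBlowupAdj t m) = StarHL.sig m (StarHL.Yg hm T 0) :=
    StarHL.homCount_eq_sig hm T 0
  rw [hpath, htree]
  have hmain := (StarHL.master hm N (Fin (N+1)) T hT hcard 0).2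
    (fun _ => 1) (StarHL.aligned_one m)
  calc StarHL.sig m (StarHL.cvec m N)
      = StarHL.sig m (fun h => (fun _ : Fin (t+1) => 1) h * StarHL.cvec m N h) :=
        StarHL.sig_congr (fun h => by simp)
    _ ≤ StarHL.sig m (fun h => (fun _ : Fin (t+1) => 1) h * StarHL.Yg hm T 0 h) := hmain
    _ = StarHL.sig m (StarHL.Yg hm T 0) := StarHL.sig_congr (fun h => by simp)
end
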